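/- arXiv:2107.12906 — 2 statements merged into one kernel-verified Lean document; each statement's English description precedes it below -/
import Mathlib

section
/- For all m, M > 0 and every t₁ ∈ ℕ there exists t₂ ∈ ℕ such that the following holds: for every (m,M)-regular profile f that is symmetric about some c ∈ ℝ, if D(U^{t₁} f) ≤ 2, then U^{t₂} f is a consensus (a constant function). -/
set_option maxHeartbeats 1000000

open MeasureTheory Set

/-- The neighbourhood `N_α(f)` of an agent `α ∈ [0,1]`:
all agents `β ∈ [0,1]` whose opinion is within distance 1 of that of `α`. -/
def nbhdHK (f : ℝ → ℝ) (α : ℝ) : Set ℝ :=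
  {β | β ∈ Icc (0:ℝ) 1 ∧ |f β - f α| ≤ 1}

/-- The Hegselmann–Krause updating operator `U`:
`Uf(α)` is the average of `f` over `N_α(f)` if that set has positive Lebesgue
measure, and `f(α)` otherwise. -/
noncomputable def updateHK (f : ℝ → ℝ) (α : ℝ) : ℝ :=
  if 0 < (volume (nbhdHK f α)).toReal then
    (∫ β in nbhdHK f α, f β) / (volume (nbhdHK f α)).toReal
  else f α

/-- `f` is `(m,M)`-regular on `S`: `m·|α-β| ≤ |f(α)-f(β)| ≤ M·|α-β|` on `S`. -/
def RegularOnHK (m M : ℝ) (f : ℝ → ℝ) (S : Set ℝ) : Prop :=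
  ∀ α ∈ S, ∀ β ∈ S, m * |α - β| ≤ |f α - f β| ∧ |f α - f β| ≤ M * |α - β|

namespace HKProof

local notation "I01" => Icc (0:ℝ) 1

lemma nbhd_subset (f : ℝ → ℝ) (α : ℝ) : nbhdHK f α ⊆ I01 := fun _ hβ => hβ.1

lemma mem_nbhd_self (f : ℝ → ℝ) {α : ℝ} (hα : α ∈ I01) : α ∈ nbhdHK f α :=
  ⟨hα, by simp⟩

lemma nbhd_ordConnected {g : ℝ → ℝ} (hg : MonotoneOn g I01) (α : ℝ) :
    OrdConnected (nbhdHK g α) := by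
  constructor
  rintro x ⟨hxI, hx⟩ y ⟨hyI, hy⟩ z hz
  have hzI : z ∈ I01 := ⟨le_trans hxI.1 hz.1, le_trans hz.2 hyI.2⟩
  refine ⟨hzI, ?_⟩
  have h1 : g x ≤ g z := hg hxI hzI hz.1
  have h2 : g z ≤ g y := hg hzI hyI hz.2
  rw [abs_le] at *
  exact ⟨by linarith [hx.1], by linarith [hy.2]⟩

lemma intervalIntegrable_of_monotoneOn {g : ℝ → ℝ} (hg : MonotoneOn g I01)
    {u v : ℝ} (h0 : 0 ≤ u) (huv : u ≤ v) (h1 : v ≤ 1) :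
    IntervalIntegrable g volume u v := by
  apply MonotoneOn.intervalIntegrable
  apply hg.mono
  rw [uIcc_of_le huv]
  exact Icc_subset_Icc h0 h1

lemma integral_le_right_mul {g : ℝ → ℝ} (hg : MonotoneOn g I01)
    {u v : ℝ} (h0 : 0 ≤ u) (huv : u ≤ v) (h1 : v ≤ 1) :
    ∫ x in u..v, g x ≤ (v - u) * g v := by
  have h := intervalIntegral.integral_mono_on huv
    (intervalIntegrable_of_monotoneOn hg h0 huv h1)
    (intervalIntegrable_const (c := g v)) ?_
  · simpa using h
  · intro x hx
    exact hg ⟨le_trans h0 hx.1, le_trans hx.2 h1⟩ ⟨le_trans h0 huv, h1⟩ hx.2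

lemma left_mul_le_integral {g : ℝ → ℝ} (hg : MonotoneOn g I01)
    {u v : ℝ} (h0 : 0 ≤ u) (huv : u ≤ v) (h1 : v ≤ 1) :
    (v - u) * g u ≤ ∫ x in u..v, g x := by
  have h := intervalIntegral.integral_mono_on huv
    (intervalIntegrable_const (c := g u))
    (intervalIntegrable_of_monotoneOn hg h0 huv h1) ?_
  · simpa using h
  · intro x hx
    exact hg ⟨h0, le_trans huv h1⟩ ⟨le_trans h0 hx.1, le_trans hx.2 h1⟩ hx.1

/-- The neighbourhood of `α` sits between `Ioo (sInf S) (sSup S)` and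
`Icc (sInf S) (sSup S)`. -/
lemma nbhd_between {g : ℝ → ℝ} (hg : MonotoneOn g I01) {α : ℝ} (hα : α ∈ I01) :
    Ioo (sInf (nbhdHK g α)) (sSup (nbhdHK g α)) ⊆ nbhdHK g α ∧
      nbhdHK g α ⊆ Icc (sInf (nbhdHK g α)) (sSup (nbhdHK g α)) := by
  set S := nbhdHK g α with hS
  have hne : S.Nonempty := ⟨α, mem_nbhd_self g hα⟩
  have hbddA : BddAbove S := BddAbove.mono (nbhd_subset g α) (bddAbove_Icc)
  have hbddB : BddBelow S := BddBelow.mono (nbhd_subset g α) (bddBelow_Icc)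
  constructor
  · intro y hy
    obtain ⟨z, hz, hyz⟩ := exists_lt_of_lt_csSup hne hy.2
    obtain ⟨w, hw, hwy⟩ := exists_lt_of_csInf_lt hne hy.1
    exact (nbhd_ordConnected hg α).out hw hz ⟨le_of_lt hwy, le_of_lt hyz⟩
  · intro y hy
    exact ⟨csInf_le hbddB hy, le_csSup hbddA hy⟩

lemma nbhd_volume {g : ℝ → ℝ} (hg : MonotoneOn g I01) {α : ℝ} (hα : α ∈ I01) :
    volume (nbhdHK g α) = ENNReal.ofReal (sSup (nbhdHK g α) - sInf (nbhdHK g α)) := by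
  obtain ⟨h1, h2⟩ := nbhd_between hg hα
  refine le_antisymm ?_ ?_
  · calc volume (nbhdHK g α) ≤ volume (Icc (sInf (nbhdHK g α)) (sSup (nbhdHK g α))) :=
        measure_mono h2
    _ = ENNReal.ofReal (sSup (nbhdHK g α) - sInf (nbhdHK g α)) := Real.volume_Icc
  · calc ENNReal.ofReal (sSup (nbhdHK g α) - sInf (nbhdHK g α))
        = volume (Ioo (sInf (nbhdHK g α)) (sSup (nbhdHK g α))) := Real.volume_Ioo.symm
    _ ≤ volume (nbhdHK g α) := measure_mono h1

lemma nbhd_ae_eq_Ioo {g : ℝ → ℝ} (hg : MonotoneOn g I01) {α : ℝ} (hα : α ∈ I01) :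
    nbhdHK g α =ᵐ[volume] Ioo (sInf (nbhdHK g α)) (sSup (nbhdHK g α)) := by
  obtain ⟨h1, h2⟩ := nbhd_between hg hα
  rw [MeasureTheory.ae_eq_set]
  constructor
  · have hsub : nbhdHK g α \ Ioo (sInf (nbhdHK g α)) (sSup (nbhdHK g α)) ⊆
        {sInf (nbhdHK g α), sSup (nbhdHK g α)} := by
      intro x hx
      rcases hx with ⟨hxm, hxn⟩
      have := h2 hxm
      simp only [mem_Ioo, not_and_or, not_lt] at hxn
      rcases hxn with h | h
      · exact Or.inl (le_antisymm h this.1)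
      · exact Or.inr (le_antisymm this.2 h)
    exact measure_mono_null hsub (((Set.countable_singleton _).insert _).measure_zero volume)
  · rw [diff_eq_empty.2 h1]; exact measure_empty

/-- Formula for the update in terms of interval endpoints. -/
lemma update_eq_avg {g : ℝ → ℝ} (hg : MonotoneOn g I01) {α : ℝ} (hα : α ∈ I01)
    (hab : sInf (nbhdHK g α) < sSup (nbhdHK g α)) :
    updateHK g α = (∫ x in (sInf (nbhdHK g α))..(sSup (nbhdHK g α)), g x) /
      (sSup (nbhdHK g α) - sInf (nbhdHK g α)) := by
  have hv := nbhd_volume hg hα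
  have hpos : 0 < (volume (nbhdHK g α)).toReal := by
    rw [hv, ENNReal.toReal_ofReal (by linarith)]; linarith
  rw [updateHK, if_pos hpos]
  rw [MeasureTheory.setIntegral_congr_set (nbhd_ae_eq_Ioo hg hα)]
  rw [hv, ENNReal.toReal_ofReal (by linarith)]
  rw [intervalIntegral.integral_of_le (le_of_lt hab),
    MeasureTheory.integral_Ioc_eq_integral_Ioo]

/-- Monotonicity of neighbourhood endpoints in `α`. -/
lemma sSup_nbhd_mono {g : ℝ → ℝ} (hg : MonotoneOn g I01) {α α' : ℝ}
    (hα : α ∈ I01) (hα' : α' ∈ I01) (h : α ≤ α') :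
    sSup (nbhdHK g α) ≤ sSup (nbhdHK g α') := by
  have hne' : (nbhdHK g α').Nonempty := ⟨α', mem_nbhd_self g hα'⟩
  have hbdd' : BddAbove (nbhdHK g α') := BddAbove.mono (nbhd_subset g α') bddAbove_Icc
  apply csSup_le ⟨α, mem_nbhd_self g hα⟩
  intro β hβ
  rcases le_or_gt β α' with hc | hc
  · exact le_trans hc (le_csSup hbdd' (mem_nbhd_self g hα'))
  · apply le_csSup hbdd'
    obtain ⟨hβI, hβa⟩ := hβ
    refine ⟨hβI, ?_⟩
    have h1 : g α' ≤ g β := hg hα' hβI (le_of_lt hc)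
    have h2 : g α ≤ g α' := hg hα hα' h
    rw [abs_le] at hβa ⊢
    exact ⟨by linarith, by linarith [hβa.2]⟩

lemma sInf_nbhd_mono {g : ℝ → ℝ} (hg : MonotoneOn g I01) {α α' : ℝ}
    (hα : α ∈ I01) (hα' : α' ∈ I01) (h : α ≤ α') :
    sInf (nbhdHK g α) ≤ sInf (nbhdHK g α') := by
  have hne : (nbhdHK g α).Nonempty := ⟨α, mem_nbhd_self g hα⟩
  have hbdd : BddBelow (nbhdHK g α) := BddBelow.mono (nbhd_subset g α) bddBelow_Icc
  apply le_csInf ⟨α', mem_nbhd_self g hα'⟩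
  intro β hβ
  rcases le_or_gt α β with hc | hc
  · exact le_trans (csInf_le hbdd (mem_nbhd_self g hα)) hc
  · apply csInf_le hbdd
    obtain ⟨hβI, hβa⟩ := hβ
    refine ⟨hβI, ?_⟩
    have h1 : g β ≤ g α := hg hβI hα (le_of_lt hc)
    have h2 : g α ≤ g α' := hg hα hα' h
    rw [abs_le] at hβa ⊢
    exact ⟨by linarith [hβa.1], by linarith⟩

/-- Average of a monotone function over an interval grows when the right endpoint grows. -/
lemma avg_mono_right {g : ℝ → ℝ} (hg : MonotoneOn g I01) {u v v' : ℝ}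
    (h0 : 0 ≤ u) (huv : u < v) (hvv' : v ≤ v') (h1 : v' ≤ 1) :
    (∫ x in u..v, g x) / (v - u) ≤ (∫ x in u..v', g x) / (v' - u) := by
  have hsplit : ∫ x in u..v', g x = (∫ x in u..v, g x) + ∫ x in v..v', g x := by
    rw [intervalIntegral.integral_add_adjacent_intervals
      (intervalIntegrable_of_monotoneOn hg h0 (le_of_lt huv) (by linarith))
      (intervalIntegrable_of_monotoneOn hg (by linarith) hvv' h1)]
  have hX : (v' - v) * g v ≤ ∫ x in v..v', g x :=
    left_mul_le_integral hg (by linarith) hvv' h1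
  have hA : ∫ x in u..v, g x ≤ (v - u) * g v :=
    integral_le_right_mul hg h0 (le_of_lt huv) (by linarith)
  rw [hsplit, div_le_div_iff₀ (by linarith) (by linarith)]
  nlinarith [hX, hA]

lemma avg_mono_left {g : ℝ → ℝ} (hg : MonotoneOn g I01) {u u' v : ℝ}
    (h0 : 0 ≤ u) (huu' : u ≤ u') (hu'v : u' < v) (h1 : v ≤ 1) :
    (∫ x in u..v, g x) / (v - u) ≤ (∫ x in u'..v, g x) / (v - u') := by
  have hsplit : ∫ x in u..v, g x = (∫ x in u..u', g x) + ∫ x in u'..v, g x := by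
    rw [intervalIntegral.integral_add_adjacent_intervals
      (intervalIntegrable_of_monotoneOn hg h0 huu' (by linarith))
      (intervalIntegrable_of_monotoneOn hg (by linarith) (le_of_lt hu'v) h1)]
  have hX : ∫ x in u..u', g x ≤ (u' - u) * g u' :=
    integral_le_right_mul hg h0 huu' (by linarith)
  have hA : (v - u') * g u' ≤ ∫ x in u'..v, g x :=
    left_mul_le_integral hg (by linarith) (le_of_lt hu'v) h1
  rw [hsplit, div_le_div_iff₀ (by linarith) (by linarith)]
  nlinarith [hX, hA]

/-- `U` preserves monotonicity, given that all neighbourhoods have positive length. -/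
lemma update_monotoneOn {g : ℝ → ℝ} (hg : MonotoneOn g I01)
    (hpos : ∀ α ∈ I01, sInf (nbhdHK g α) < sSup (nbhdHK g α)) :
    MonotoneOn (updateHK g) I01 := by
  intro α hα α' hα' h
  set a := sInf (nbhdHK g α)
  set b := sSup (nbhdHK g α)
  set a' := sInf (nbhdHK g α')
  set b' := sSup (nbhdHK g α')
  have hab : a < b := hpos α hα
  have hab' : a' < b' := hpos α' hα'
  have haa' : a ≤ a' := sInf_nbhd_mono hg hα hα' h
  have hbb' : b ≤ b' := sSup_nbhd_mono hg hα hα' h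
  have hbetween := nbhd_between hg hα
  have hbetween' := nbhd_between hg hα'
  have ha0 : 0 ≤ a := by
    have := csInf_le (BddBelow.mono (nbhd_subset g α) bddBelow_Icc) (mem_nbhd_self g hα)
    have h2 := (nbhd_subset g α)
    -- a is inf of a subset of Icc 0 1 that is nonempty
    have : (0:ℝ) ≤ sInf (nbhdHK g α) :=
      le_csInf ⟨α, mem_nbhd_self g hα⟩ (fun x hx => (nbhd_subset g α hx).1)
    exact this
  have hb'1 : b' ≤ 1 :=
    csSup_le ⟨α', mem_nbhd_self g hα'⟩ (fun x hx => (nbhd_subset g α' hx).2)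
  rw [update_eq_avg hg hα hab, update_eq_avg hg hα' hab']
  calc (∫ x in a..b, g x) / (b - a) ≤ (∫ x in a..b', g x) / (b' - a) :=
        avg_mono_right hg ha0 hab hbb' hb'1
  _ ≤ (∫ x in a'..b', g x) / (b' - a') := by
      apply avg_mono_left hg ha0 haa' _ hb'1
      exact lt_of_lt_of_le hab' (le_refl _) |>.trans_le (le_refl _) |>.trans_le (le_refl _)

/-- `U` preserves exact symmetry about `0`. -/
lemma update_symm {g : ℝ → ℝ} (hg : MonotoneOn g I01) (hsym : ∀ α ∈ I01, g α + g (1 - α) = 0)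
    {α : ℝ} (hα : α ∈ I01) :
    updateHK g (1 - α) = - updateHK g α := by
  have hα' : (1:ℝ) - α ∈ I01 := ⟨by linarith [hα.2], by linarith [hα.1]⟩
  have hset : nbhdHK g (1 - α) = (fun x : ℝ => 1 - x) ⁻¹' (nbhdHK g α) := by
    ext β
    simp only [nbhdHK, mem_setOf_eq, mem_preimage, mem_Icc]
    constructor
    · rintro ⟨⟨hβ0, hβ1⟩, habs⟩
      have hβI : β ∈ I01 := ⟨hβ0, hβ1⟩
      refine ⟨⟨by linarith, by linarith⟩, ?_⟩
      have e1 : g (1 - β) = - g β := by have := hsym β hβI; linarith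
      have e2 : g (1 - α) = - g α := by have := hsym α hα; linarith
      rw [e1]
      rw [e2] at habs
      rw [show -g β - g α = -(g β - -g α) by ring, abs_neg]
      exact habs
    · rintro ⟨⟨hβ0, hβ1⟩, habs⟩
      have hβI : β ∈ I01 := ⟨by linarith, by linarith⟩
      refine ⟨hβI, ?_⟩
      have hβ'I : (1:ℝ) - β ∈ I01 := ⟨by linarith, by linarith⟩
      have e1 : g (1 - β) = - g β := by have := hsym β hβI; linarith
      have e2 : g (1 - α) = - g α := by have := hsym α hα; linarith
      rw [e1] at habs
      rw [e2]
      rw [show g β - -g α = -(-g β - g α) by ring, abs_neg]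
      exact habs
  have hmp : MeasurePreserving (fun x : ℝ => 1 - x) volume volume := by
    have := Measure.measurePreserving_sub_left (volume : Measure ℝ) 1
    simpa [sub_eq_add_neg] using this
  have hemb : MeasurableEmbedding (fun x : ℝ => 1 - x) :=
    (Homeomorph.subLeft (1:ℝ)).toMeasurableEquiv.measurableEmbedding
  have hvol : volume (nbhdHK g (1 - α)) = volume (nbhdHK g α) := by
    rw [hset, hmp.measure_preimage (nbhd_ordConnected hg α).measurableSet.nullMeasurableSet]
  have hint : ∫ β in nbhdHK g (1 - α), g β = - ∫ β in nbhdHK g α, g β := by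
    rw [hset]
    have h1 : ∫ x in (fun x : ℝ => 1 - x) ⁻¹' (nbhdHK g α), g x
        = ∫ x in (fun x : ℝ => 1 - x) ⁻¹' (nbhdHK g α), (fun y => g (1 - y)) ((fun x : ℝ => 1 - x) x) := by
      apply MeasureTheory.setIntegral_congr_fun
        (hemb.measurable (nbhd_ordConnected hg α).measurableSet)
      intro x _
      simp
    rw [h1, hmp.setIntegral_preimage_emb hemb (fun y => g (1 - y)) (nbhdHK g α)]
    have h2 : ∫ y in nbhdHK g α, g (1 - y) = ∫ y in nbhdHK g α, (- g y) := by
      apply MeasureTheory.setIntegral_congr_fun (nbhd_ordConnected hg α).measurableSet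
      intro y hy
      have := hsym y (nbhd_subset g α hy)
      simp only; linarith
    rw [h2, MeasureTheory.integral_neg]
  by_cases hp : 0 < (volume (nbhdHK g α)).toReal
  · have hp' : 0 < (volume (nbhdHK g (1 - α))).toReal := by rw [hvol]; exact hp
    rw [updateHK, if_pos hp', updateHK, if_pos hp, hvol, hint, neg_div]
  · have hp' : ¬ 0 < (volume (nbhdHK g (1 - α))).toReal := by rw [hvol]; exact hp
    rw [updateHK, if_neg hp', updateHK, if_neg hp]
    have := hsym α hα
    linarith

section Phase2

variable {g : ℝ → ℝ}

lemma g_half (hsym : ∀ α ∈ I01, g α + g (1 - α) = 0) : g (1/2) = 0 := by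
  have := hsym (1/2) (by norm_num)
  norm_num at this
  linarith

lemma g_zero_eq (hsym : ∀ α ∈ I01, g α + g (1 - α) = 0) : g 0 = - g 1 := by
  have := hsym 0 (by norm_num)
  norm_num at this
  linarith

lemma g_one_nonneg (hg : MonotoneOn g I01) (hsym : ∀ α ∈ I01, g α + g (1 - α) = 0) :
    0 ≤ g 1 := by
  have h := hg (by norm_num : (1/2:ℝ) ∈ I01) (by norm_num : (1:ℝ) ∈ I01) (by norm_num)
  rw [g_half hsym] at h
  exact h

/-- The symmetric cancellation: the integral over a symmetric subinterval vanishes. -/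
lemma integral_symm_zero (hg : MonotoneOn g I01) (hsym : ∀ α ∈ I01, g α + g (1 - α) = 0)
    {b : ℝ} (hb : 1/2 ≤ b) (hb1 : b ≤ 1) : ∫ x in (1-b)..b, g x = 0 := by
  have h1 : ∫ x in (1-b)..b, g (1 - x) = ∫ x in (1-b)..b, g x := by
    have := intervalIntegral.integral_comp_sub_left (a := 1-b) (b := b) g 1
    simpa using this
  have h2 : ∫ x in (1-b)..b, g (1 - x) = ∫ x in (1-b)..b, (- g x) := by
    apply intervalIntegral.integral_congr
    intro x hx
    rw [uIcc_of_le (by linarith)] at hx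
    have hxI : x ∈ I01 := ⟨by linarith [hx.1], by linarith [hx.2]⟩
    have := hsym x hxI
    simp only; linarith
  rw [h2, intervalIntegral.integral_neg] at h1
  linarith

/-- Structure of the neighbourhood for agents with nonpositive opinion. -/
lemma lowerHalf (hg : MonotoneOn g I01) (hsym : ∀ α ∈ I01, g α + g (1 - α) = 0)
    (hW : g 1 ≤ 1) {β : ℝ} (hβ : β ∈ I01) (hβ0 : g β ≤ 0) :
    sInf (nbhdHK g β) = 0 ∧ 1/2 ≤ sSup (nbhdHK g β) ∧ sSup (nbhdHK g β) ≤ 1 ∧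
    updateHK g β = (∫ x in (0:ℝ)..(1 - sSup (nbhdHK g β)), g x) / sSup (nbhdHK g β) ∧
    updateHK g β ≤ 0 ∧
    (1 - sSup (nbhdHK g β)) / sSup (nbhdHK g β) * g 0 ≤ updateHK g β := by
  have hg0 : g 0 = - g 1 := g_zero_eq hsym
  have hg1 : 0 ≤ g 1 := g_one_nonneg hg hsym
  have hgβlb : g 0 ≤ g β := hg (by norm_num) hβ hβ.1
  have hhalf : Icc (0:ℝ) (1/2) ⊆ nbhdHK g β := by
    intro γ hγ
    have hγI : γ ∈ I01 := ⟨hγ.1, by linarith [hγ.2]⟩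
    refine ⟨hγI, ?_⟩
    have h1 : g γ ≤ g (1/2) := hg hγI (by norm_num) hγ.2
    have h2 : g 0 ≤ g γ := hg (by norm_num) hγI hγ.1
    rw [g_half hsym] at h1
    rw [abs_le]
    constructor <;> nlinarith
  set b := sSup (nbhdHK g β) with hbdef
  have hbddA : BddAbove (nbhdHK g β) := BddAbove.mono (nbhd_subset g β) bddAbove_Icc
  have hbddB : BddBelow (nbhdHK g β) := BddBelow.mono (nbhd_subset g β) bddBelow_Icc
  have hinf : sInf (nbhdHK g β) = 0 := by
    apply le_antisymm
    · exact csInf_le hbddB (hhalf (by norm_num))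
    · exact le_csInf ⟨β, mem_nbhd_self g hβ⟩ (fun x hx => (nbhd_subset g β hx).1)
  have hbhalf : 1/2 ≤ b := le_csSup hbddA (hhalf (by norm_num))
  have hb1 : b ≤ 1 := csSup_le ⟨β, mem_nbhd_self g hβ⟩ (fun x hx => (nbhd_subset g β hx).2)
  have havg : updateHK g β = (∫ x in (0:ℝ)..b, g x) / b := by
    have := update_eq_avg hg hβ (by rw [hinf]; linarith)
    rw [hinf] at this
    simpa using this
  have hsplit : ∫ x in (0:ℝ)..b, g x = ∫ x in (0:ℝ)..(1-b), g x := by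
    have hadd : ∫ x in (0:ℝ)..b, g x = (∫ x in (0:ℝ)..(1-b), g x) + ∫ x in (1-b)..b, g x := by
      rw [intervalIntegral.integral_add_adjacent_intervals
        (intervalIntegrable_of_monotoneOn hg le_rfl (by linarith) (by linarith))
        (intervalIntegrable_of_monotoneOn hg (by linarith) (by linarith) hb1)]
    rw [hadd, integral_symm_zero hg hsym hbhalf hb1, add_zero]
  have havg2 : updateHK g β = (∫ x in (0:ℝ)..(1-b), g x) / b := by rw [havg, hsplit]
  refine ⟨hinf, hbhalf, hb1, havg2, ?_, ?_⟩
  · rw [havg2]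
    apply div_nonpos_of_nonpos_of_nonneg _ (by linarith)
    have h1 : ∫ x in (0:ℝ)..(1-b), g x ≤ (1-b-0) * g (1-b) :=
      integral_le_right_mul hg le_rfl (by linarith) (by linarith)
    have h2 : g (1-b) ≤ g (1/2) := hg ⟨by linarith, by linarith⟩ (by norm_num) (by linarith)
    rw [g_half hsym] at h2
    nlinarith
  · rw [havg2]
    have h1 : (1-b-0) * g 0 ≤ ∫ x in (0:ℝ)..(1-b), g x :=
      left_mul_le_integral hg le_rfl (by linarith) (by linarith)
    rw [div_mul_eq_mul_div, div_le_div_iff₀ (by linarith) (by linarith)]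
    nlinarith
  
lemma upperHalf_subset (hg : MonotoneOn g I01) (hsym : ∀ α ∈ I01, g α + g (1 - α) = 0)
    (hW : g 1 ≤ 1) {β : ℝ} (hβ : β ∈ I01) (hβ0 : 0 < g β) :
    Icc (1/2:ℝ) 1 ⊆ nbhdHK g β := by
  have hg0 : g 0 = - g 1 := g_zero_eq hsym
  have hgβub : g β ≤ g 1 := hg hβ (by norm_num) hβ.2
  intro γ hγ
  have hγI : γ ∈ I01 := ⟨by linarith [hγ.1], hγ.2⟩
  refine ⟨hγI, ?_⟩
  have h1 : g (1/2) ≤ g γ := hg (by norm_num) hγI hγ.1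
  have h2 : g γ ≤ g 1 := hg hγI (by norm_num) hγ.2
  rw [g_half hsym] at h1
  rw [abs_le]
  constructor <;> nlinarith

lemma nbhd_pos (hg : MonotoneOn g I01) (hsym : ∀ α ∈ I01, g α + g (1 - α) = 0)
    (hW : g 1 ≤ 1) {α : ℝ} (hα : α ∈ I01) :
    sInf (nbhdHK g α) < sSup (nbhdHK g α) := by
  have hbddA : BddAbove (nbhdHK g α) := BddAbove.mono (nbhd_subset g α) bddAbove_Icc
  have hbddB : BddBelow (nbhdHK g α) := BddBelow.mono (nbhd_subset g α) bddBelow_Icc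
  rcases le_or_gt (g α) 0 with h | h
  · obtain ⟨hinf, hbhalf, _, _⟩ := lowerHalf hg hsym hW hα h
    linarith
  · have hsub := upperHalf_subset hg hsym hW hα h
    have h1 : sInf (nbhdHK g α) ≤ 1/2 := csInf_le hbddB (hsub (by norm_num))
    have h2 : (1:ℝ) ≤ sSup (nbhdHK g α) := le_csSup hbddA (hsub (by norm_num))
    linarith

/-- Agents in the central band average over everything and move to `0`. -/
lemma band_full (hg : MonotoneOn g I01) (hsym : ∀ α ∈ I01, g α + g (1 - α) = 0)
    (hW : g 1 ≤ 1) {β : ℝ} (hβ : β ∈ I01) (hβ0 : 0 < g β) (hβb : g β ≤ g 0 + 1) :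
    updateHK g β = 0 := by
  have hg0 : g 0 = - g 1 := g_zero_eq hsym
  have hset : nbhdHK g β = I01 := by
    apply le_antisymm (nbhd_subset g β)
    intro γ hγ
    refine ⟨hγ, ?_⟩
    have h1 : g 0 ≤ g γ := hg (by norm_num) hγ hγ.1
    have h2 : g γ ≤ g 1 := hg hγ (by norm_num) hγ.2
    rw [abs_le]
    constructor <;> nlinarith
  have hinf : sInf (nbhdHK g β) = 0 := by rw [hset]; exact csInf_Icc (by norm_num)
  have hsup : sSup (nbhdHK g β) = 1 := by rw [hset]; exact csSup_Icc (by norm_num)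
  have := update_eq_avg hg hβ (by rw [hinf, hsup]; norm_num)
  rw [hinf, hsup] at this
  rw [this]
  have hzero : ∫ x in (0:ℝ)..1, g x = 0 := by
    have := integral_symm_zero hg hsym (b := 1) (by norm_num) le_rfl
    simpa using this
  rw [hzero]
  simp

end Phase2

section Invariant

variable {g : ℝ → ℝ}

/-- The invariant maintained during the contraction phase (profile normalized to be
symmetric about `0`, with diameter at most `2`). -/
def GoodHK (g : ℝ → ℝ) : Prop :=
  MonotoneOn g I01 ∧ (∀ α ∈ I01, g α + g (1 - α) = 0) ∧ g 1 ≤ 1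

/-- Length of the neighbourhood of agent `0`. -/
noncomputable def bHK (g : ℝ → ℝ) : ℝ := sSup (nbhdHK g 0)

lemma bHK_ge (hG : GoodHK g) : 1/2 ≤ bHK g := by
  obtain ⟨hg, hsym, hW⟩ := hG
  have hg0 : g 0 ≤ 0 := by rw [g_zero_eq hsym]; linarith [g_one_nonneg hg hsym]
  exact (lowerHalf hg hsym hW (by norm_num) hg0).2.1

lemma bHK_le (hG : GoodHK g) : bHK g ≤ 1 := by
  obtain ⟨hg, hsym, hW⟩ := hG
  have hg0 : g 0 ≤ 0 := by rw [g_zero_eq hsym]; linarith [g_one_nonneg hg hsym]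
  exact (lowerHalf hg hsym hW (by norm_num) hg0).2.2.1

lemma update_zero_bounds (hG : GoodHK g) :
    (1 - bHK g)/(bHK g) * g 0 ≤ updateHK g 0 ∧ updateHK g 0 ≤ 0 ∧ -1 ≤ updateHK g 0 := by
  obtain ⟨hg, hsym, hW⟩ := hG
  have hg1 := g_one_nonneg hg hsym
  have hg0 : g 0 = - g 1 := g_zero_eq hsym
  have hg0' : g 0 ≤ 0 := by linarith
  obtain ⟨_, hbh, hb1, _, hle, hlb⟩ := lowerHalf hg hsym hW (by norm_num : (0:ℝ) ∈ I01) hg0'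
  refine ⟨hlb, hle, ?_⟩
  set b := sSup (nbhdHK g 0) with hbdef
  have hfrac : (1 - b)/b ≤ 1 := by rw [div_le_one (by linarith)]; linarith
  have hfrac0 : 0 ≤ (1 - b)/b := by apply div_nonneg <;> linarith
  have hg0m1 : -1 ≤ g 0 := by linarith
  nlinarith [hlb]

lemma update_one_eq (hg : MonotoneOn g I01) (hsym : ∀ α ∈ I01, g α + g (1 - α) = 0) :
    updateHK g 1 = - updateHK g 0 := by
  have := update_symm hg hsym (α := 0) (by norm_num)
  norm_num at this
  exact this

lemma contraction (hG : GoodHK g) :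
    updateHK g 1 ≤ (1 - bHK g)/(bHK g) * g 1 ∧ 0 ≤ updateHK g 1 := by
  obtain ⟨hg, hsym, hW⟩ := hG
  obtain ⟨hlb, hle, _⟩ := update_zero_bounds ⟨hg, hsym, hW⟩
  rw [update_one_eq hg hsym]
  constructor
  · rw [g_zero_eq hsym] at hlb
    linarith [hlb]
  · linarith

lemma S_mono (hG : GoodHK g) : nbhdHK g 0 ⊆ nbhdHK (updateHK g) 0 := by
  obtain ⟨hg, hsym, hW⟩ := hG
  have hg1 := g_one_nonneg hg hsym
  have hg0 : g 0 = - g 1 := g_zero_eq hsym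
  obtain ⟨hlb0, hle0, hm1⟩ := update_zero_bounds ⟨hg, hsym, hW⟩
  rintro β ⟨hβI, hβa⟩
  refine ⟨hβI, ?_⟩
  rcases le_or_gt (g β) 0 with hc | hc
  · obtain ⟨_, hbh, hb1, _, hle, hlbβ⟩ := lowerHalf hg hsym hW hβI hc
    set bβ := sSup (nbhdHK g β)
    have hfrac : (1 - bβ)/bβ ≤ 1 := by rw [div_le_one (by linarith)]; linarith
    have hfrac0 : 0 ≤ (1 - bβ)/bβ := by apply div_nonneg <;> linarith
    have h1 : -1 ≤ updateHK g β := by nlinarith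
    rw [abs_le]
    constructor <;> linarith
  · have hβb : g β ≤ g 0 + 1 := by
      rw [abs_le] at hβa
      linarith [hβa.2]
    rw [band_full hg hsym hW hβI hc hβb]
    rw [abs_le]
    constructor <;> linarith

lemma bHK_mono (hG : GoodHK g) : bHK g ≤ bHK (updateHK g) := by
  apply csSup_le_csSup
  · exact BddAbove.mono (nbhd_subset _ 0) bddAbove_Icc
  · exact ⟨0, mem_nbhd_self g (by norm_num)⟩
  · exact S_mono hG

lemma good_update (hG : GoodHK g) : GoodHK (updateHK g) := by
  obtain ⟨hg, hsym, hW⟩ := hG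
  obtain ⟨hlb, hle, hm1⟩ := update_zero_bounds ⟨hg, hsym, hW⟩
  refine ⟨update_monotoneOn hg (fun α hα => nbhd_pos hg hsym hW hα), ?_, ?_⟩
  · intro α hα
    rw [update_symm hg hsym hα]
    ring
  · rw [update_one_eq hg hsym]
    linarith

lemma consensus_step (hg : MonotoneOn g I01) (hsym : ∀ α ∈ I01, g α + g (1 - α) = 0)
    (hW2 : g 1 ≤ 1/2) : ∀ α ∈ I01, updateHK g α = 0 := by
  intro α hα
  have hg0 : g 0 = - g 1 := g_zero_eq hsym
  have hset : nbhdHK g α = I01 := by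
    apply le_antisymm (nbhd_subset g α)
    intro γ hγ
    refine ⟨hγ, ?_⟩
    have h1 : g 0 ≤ g γ := hg (by norm_num) hγ hγ.1
    have h2 : g γ ≤ g 1 := hg hγ (by norm_num) hγ.2
    have h3 : g 0 ≤ g α := hg (by norm_num) hα hα.1
    have h4 : g α ≤ g 1 := hg hα (by norm_num) hα.2
    rw [abs_le]
    constructor <;> nlinarith
  have hinf : sInf (nbhdHK g α) = 0 := by rw [hset]; exact csInf_Icc (by norm_num)
  have hsup : sSup (nbhdHK g α) = 1 := by rw [hset]; exact csSup_Icc (by norm_num)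
  have := update_eq_avg hg hα (by rw [hinf, hsup]; norm_num)
  rw [hinf, hsup] at this
  rw [this]
  have hzero : ∫ x in (0:ℝ)..1, g x = 0 := by
    have := integral_symm_zero hg hsym (b := 1) (by norm_num) le_rfl
    simpa using this
  rw [hzero]
  simp

lemma const_zero_step (hz : ∀ α ∈ I01, g α = 0) : ∀ α ∈ I01, updateHK g α = 0 := by
  have hg : MonotoneOn g I01 := by
    intro x hx y hy _
    rw [hz x hx, hz y hy]
  have hsym : ∀ α ∈ I01, g α + g (1 - α) = 0 := by
    intro α hα
    have hα' : (1:ℝ) - α ∈ I01 := ⟨by linarith [hα.2], by linarith [hα.1]⟩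
    rw [hz α hα, hz _ hα']
    ring
  apply consensus_step hg hsym
  rw [hz 1 (by norm_num)]
  norm_num

/-- The main contraction induction in the final phase. -/
lemma phase2_iter (hG : GoodHK g) {δ : ℝ} (hδ : 0 < δ) (hδ2 : δ ≤ 1/2)
    (hb : 1/2 + δ ≤ bHK g) :
    ∀ k, GoodHK (updateHK^[k] g) ∧ 1/2 + δ ≤ bHK (updateHK^[k] g) ∧
      (updateHK^[k] g) 1 ≤ ((1/2 - δ)/(1/2 + δ))^k * g 1 := by
  intro k
  induction k with
  | zero => refine ⟨by simpa using hG, by simpa using hb, by simp⟩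
  | succ n ih =>
    obtain ⟨hGn, hbn, hWn⟩ := ih
    have hGn1 : GoodHK (updateHK^[n+1] g) := by
      rw [Function.iterate_succ_apply']
      exact good_update hGn
    have hbn1 : 1/2 + δ ≤ bHK (updateHK^[n+1] g) := by
      rw [Function.iterate_succ_apply']
      exact le_trans hbn (bHK_mono hGn)
    refine ⟨hGn1, hbn1, ?_⟩
    rw [Function.iterate_succ_apply']
    obtain ⟨hcon, hpos⟩ := contraction hGn
    set h := updateHK^[n] g
    have hbpos : (0:ℝ) < bHK h := by linarith
    have hfrac : (1 - bHK h)/(bHK h) ≤ (1/2 - δ)/(1/2 + δ) := by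
      rw [div_le_div_iff₀ hbpos (by linarith)]
      nlinarith
    have hh1 : 0 ≤ h 1 := g_one_nonneg hGn.1 hGn.2.1
    have hr0 : (0:ℝ) ≤ (1/2 - δ)/(1/2 + δ) := by
      apply div_nonneg <;> linarith
    have hg1' : 0 ≤ g 1 := g_one_nonneg hG.1 hG.2.1
    calc updateHK h 1 ≤ (1 - bHK h)/(bHK h) * h 1 := hcon
    _ ≤ (1/2 - δ)/(1/2 + δ) * ((1/2 - δ)/(1/2 + δ))^n * g 1 := by
        nlinarith [mul_le_mul hfrac hWn hh1 hr0]
    _ = ((1/2 - δ)/(1/2 + δ))^(n+1) * g 1 := by ring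

end Invariant

section Regular

variable {g : ℝ → ℝ} {μ Λ : ℝ}

lemma reg_pair (hg : MonotoneOn g I01) (hreg : RegularOnHK μ Λ g I01)
    {x y : ℝ} (hx : x ∈ I01) (hy : y ∈ I01) (hxy : x ≤ y) :
    μ * (y - x) ≤ g y - g x ∧ g y - g x ≤ Λ * (y - x) := by
  obtain ⟨h1, h2⟩ := hreg y hy x hx
  have hmono : g x ≤ g y := hg hx hy hxy
  rw [abs_of_nonneg (by linarith : (0:ℝ) ≤ y - x), abs_of_nonneg (by linarith)] at h1 h2
  exact ⟨h1, h2⟩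

lemma nbhd_pos_reg (hg : MonotoneOn g I01) (hreg : RegularOnHK μ Λ g I01)
    (hΛ : 0 < Λ) {α : ℝ} (hα : α ∈ I01) :
    sInf (nbhdHK g α) < sSup (nbhdHK g α) := by
  have hbddA : BddAbove (nbhdHK g α) := BddAbove.mono (nbhd_subset g α) bddAbove_Icc
  have hbddB : BddBelow (nbhdHK g α) := BddBelow.mono (nbhd_subset g α) bddBelow_Icc
  rcases le_or_gt α (1/2) with hc | hc
  · set β := min 1 (α + 1/Λ) with hβdef
    have h1Λ : 0 < 1/Λ := one_div_pos.mpr hΛ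
    have hβI : β ∈ I01 := ⟨le_min (by norm_num) (by linarith [hα.1]), min_le_left _ _⟩
    have hαβ : α ≤ β := le_min hα.2 (by linarith)
    have hβS : β ∈ nbhdHK g α := by
      refine ⟨hβI, ?_⟩
      obtain ⟨_, h2⟩ := reg_pair hg hreg hα hβI hαβ
      have hd : β - α ≤ 1/Λ := by
        have := min_le_right 1 (α + 1/Λ)
        simp only [hβdef]
        linarith [min_le_right 1 (α + 1/Λ)]
      rw [abs_of_nonneg (by linarith [hg hα hβI hαβ])]
      calc g β - g α ≤ Λ * (β - α) := h2
      _ ≤ Λ * (1/Λ) := by apply mul_le_mul_of_nonneg_left hd (le_of_lt hΛ)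
      _ = 1 := by field_simp
    have hβα : α < β := lt_min (lt_of_le_of_lt hc (by norm_num)) (by linarith)
    calc sInf (nbhdHK g α) ≤ α := csInf_le hbddB (mem_nbhd_self g hα)
    _ < β := hβα
    _ ≤ sSup (nbhdHK g α) := le_csSup hbddA hβS
  · set β := max 0 (α - 1/Λ) with hβdef
    have h1Λ : 0 < 1/Λ := one_div_pos.mpr hΛ
    have hβI : β ∈ I01 := ⟨le_max_left _ _, max_le (by norm_num) (by linarith [hα.2])⟩
    have hαβ : β ≤ α := max_le hα.1 (by linarith [one_div_pos.mpr hΛ])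
    have hβS : β ∈ nbhdHK g α := by
      refine ⟨hβI, ?_⟩
      obtain ⟨_, h2⟩ := reg_pair hg hreg hβI hα hαβ
      have hd : α - β ≤ 1/Λ := by
        simp only [hβdef]
        linarith [le_max_right 0 (α - 1/Λ)]
      rw [abs_of_nonpos (by linarith [hg hβI hα hαβ])]
      have : g α - g β ≤ Λ * (1/Λ) := le_trans h2 (by apply mul_le_mul_of_nonneg_left hd (le_of_lt hΛ))
      rw [mul_one_div, div_self (ne_of_gt hΛ)] at this
      linarith
    have hβα : β < α := by
      apply max_lt (by linarith) (by linarith [one_div_pos.mpr hΛ])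
    calc sInf (nbhdHK g α) ≤ β := csInf_le hbddB hβS
    _ < α := hβα
    _ ≤ sSup (nbhdHK g α) := le_csSup hbddA (mem_nbhd_self g hα)

/-- For regular profiles the neighbourhood endpoints belong to the neighbourhood. -/
lemma nbhd_endpoints_mem (hg : MonotoneOn g I01) (hreg : RegularOnHK μ Λ g I01)
    (hμ : 0 < μ) (hΛμ : μ ≤ Λ) {α : ℝ} (hα : α ∈ I01) :
    sInf (nbhdHK g α) ∈ nbhdHK g α ∧ sSup (nbhdHK g α) ∈ nbhdHK g α := by
  have hΛ : 0 < Λ := lt_of_lt_of_le hμ hΛμ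
  have hne : (nbhdHK g α).Nonempty := ⟨α, mem_nbhd_self g hα⟩
  have hbddA : BddAbove (nbhdHK g α) := BddAbove.mono (nbhd_subset g α) bddAbove_Icc
  have hbddB : BddBelow (nbhdHK g α) := BddBelow.mono (nbhd_subset g α) bddBelow_Icc
  set a := sInf (nbhdHK g α) with hadef
  set b := sSup (nbhdHK g α) with hbdef
  have haα : a ≤ α := csInf_le hbddB (mem_nbhd_self g hα)
  have hαb : α ≤ b := le_csSup hbddA (mem_nbhd_self g hα)
  have ha0 : 0 ≤ a := le_csInf hne (fun x hx => (nbhd_subset g α hx).1)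
  have hb1 : b ≤ 1 := csSup_le hne (fun x hx => (nbhd_subset g α hx).2)
  have haI : a ∈ I01 := ⟨ha0, le_trans haα hα.2⟩
  have hbI : b ∈ I01 := ⟨le_trans hα.1 hαb, hb1⟩
  constructor
  · refine ⟨haI, ?_⟩
    rw [abs_le]
    constructor
    · by_contra hcon
      push_neg at hcon
      -- g a < g α - 1 : every member β of S has g β ≥ g α - 1 hence β ≥ a + h/Λ
      set h := (g α - 1) - g a with hhdef
      have hh : 0 < h := by linarith
      have hub : ∀ x ∈ nbhdHK g α, a + h/Λ ≤ x := by
        intro x hx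
        have hax : a ≤ x := csInf_le hbddB hx
        obtain ⟨_, h2⟩ := reg_pair hg hreg haI (nbhd_subset g α hx) hax
        have hgx : g α - 1 ≤ g x := by
          have := abs_le.mp hx.2
          linarith [this.1]
        have hd : h/Λ ≤ x - a := by rw [div_le_iff₀ hΛ]; nlinarith
        linarith
      have : a + h/Λ ≤ a := le_csInf hne hub
      have : 0 < h/Λ := div_pos hh hΛ
      linarith
    · linarith [hg haI hα haα]
  · refine ⟨hbI, ?_⟩
    rw [abs_le]
    constructor
    · linarith [hg hα hbI hαb]
    · by_contra hcon
      push_neg at hcon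
      set h := g b - (g α + 1) with hhdef
      have hh : 0 < h := by linarith
      have hub : ∀ x ∈ nbhdHK g α, x ≤ b - h/Λ := by
        intro x hx
        have hxb : x ≤ b := le_csSup hbddA hx
        obtain ⟨_, h2⟩ := reg_pair hg hreg (nbhd_subset g α hx) hbI hxb
        have hgx : g x ≤ g α + 1 := by
          have := abs_le.mp hx.2
          linarith [this.2]
        have hd : h/Λ ≤ b - x := by rw [div_le_iff₀ hΛ]; nlinarith
        linarith
      have : b ≤ b - h/Λ := csSup_le hne hub
      have : 0 < h/Λ := div_pos hh hΛ
      linarith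

/-- Value identity at an interior right endpoint. -/
lemma sup_val (hg : MonotoneOn g I01) (hreg : RegularOnHK μ Λ g I01)
    (hμ : 0 < μ) (hΛμ : μ ≤ Λ) {α : ℝ} (hα : α ∈ I01)
    (hb : sSup (nbhdHK g α) < 1) : g (sSup (nbhdHK g α)) = g α + 1 := by
  have hΛ : 0 < Λ := lt_of_lt_of_le hμ hΛμ
  have hne : (nbhdHK g α).Nonempty := ⟨α, mem_nbhd_self g hα⟩
  have hbddA : BddAbove (nbhdHK g α) := BddAbove.mono (nbhd_subset g α) bddAbove_Icc
  obtain ⟨-, hbS⟩ := nbhd_endpoints_mem hg hreg hμ hΛμ hα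
  set b := sSup (nbhdHK g α) with hbdef
  have hbI : b ∈ I01 := nbhd_subset g α hbS
  have hαb : α ≤ b := le_csSup hbddA (mem_nbhd_self g hα)
  have hub : g b ≤ g α + 1 := by
    have := abs_le.mp hbS.2
    linarith [this.2]
  by_contra hcon
  have hlt : g b < g α + 1 := lt_of_le_of_ne hub hcon
  set h := (g α + 1) - g b with hhdef
  have hh : 0 < h := by linarith
  set β := min 1 (b + h/(2*Λ)) with hβdef
  have hbβ : b < β := by
    apply lt_min hb
    have : 0 < h/(2*Λ) := by positivity
    linarith
  have hβI : β ∈ I01 := by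
    refine ⟨le_min (by norm_num) ?_, min_le_left _ _⟩
    have : 0 < h/(2*Λ) := by positivity
    linarith [hbI.1]
  have hβS : β ∈ nbhdHK g α := by
    refine ⟨hβI, ?_⟩
    obtain ⟨-, h2⟩ := reg_pair hg hreg hbI hβI hbβ.le
    have hd : β - b ≤ h/(2*Λ) := by linarith [min_le_right 1 (b + h/(2*Λ))]
    have hup : g β ≤ g b + h/2 := by
      have : Λ * (β - b) ≤ Λ * (h/(2*Λ)) := mul_le_mul_of_nonneg_left hd hΛ.le
      have he : Λ * (h/(2*Λ)) = h/2 := by field_simp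
      nlinarith
    rw [abs_le]
    constructor
    · have h3 : g α ≤ g b := hg hα hbI hαb
      have h4 : g b ≤ g β := hg hbI hβI hbβ.le
      linarith
    · linarith
  have : β ≤ b := le_csSup hbddA hβS
  linarith

/-- Value identity at an interior left endpoint. -/
lemma inf_val (hg : MonotoneOn g I01) (hreg : RegularOnHK μ Λ g I01)
    (hμ : 0 < μ) (hΛμ : μ ≤ Λ) {α : ℝ} (hα : α ∈ I01)
    (ha : 0 < sInf (nbhdHK g α)) : g (sInf (nbhdHK g α)) = g α - 1 := by
  have hΛ : 0 < Λ := lt_of_lt_of_le hμ hΛμ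
  have hne : (nbhdHK g α).Nonempty := ⟨α, mem_nbhd_self g hα⟩
  have hbddB : BddBelow (nbhdHK g α) := BddBelow.mono (nbhd_subset g α) bddBelow_Icc
  obtain ⟨haS, -⟩ := nbhd_endpoints_mem hg hreg hμ hΛμ hα
  set a := sInf (nbhdHK g α) with hadef
  have haI : a ∈ I01 := nbhd_subset g α haS
  have haα : a ≤ α := csInf_le hbddB (mem_nbhd_self g hα)
  have hlb : g α - 1 ≤ g a := by
    have := abs_le.mp haS.2
    linarith [this.1]
  by_contra hcon
  have hlt : g α - 1 < g a := lt_of_le_of_ne hlb (Ne.symm hcon)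
  set h := g a - (g α - 1) with hhdef
  have hh : 0 < h := by linarith
  set β := max 0 (a - h/(2*Λ)) with hβdef
  have hβa : β < a := by
    apply max_lt ha
    have : 0 < h/(2*Λ) := by positivity
    linarith
  have hβI : β ∈ I01 := ⟨le_max_left _ _, le_trans hβa.le (le_trans haα hα.2)⟩
  have hβS : β ∈ nbhdHK g α := by
    refine ⟨hβI, ?_⟩
    obtain ⟨-, h2⟩ := reg_pair hg hreg hβI haI hβa.le
    have hd : a - β ≤ h/(2*Λ) := by linarith [le_max_right 0 (a - h/(2*Λ))]
    have hlow : g a - h/2 ≤ g β := by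
      have : Λ * (a - β) ≤ Λ * (h/(2*Λ)) := mul_le_mul_of_nonneg_left hd hΛ.le
      have he : Λ * (h/(2*Λ)) = h/2 := by field_simp
      nlinarith
    rw [abs_le]
    constructor
    · linarith
    · have h3 : g a ≤ g α := hg haI hα haα
      have h4 : g β ≤ g a := hg hβI haI hβa.le
      linarith
  have : a ≤ β := csInf_le hbddB hβS
  linarith

end Regular

section Displacement

variable {g : ℝ → ℝ} {μ Λ : ℝ}

lemma displacement (hg : MonotoneOn g I01) (hreg : RegularOnHK μ Λ g I01)
    (hμ : 0 < μ) (hΛμ : μ ≤ Λ) {α α' : ℝ} (hα : α ∈ I01) (hα' : α' ∈ I01) (h : α ≤ α') :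
    (sInf (nbhdHK g α') - sInf (nbhdHK g α)) ≤ (Λ/μ) * (α' - α) ∧
    (sSup (nbhdHK g α') - sSup (nbhdHK g α)) ≤ (Λ/μ) * (α' - α) ∧
    (2 < g 1 - g 0 → μ * (α' - α) ≤
      Λ * ((sInf (nbhdHK g α') - sInf (nbhdHK g α)) + (sSup (nbhdHK g α') - sSup (nbhdHK g α)))) := by
  have hΛ : 0 < Λ := lt_of_lt_of_le hμ hΛμ
  obtain ⟨haS, hbS⟩ := nbhd_endpoints_mem hg hreg hμ hΛμ hα
  obtain ⟨haS', hbS'⟩ := nbhd_endpoints_mem hg hreg hμ hΛμ hα'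
  set a := sInf (nbhdHK g α) with hadef
  set b := sSup (nbhdHK g α) with hbdef
  set a' := sInf (nbhdHK g α') with hadef'
  set b' := sSup (nbhdHK g α') with hbdef'
  have haa' : a ≤ a' := sInf_nbhd_mono hg hα hα' h
  have hbb' : b ≤ b' := sSup_nbhd_mono hg hα hα' h
  have haI : a ∈ I01 := nbhd_subset g α haS
  have hbI : b ∈ I01 := nbhd_subset g α hbS
  have haI' : a' ∈ I01 := nbhd_subset g α' haS'
  have hbI' : b' ∈ I01 := nbhd_subset g α' hbS'
  obtain ⟨hreg1, hreg2⟩ := reg_pair hg hreg hα hα' h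
  have hΔ : 0 ≤ α' - α := by linarith
  have hfrac0 : 0 ≤ (Λ/μ) * (α' - α) := by positivity
  have hΔa : a' - a ≤ (Λ/μ) * (α' - α) := by
    rcases eq_or_lt_of_le haI'.1 with ha0' | ha0'
    · -- a' = 0, so a = 0
      have : a = 0 := le_antisymm (by rw [ha0']; exact haa') haI.1
      rw [← ha0', this]; simpa using hfrac0
    · have hva' : g a' = g α' - 1 := inf_val hg hreg hμ hΛμ hα' (by rw [← hadef']; exact ha0')
      have key : μ * (a' - a) ≤ Λ * (α' - α) := by
        rcases eq_or_lt_of_le haI.1 with ha0 | ha0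
        · -- a = 0 : use g 0 ≥ g α - 1
          have h0S : (0:ℝ) ∈ nbhdHK g α := by rw [ha0]; exact haS
          have hg0 : g α - 1 ≤ g 0 := by
            have := abs_le.mp h0S.2; linarith [this.1]
          obtain ⟨hr1, _⟩ := reg_pair hg hreg haI haI' haa'
          rw [ha0] at hg0
          have : g a' - g a ≤ g α' - g α := by rw [hva']; linarith
          linarith
        · have hva : g a = g α - 1 := inf_val hg hreg hμ hΛμ hα (by rw [← hadef]; exact ha0)
          obtain ⟨hr1, _⟩ := reg_pair hg hreg haI haI' haa'
          have : g a' - g a = g α' - g α := by rw [hva', hva]; ring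
          linarith
      rw [div_mul_eq_mul_div, le_div_iff₀ hμ]
      nlinarith
  have hΔb : b' - b ≤ (Λ/μ) * (α' - α) := by
    rcases eq_or_lt_of_le hbI.2 with hb1 | hb1
    · have : b' = 1 := le_antisymm hbI'.2 (by rw [← hb1]; exact hbb')
      rw [this, hb1]; simpa using hfrac0
    · have hvb : g b = g α + 1 := sup_val hg hreg hμ hΛμ hα (by rw [← hbdef]; exact hb1)
      have key : μ * (b' - b) ≤ Λ * (α' - α) := by
        rcases eq_or_lt_of_le hbI'.2 with hb1' | hb1'
        · -- b' = 1 : use g 1 ≤ g α' + 1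
          have h1S : (1:ℝ) ∈ nbhdHK g α' := by rw [← hb1']; exact hbS'
          have hg1 : g 1 ≤ g α' + 1 := by
            have := abs_le.mp h1S.2; linarith [this.2]
          obtain ⟨hr1, _⟩ := reg_pair hg hreg hbI hbI' hbb'
          have hgb' : g b' = g 1 := by rw [hb1']
          have : g b' - g b ≤ g α' - g α := by rw [hvb, hgb']; linarith
          linarith
        · have hvb' : g b' = g α' + 1 := sup_val hg hreg hμ hΛμ hα' (by rw [← hbdef']; exact hb1')
          obtain ⟨hr1, _⟩ := reg_pair hg hreg hbI hbI' hbb'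
          have : g b' - g b = g α' - g α := by rw [hvb', hvb]; ring
          linarith
      rw [div_mul_eq_mul_div, le_div_iff₀ hμ]
      nlinarith
  refine ⟨hΔa, hΔb, ?_⟩
  intro hD
  rcases eq_or_lt_of_le hbI'.2 with hb1' | hb1'
  · -- b' = 1
    rcases eq_or_lt_of_le haI'.1 with ha0' | ha0'
    · -- a' = 0 : contradiction with diameter > 2
      exfalso
      have h0S : (0:ℝ) ∈ nbhdHK g α' := by rw [ha0']; exact haS'
      have h1S : (1:ℝ) ∈ nbhdHK g α' := by rw [← hb1']; exact hbS'
      have e0 := abs_le.mp h0S.2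
      have e1 := abs_le.mp h1S.2
      linarith [e0.1, e1.2]
    · have hva' : g a' = g α' - 1 := inf_val hg hreg hμ hΛμ hα' (by rw [← hadef']; exact ha0')
      -- combined estimate using both endpoint displacements
      have hI1 : (1:ℝ) ∈ I01 := by norm_num
      obtain ⟨_, hr2a⟩ := reg_pair hg hreg haI haI' haa'
      obtain ⟨_, hr2b⟩ := reg_pair hg hreg hbI hI1 hbI.2
      have hgb_ub : g b ≤ g α + 1 := by
        have := abs_le.mp hbS.2; linarith [this.2]
      have key : μ * (α' - α) ≤ Λ * ((a' - a) + (1 - b)) := by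
        rcases eq_or_lt_of_le haI.1 with ha0 | ha0
        · -- a = 0
          have hga : g a = g 0 := by rw [← ha0]
          have hsum : μ * (α' - α) ≤ (g a' - g a) + (g 1 - g b) := by
            rw [hva', hga]
            linarith
          nlinarith [hsum, hr2a, hr2b]
        · have hva : g a = g α - 1 := inf_val hg hreg hμ hΛμ hα (by rw [← hadef]; exact ha0)
          have hgb : g b ≤ g 1 := hg hbI hI1 hbI.2
          have hsum : μ * (α' - α) ≤ (g a' - g a) + (g 1 - g b) := by
            rw [hva', hva]
            linarith
          nlinarith [hsum, hr2a, hr2b]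
      rw [hb1']
      linarith [key]
  · have hvb' : g b' = g α' + 1 := sup_val hg hreg hμ hΛμ hα' (by rw [← hbdef']; exact hb1')
    have hb1 : b < 1 := lt_of_le_of_lt hbb' hb1'
    have hvb : g b = g α + 1 := sup_val hg hreg hμ hΛμ hα (by rw [← hbdef]; exact hb1)
    have key : μ * (α' - α) ≤ Λ * (b' - b) := by
      obtain ⟨_, hr2⟩ := reg_pair hg hreg hbI hbI' hbb'
      have : g b' - g b = g α' - g α := by rw [hvb', hvb]; ring
      linarith
    nlinarith [mul_nonneg hΛ.le (sub_nonneg.mpr haa')]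

end Displacement

section AvgDiff

variable {g : ℝ → ℝ} {μ Λ : ℝ}

/-- Comparison of averages over two intervals via an affine substitution. -/
lemma avg_diff_bounds (hg : MonotoneOn g I01) (hreg : RegularOnHK μ Λ g I01)
    {a b a' b' : ℝ} (hab : a < b) (hab' : a' < b') (h0 : 0 ≤ a) (hb'1 : b' ≤ 1)
    (haa' : a ≤ a') (hbb' : b ≤ b') :
    μ * ((a' - a) + (b' - b))/2 ≤
        (∫ x in a'..b', g x)/(b' - a') - (∫ x in a..b, g x)/(b - a) ∧
      (∫ x in a'..b', g x)/(b' - a') - (∫ x in a..b, g x)/(b - a) ≤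
        Λ * ((a' - a) + (b' - b))/2 := by
  have hba : (0:ℝ) < b - a := by linarith
  have hba' : (0:ℝ) < b' - a' := by linarith
  have hb1 : b ≤ 1 := le_trans hbb' hb'1
  have ha0' : 0 ≤ a' := le_trans h0 haa'
  set k := (b' - a')/(b - a) with hkdef
  have hk : 0 < k := div_pos hba' hba
  set c := a' - k*a with hcdef
  have hK : k * (b - a) = b' - a' := div_mul_cancel₀ _ (ne_of_gt hba)
  have hea : k*a + c = a' := by rw [hcdef]; ring
  have heb : k*b + c = b' := by rw [hcdef]; nlinarith [hK]
  -- displacement function is nonnegative and affine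
  have hdisp : ∀ x ∈ Icc a b, 0 ≤ (k-1)*x + c ∧ (k*x + c) ∈ Icc a' b' := by
    intro x hx
    have hda : (k-1)*a + c = a' - a := by rw [hcdef]; ring
    have hdb : (k-1)*b + c = b' - b := by nlinarith [heb]
    constructor
    · rcases le_or_gt 1 k with hk1 | hk1
      · nlinarith [hx.1]
      · nlinarith [hx.2]
    · constructor
      · nlinarith [hx.1, hea]
      · nlinarith [hx.2, heb]
  have hmemI : ∀ x ∈ Icc a b, x ∈ I01 ∧ (k*x + c) ∈ I01 := by
    intro x hx
    obtain ⟨_, hmem⟩ := hdisp x hx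
    exact ⟨⟨le_trans h0 hx.1, le_trans hx.2 hb1⟩,
      ⟨le_trans ha0' hmem.1, le_trans hmem.2 hb'1⟩⟩
  -- change of variables
  have hchange : ∫ x in a'..b', g x = k * ∫ x in a..b, g (k*x + c) := by
    have := intervalIntegral.integral_comp_mul_add g (ne_of_gt hk) c (a := a) (b := b)
    rw [hea, heb] at this
    rw [this, smul_eq_mul]
    field_simp
  -- integrability
  have hint_g : IntervalIntegrable g volume a b :=
    intervalIntegrable_of_monotoneOn hg h0 hab.le hb1
  have hint_comp : IntervalIntegrable (fun x => g (k*x + c)) volume a b := by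
    apply MonotoneOn.intervalIntegrable
    rw [uIcc_of_le hab.le]
    intro x hx y hy hxy
    exact hg (hmemI x hx).2 (hmemI y hy).2 (by nlinarith)
  have hint_lin : ∀ (r : ℝ), IntervalIntegrable (fun x => r * ((k-1)*x + c)) volume a b := by
    intro r
    exact ((continuous_const.mul ((continuous_const.mul continuous_id).add
      continuous_const)).intervalIntegrable a b)
  -- the difference of averages as a single integral
  have hdiff_eq : (∫ x in a'..b', g x)/(b' - a') - (∫ x in a..b, g x)/(b - a)
      = (∫ x in a..b, (g (k*x + c) - g x))/(b - a) := by
    have hfrac : k / (b' - a') = 1 / (b - a) := by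
      rw [hkdef]; field_simp
    rw [hchange]
    rw [show k * (∫ x in a..b, g (k*x + c)) / (b' - a')
        = (∫ x in a..b, g (k*x + c)) / (b - a) by
      rw [mul_comm, mul_div_assoc, hfrac, mul_one_div]]
    rw [div_sub_div_same, ← intervalIntegral.integral_sub hint_comp hint_g]
  -- pointwise bounds
  have hptw_low : ∀ x ∈ Icc a b, μ * ((k-1)*x + c) ≤ g (k*x + c) - g x := by
    intro x hx
    obtain ⟨hd0, _⟩ := hdisp x hx
    obtain ⟨hxI, hxI'⟩ := hmemI x hx
    obtain ⟨h1, _⟩ := reg_pair hg hreg hxI hxI' (by nlinarith)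
    calc μ * ((k-1)*x + c) = μ * ((k*x + c) - x) := by ring_nf
    _ ≤ g (k*x + c) - g x := h1
  have hptw_up : ∀ x ∈ Icc a b, g (k*x + c) - g x ≤ Λ * ((k-1)*x + c) := by
    intro x hx
    obtain ⟨hd0, _⟩ := hdisp x hx
    obtain ⟨hxI, hxI'⟩ := hmemI x hx
    obtain ⟨_, h2⟩ := reg_pair hg hreg hxI hxI' (by nlinarith)
    calc g (k*x + c) - g x ≤ Λ * ((k*x + c) - x) := h2
    _ = Λ * ((k-1)*x + c) := by ring_nf
  -- integral of the affine displacement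
  have hlin_int : ∀ (r : ℝ), (∫ x in a..b, r * ((k-1)*x + c))
      = r * ((b-a) * ((a'-a) + (b'-b))/2) := by
    intro r
    have e1 : (∫ x in a..b, r * ((k-1)*x + c))
        = r * ((k-1) * ((b^2-a^2)/2) + c*(b-a)) := by
      rw [intervalIntegral.integral_const_mul]
      congr 1
      rw [intervalIntegral.integral_add (f := fun x => (k-1)*x) (g := fun _ => c)
        (((continuous_const.mul continuous_id').intervalIntegrable a b))
        (intervalIntegrable_const)]
      rw [intervalIntegral.integral_const_mul, integral_id, intervalIntegral.integral_const]
      simp [smul_eq_mul]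
      ring
    rw [e1]
    have heq : (k-1) * ((b^2-a^2)/2) + c*(b-a) = (b-a) * ((a'-a) + (b'-b))/2 := by
      rw [hcdef]
      linear_combination ((b-a)/2) * hK
    rw [heq]
  constructor
  · rw [hdiff_eq, le_div_iff₀ hba]
    have hmono := intervalIntegral.integral_mono_on hab.le (hint_lin μ)
      (hint_comp.sub hint_g) hptw_low
    rw [hlin_int μ] at hmono
    nlinarith [hmono]
  · rw [hdiff_eq, div_le_iff₀ hba]
    have hmono := intervalIntegral.integral_mono_on hab.le
      (hint_comp.sub hint_g) (hint_lin Λ) hptw_up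
    rw [hlin_int Λ] at hmono
    nlinarith [hmono]

end AvgDiff

section Propagate

variable {g : ℝ → ℝ} {μ Λ : ℝ}

lemma update_reg_key (hg : MonotoneOn g I01) (hreg : RegularOnHK μ Λ g I01)
    (hμ : 0 < μ) (hΛμ : μ ≤ Λ) {α α' : ℝ} (hα : α ∈ I01) (hα' : α' ∈ I01) (h : α ≤ α') :
    updateHK g α' - updateHK g α ≤ (Λ^2/μ) * (α' - α) ∧
    (2 < g 1 - g 0 → (μ^2/(2*Λ)) * (α' - α) ≤ updateHK g α' - updateHK g α) := by
  have hΛ : 0 < Λ := lt_of_lt_of_le hμ hΛμ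
  set a := sInf (nbhdHK g α) with hadef
  set b := sSup (nbhdHK g α) with hbdef
  set a' := sInf (nbhdHK g α') with hadef'
  set b' := sSup (nbhdHK g α') with hbdef'
  have hab : a < b := nbhd_pos_reg hg hreg hΛ hα
  have hab' : a' < b' := nbhd_pos_reg hg hreg hΛ hα'
  have ha0 : 0 ≤ a := le_csInf ⟨α, mem_nbhd_self g hα⟩ (fun x hx => (nbhd_subset g α hx).1)
  have hb'1 : b' ≤ 1 := csSup_le ⟨α', mem_nbhd_self g hα'⟩ (fun x hx => (nbhd_subset g α' hx).2)
  have haa' : a ≤ a' := sInf_nbhd_mono hg hα hα' h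
  have hbb' : b ≤ b' := sSup_nbhd_mono hg hα hα' h
  obtain ⟨hΔa, hΔb, hlow⟩ := displacement hg hreg hμ hΛμ hα hα' h
  obtain ⟨hL, hU⟩ := avg_diff_bounds hg hreg hab hab' ha0 hb'1 haa' hbb'
  rw [update_eq_avg hg hα hab, update_eq_avg hg hα' hab']
  rw [← hadef, ← hbdef, ← hadef', ← hbdef']
  constructor
  · have hmul := mul_le_mul_of_nonneg_left (add_le_add hΔa hΔb)
      (by positivity : (0:ℝ) ≤ Λ/2)
    have e1 : (Λ/2)*((Λ/μ)*(α'-α) + (Λ/μ)*(α'-α)) = (Λ^2/μ)*(α'-α) := by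
      field_simp; ring
    have e0 : (Λ/2)*((a'-a)+(b'-b)) = Λ*((a'-a)+(b'-b))/2 := by ring
    rw [e0, e1] at hmul
    linarith [hU]
  · intro hD
    have hlowD := hlow hD
    have e2 : (μ/(2*Λ))*(Λ*((a'-a)+(b'-b))) = μ*((a'-a)+(b'-b))/2 := by
      field_simp
    have e3 : (μ/(2*Λ))*(μ*(α'-α)) = (μ^2/(2*Λ))*(α'-α) := by ring
    have hmul := mul_le_mul_of_nonneg_left hlowD (by positivity : (0:ℝ) ≤ μ/(2*Λ))
    rw [e2, e3] at hmul
    linarith [hL]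

end Propagate

section Packaged

variable {g : ℝ → ℝ} {μ Λ : ℝ}

lemma update_regular (hg : MonotoneOn g I01) (hreg : RegularOnHK μ Λ g I01)
    (hμ : 0 < μ) (hΛμ : μ ≤ Λ) (hD : 2 < g 1 - g 0) :
    MonotoneOn (updateHK g) I01 ∧ RegularOnHK (μ^2/(2*Λ)) (Λ^2/μ) (updateHK g) I01 := by
  have hΛ : 0 < Λ := lt_of_lt_of_le hμ hΛμ
  have hμ'0 : (0:ℝ) ≤ μ^2/(2*Λ) := by positivity
  have key : ∀ x ∈ I01, ∀ y ∈ I01, x ≤ y →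
      (μ^2/(2*Λ))*(y-x) ≤ updateHK g y - updateHK g x ∧
      updateHK g y - updateHK g x ≤ (Λ^2/μ)*(y-x) := by
    intro x hx y hy hxy
    obtain ⟨h1, h2⟩ := update_reg_key hg hreg hμ hΛμ hx hy hxy
    exact ⟨h2 hD, h1⟩
  constructor
  · intro x hx y hy hxy
    have h1 := (key x hx y hy hxy).1
    nlinarith [mul_nonneg hμ'0 (sub_nonneg.mpr hxy)]
  · intro x hx y hy
    rcases le_total x y with hxy | hxy
    · obtain ⟨h1, h2⟩ := key x hx y hy hxy
      have hmono : updateHK g x ≤ updateHK g y := by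
        nlinarith [mul_nonneg hμ'0 (sub_nonneg.mpr hxy)]
      rw [abs_of_nonpos (by linarith : x - y ≤ 0),
        abs_of_nonpos (by linarith : updateHK g x - updateHK g y ≤ 0)]
      constructor <;> nlinarith
    · obtain ⟨h1, h2⟩ := key y hy x hx hxy
      have hmono : updateHK g y ≤ updateHK g x := by
        nlinarith [mul_nonneg hμ'0 (sub_nonneg.mpr hxy)]
      rw [abs_of_nonneg (by linarith : 0 ≤ x - y),
        abs_of_nonneg (by linarith : 0 ≤ updateHK g x - updateHK g y)]
      constructor <;> nlinarith

/-- The push-drop lemma applied at the transition time. -/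
lemma push_drop (hg : MonotoneOn g I01) (hsym : ∀ α ∈ I01, g α + g (1-α) = 0)
    (hW : g 1 ≤ 1) (hreg : RegularOnHK μ Λ g I01) (hμ : 0 < μ) (hΛμ : μ ≤ Λ) :
    updateHK g 1 ≤ g 1 - μ/4 ∧
    1/2 + min (1/2) ((μ/4)/(Λ^2/μ)) ≤ bHK (updateHK g) := by
  have hΛ : 0 < Λ := lt_of_lt_of_le hμ hΛμ
  have hG : GoodHK g := ⟨hg, hsym, hW⟩
  have hg1 := g_one_nonneg hg hsym
  have hg0 : g 0 = - g 1 := g_zero_eq hsym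
  have hg0' : g 0 ≤ 0 := by linarith
  obtain ⟨hinf, hbh, hb1, _, _, _⟩ := lowerHalf hg hsym hW (by norm_num : (0:ℝ) ∈ I01) hg0'
  set b := sSup (nbhdHK g 0) with hbdef
  -- the drop estimate
  have havg : updateHK g 0 = (∫ x in (0:ℝ)..b, g x) / b := by
    have := update_eq_avg hg (by norm_num : (0:ℝ) ∈ I01) (by rw [hinf]; linarith)
    rw [hinf] at this
    simpa using this
  have hdrop0 : g 0 + μ/4 ≤ updateHK g 0 := by
    have hptw : ∀ x ∈ Icc (0:ℝ) b, μ * x ≤ g x - g 0 := by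
      intro x hx
      have hxI : x ∈ I01 := ⟨hx.1, le_trans hx.2 hb1⟩
      obtain ⟨h1, _⟩ := reg_pair hg hreg (by norm_num : (0:ℝ) ∈ I01) hxI hx.1
      simpa using h1
    have hint1 : IntervalIntegrable (fun x => μ * x) volume 0 b :=
      (continuous_const.mul continuous_id').intervalIntegrable 0 b
    have hint2 : IntervalIntegrable (fun x => g x - g 0) volume 0 b :=
      (intervalIntegrable_of_monotoneOn hg le_rfl (by linarith) hb1).sub
        intervalIntegrable_const
    have hmono := intervalIntegral.integral_mono_on (by linarith : (0:ℝ) ≤ b)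
      hint1 hint2 hptw
    have e1 : (∫ x in (0:ℝ)..b, μ * x) = μ * (b^2/2) := by
      rw [intervalIntegral.integral_const_mul, integral_id]
      ring
    have e2 : (∫ x in (0:ℝ)..b, (g x - g 0)) = (∫ x in (0:ℝ)..b, g x) - b * g 0 := by
      rw [intervalIntegral.integral_sub
        (intervalIntegrable_of_monotoneOn hg le_rfl (by linarith) hb1)
        intervalIntegrable_const]
      rw [intervalIntegral.integral_const]
      simp [smul_eq_mul]
    rw [e1, e2] at hmono
    rw [havg, le_div_iff₀ (by linarith : (0:ℝ) < b)]
    nlinarith [hmono, mul_nonneg (mul_nonneg hμ.le (by linarith : (0:ℝ) ≤ b))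
      (by linarith : (0:ℝ) ≤ 2*b - 1)]
  have hdrop : updateHK g 1 ≤ g 1 - μ/4 := by
    rw [update_one_eq hg hsym]
    linarith
  refine ⟨hdrop, ?_⟩
  -- the push estimate
  have hGU : GoodHK (updateHK g) := good_update hG
  have hUsym := hGU.2.1
  have hUmono := hGU.1
  have hUhalf : updateHK g (1/2) = 0 := g_half hUsym
  set Λ' := Λ^2/μ with hΛ'def
  have hΛ' : 0 < Λ' := by positivity
  set x := min (1/2) ((μ/4)/Λ') with hxdef
  have hx0 : 0 < x := lt_min (by norm_num) (by positivity)
  have hx2 : x ≤ 1/2 := min_le_left _ _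
  have hUg0m1 : -1 + μ/4 ≤ updateHK g 0 := by
    have : (-1:ℝ) ≤ g 0 := by linarith
    linarith
  have hsubset : Icc (0:ℝ) (1/2 + x) ⊆ nbhdHK (updateHK g) 0 := by
    intro β hβ
    have hβI : β ∈ I01 := ⟨hβ.1, by linarith [hβ.2]⟩
    refine ⟨hβI, ?_⟩
    have hlow : updateHK g 0 ≤ updateHK g β := hUmono (by norm_num) hβI hβ.1
    have hup : updateHK g β ≤ μ/4 := by
      have h1 : updateHK g β ≤ updateHK g (1/2 + x) := by
        apply hUmono hβI ⟨by linarith, by linarith⟩ hβ.2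
      have h2 : updateHK g (1/2 + x) - updateHK g (1/2) ≤ Λ' * x := by
        have := (update_reg_key hg hreg hμ hΛμ (by norm_num : (1/2:ℝ) ∈ I01)
          (⟨by linarith, by linarith⟩ : (1/2 + x : ℝ) ∈ I01) (by linarith)).1
        simpa using this
      have h3 : Λ' * x ≤ μ/4 := by
        have : x ≤ (μ/4)/Λ' := min_le_right _ _
        rw [← le_div_iff₀' hΛ']
        exact this
      rw [hUhalf] at h2
      linarith
    rw [abs_le]
    constructor
    · linarith
    · linarith
  have hbdd : BddAbove (nbhdHK (updateHK g) 0) :=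
    BddAbove.mono (nbhd_subset _ 0) bddAbove_Icc
  calc 1/2 + x ≤ sSup (nbhdHK (updateHK g) 0) :=
        le_csSup hbdd (hsubset ⟨by linarith, le_refl _⟩)
  _ = bHK (updateHK g) := rfl

end Packaged

section Shift

/-- Updating commutes with vertical shifts, for profiles monotone on `[0,1]`. -/
lemma update_shift_of_eqOn {G G' : ℝ → ℝ} (hg : MonotoneOn G I01) {k : ℝ}
    (heq : ∀ x ∈ I01, G' x = G x + k) {α : ℝ} (hα : α ∈ I01) :
    updateHK G' α = updateHK G α + k := by
  have hset : nbhdHK G' α = nbhdHK G α := by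
    ext β
    simp only [nbhdHK, mem_setOf_eq]
    constructor
    · rintro ⟨hβI, habs⟩
      refine ⟨hβI, ?_⟩
      rw [heq β hβI, heq α hα] at habs
      convert habs using 2
      ring
    · rintro ⟨hβI, habs⟩
      refine ⟨hβI, ?_⟩
      rw [heq β hβI, heq α hα]
      convert habs using 2
      ring
  have hmeas : MeasurableSet (nbhdHK G α) := (nbhd_ordConnected hg α).measurableSet
  have hvfin : volume (nbhdHK G α) < ⊤ :=
    lt_of_le_of_lt (measure_mono (nbhd_subset G α)) (by rw [Real.volume_Icc]; norm_num)
  have hintG : IntegrableOn G (nbhdHK G α) volume := by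
    apply IntegrableOn.mono_set _ (nbhd_subset G α)
    exact MonotoneOn.integrableOn_isCompact isCompact_Icc hg
  have hint : ∫ β in nbhdHK G' α, G' β = (∫ β in nbhdHK G α, G β)
      + k * (volume (nbhdHK G α)).toReal := by
    rw [hset]
    rw [MeasureTheory.setIntegral_congr_fun hmeas
      (fun x hx => heq x (nbhd_subset G α hx))]
    rw [MeasureTheory.integral_add hintG (integrableOn_const hvfin.ne)]
    rw [MeasureTheory.setIntegral_const]
    simp [smul_eq_mul, mul_comm, Measure.real]
  by_cases hp : 0 < (volume (nbhdHK G α)).toReal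
  · have hp' : 0 < (volume (nbhdHK G' α)).toReal := by rw [hset]; exact hp
    rw [updateHK, if_pos hp', updateHK, if_pos hp]
    have hv : (volume (nbhdHK G' α)).toReal = (volume (nbhdHK G α)).toReal := by rw [hset]
    rw [hv, hint]
    field_simp
  · have hp' : ¬ 0 < (volume (nbhdHK G' α)).toReal := by rw [hset]; exact hp
    rw [updateHK, if_neg hp', updateHK, if_neg hp]
    exact heq α hα

/-- Almost-everywhere symmetry upgrades to pointwise symmetry for Lipschitz profiles. -/
lemma symm_pointwise {f : ℝ → ℝ} {M c : ℝ} (hM : 0 < M)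
    (hlip : ∀ x ∈ I01, ∀ y ∈ I01, |f x - f y| ≤ M * |x - y|)
    (hae : ∀ᵐ α ∂(volume.restrict I01), f α + f (1 - α) = c) :
    ∀ α ∈ I01, f α + f (1 - α) = c := by
  by_contra hcon
  push_neg at hcon
  obtain ⟨α₀, hα₀, hne⟩ := hcon
  set F := fun x => f x + f (1 - x) with hF
  set ε := |F α₀ - c| with hε
  have hεpos : 0 < ε := abs_pos.mpr (sub_ne_zero.mpr hne)
  set δ := ε/(4*M) with hδ
  have hδpos : 0 < δ := by positivity
  set l := max 0 (α₀ - δ) with hl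
  set r := min 1 (α₀ + δ) with hr
  have hα₀r : α₀ ≤ r := le_min hα₀.2 (by linarith)
  have hlr : l < r := max_lt (lt_of_lt_of_le (lt_min (by norm_num) (by linarith [hα₀.1])) le_rfl)
    (lt_of_lt_of_le (by linarith) hα₀r)
  have hsub : Icc l r ⊆ {x | ¬(x ∈ I01 → F x = c)} := by
    intro x hx
    have hxI : x ∈ I01 := ⟨le_trans (le_max_left _ _) hx.1, le_trans hx.2 (min_le_left _ _)⟩
    have hx1I : (1:ℝ) - x ∈ I01 := ⟨by linarith [hxI.2], by linarith [hxI.1]⟩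
    have hα1I : (1:ℝ) - α₀ ∈ I01 := ⟨by linarith [hα₀.2], by linarith [hα₀.1]⟩
    have hxd : |x - α₀| ≤ δ := by
      rw [abs_le]
      constructor
      · linarith [le_trans (le_max_right 0 (α₀ - δ)) hx.1]
      · linarith [le_trans hx.2 (min_le_right 1 (α₀ + δ))]
    have h1 : |f x - f α₀| ≤ M * |x - α₀| := hlip x hxI α₀ hα₀
    have h2 : |f (1-x) - f (1-α₀)| ≤ M * |(1-x) - (1-α₀)| := hlip _ hx1I _ hα1I
    have he : |(1-x) - (1-α₀)| = |x - α₀| := by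
      rw [show (1-x) - (1-α₀) = -(x - α₀) by ring, abs_neg]
    rw [he] at h2
    have hFd : |F x - F α₀| ≤ 2 * M * |x - α₀| := by
      calc |F x - F α₀| = |(f x - f α₀) + (f (1-x) - f (1-α₀))| := by
            simp only [hF]; ring_nf
      _ ≤ |f x - f α₀| + |f (1-x) - f (1-α₀)| := abs_add_le _ _
      _ ≤ 2 * M * |x - α₀| := by linarith
    have hFd2 : |F x - F α₀| ≤ ε/2 := by
      calc |F x - F α₀| ≤ 2 * M * |x - α₀| := hFd
      _ ≤ 2 * M * δ := by nlinarith [abs_nonneg (x - α₀)]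
      _ = ε/2 := by rw [hδ]; field_simp; ring
    intro hcontra
    have hFx : F x = c := hcontra hxI
    rw [hFx] at hFd2
    have : |F α₀ - c| ≤ ε/2 := by
      rw [show F α₀ - c = -(c - F α₀) by ring, abs_neg]
      exact hFd2
    rw [← hε] at this
    linarith
  have hae' : volume {x | ¬(x ∈ I01 → F x = c)} = 0 := by
    rw [ae_restrict_iff' measurableSet_Icc] at hae
    rw [← MeasureTheory.ae_iff]
    exact hae
  have : volume (Icc l r) = 0 := measure_mono_null hsub hae'
  rw [Real.volume_Icc] at this
  rw [ENNReal.ofReal_eq_zero] at this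
  linarith

end Shift

section Seq

/-- The sequence of regularity constants `(μ_k, Λ_k)`. -/
noncomputable def muSeq (m M : ℝ) : ℕ → ℝ × ℝ
  | 0 => (m, M)
  | (k+1) => ((muSeq m M k).1^2/(2*(muSeq m M k).2), (muSeq m M k).2^2/(muSeq m M k).1)

lemma muSeq_pos {m M : ℝ} (hm : 0 < m) (hmM : m ≤ M) :
    ∀ k, 0 < (muSeq m M k).1 ∧ (muSeq m M k).1 ≤ (muSeq m M k).2 := by
  intro k
  induction k with
  | zero => exact ⟨hm, hmM⟩
  | succ n ih =>
    obtain ⟨h1, h2⟩ := ih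
    have hΛ : 0 < (muSeq m M n).2 := lt_of_lt_of_le h1 h2
    constructor
    · show 0 < (muSeq m M n).1^2/(2*(muSeq m M n).2)
      positivity
    · show (muSeq m M n).1^2/(2*(muSeq m M n).2) ≤ (muSeq m M n).2^2/(muSeq m M n).1
      rw [div_le_div_iff₀ (by positivity) h1]
      have hc : (muSeq m M n).1^3 ≤ (muSeq m M n).2^3 := pow_le_pow_left₀ h1.le h2 3
      nlinarith [hc, pow_pos hΛ 3]

lemma muSeq_mono {m M : ℝ} (hm : 0 < m) (hmM : m ≤ M) :
    ∀ k l, k ≤ l → (muSeq m M l).1 ≤ (muSeq m M k).1 ∧ (muSeq m M k).2 ≤ (muSeq m M l).2 := by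
  intro k l hkl
  induction l with
  | zero => rw [Nat.le_zero.mp hkl]; exact ⟨le_rfl, le_rfl⟩
  | succ n ih =>
    rcases Nat.lt_or_ge k (n+1) with hlt | hge
    · have hkn : k ≤ n := Nat.lt_succ_iff.mp hlt
      obtain ⟨i1, i2⟩ := ih hkn
      obtain ⟨p1, p2⟩ := muSeq_pos hm hmM n
      have hΛ : 0 < (muSeq m M n).2 := lt_of_lt_of_le p1 p2
      have step1 : (muSeq m M (n+1)).1 ≤ (muSeq m M n).1 := by
        show (muSeq m M n).1^2/(2*(muSeq m M n).2) ≤ (muSeq m M n).1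
        rw [div_le_iff₀ (by positivity)]
        nlinarith
      have step2 : (muSeq m M n).2 ≤ (muSeq m M (n+1)).2 := by
        show (muSeq m M n).2 ≤ (muSeq m M n).2^2/(muSeq m M n).1
        rw [le_div_iff₀ p1]
        nlinarith
      exact ⟨le_trans step1 i1, le_trans i2 step2⟩
    · have : k = n+1 := le_antisymm hkl hge
      rw [this]; exact ⟨le_rfl, le_rfl⟩

lemma delta_mono {μ1 Λ1 μ2 Λ2 : ℝ} (h2 : 0 < μ2) (hμ : μ2 ≤ μ1) (hΛ : Λ1 ≤ Λ2)
    (hμΛ : μ1 ≤ Λ1) :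
    min (1/2) ((μ2/4)/(Λ2^2/μ2)) ≤ min (1/2) ((μ1/4)/(Λ1^2/μ1)) := by
  apply min_le_min le_rfl
  have h1 : 0 < μ1 := lt_of_lt_of_le h2 hμ
  have hΛ1 : 0 < Λ1 := lt_of_lt_of_le h1 hμΛ
  have hΛ2 : 0 < Λ2 := lt_of_lt_of_le hΛ1 hΛ
  have e : ∀ μ Λ : ℝ, 0 < μ → 0 < Λ → (μ/4)/(Λ^2/μ) = μ^2/(4*Λ^2) := by
    intro μ Λ hμ' hΛ'
    field_simp
  rw [e _ _ h2 hΛ2, e _ _ h1 hΛ1]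
  apply div_le_div₀ (by positivity) (by nlinarith) (by positivity) (by nlinarith)

end Seq

end HKProof

open HKProof in
/-- for all `m, M > 0` and `t₁` there exists `t₂` such that every
symmetric `(m,M)`-regular profile `f` with `D(U^{t₁} f) ≤ 2` satisfies that
`U^{t₂} f` is a consensus (constant on `[0,1]`). -/
theorem stmt11 (m M : ℝ) (hm : 0 < m) (hM : 0 < M) (t₁ : ℕ) :
    ∃ t₂ : ℕ, ∀ f : ℝ → ℝ, MonotoneOn f (Icc 0 1) →
      RegularOnHK m M f (Icc 0 1) →
      (∃ c : ℝ, ∀ᵐ α ∂(volume.restrict (Icc (0:ℝ) 1)), f α + f (1 - α) = c) →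
      updateHK^[t₁] f 1 - updateHK^[t₁] f 0 ≤ 2 →
      ∀ α ∈ Icc (0:ℝ) 1, ∀ β ∈ Icc (0:ℝ) 1,
        updateHK^[t₂] f α = updateHK^[t₂] f β := by
  classical
  set M' := max M m with hM'def
  have hmM' : m ≤ M' := le_max_right M m
  have hM'pos : 0 < M' := lt_of_lt_of_le hm hmM'
  set μs : ℕ → ℝ := fun k => (muSeq m M' k).1 with hμs
  set Λs : ℕ → ℝ := fun k => (muSeq m M' k).2 with hΛs
  have hseq : ∀ k, 0 < μs k ∧ μs k ≤ Λs k := muSeq_pos hm hmM'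
  set δbar := min (1/2 : ℝ) ((μs t₁/4)/(Λs t₁^2/μs t₁)) with hδbar
  have hδpos : 0 < δbar := by
    apply lt_min (by norm_num)
    have h1 := (hseq t₁).1
    have h2 := lt_of_lt_of_le h1 (hseq t₁).2
    positivity
  have hδhalf : δbar ≤ 1/2 := min_le_left _ _
  set rbar := ((1/2 : ℝ) - δbar)/((1/2 : ℝ) + δbar) with hrbar
  have hr0 : 0 ≤ rbar := div_nonneg (by linarith) (by linarith)
  have hrlt : rbar < 1 := by rw [div_lt_one (by linarith)]; linarith
  obtain ⟨K, hK⟩ := exists_pow_lt_of_lt_one (by norm_num : (0:ℝ) < 1/2) hrlt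
  refine ⟨t₁ + 2 + K, ?_⟩
  intro f hmono hreg hsymE hD2
  obtain ⟨c, hae⟩ := hsymE
  have hreg' : RegularOnHK m M' f (Icc 0 1) := by
    intro α hα β hβ
    obtain ⟨h1, h2⟩ := hreg α hα β hβ
    exact ⟨h1, le_trans h2 (mul_le_mul_of_nonneg_right (le_max_left M m) (abs_nonneg _))⟩
  have hsymf : ∀ α ∈ Icc (0:ℝ) 1, f α + f (1 - α) = c :=
    symm_pointwise hM'pos (fun x hx y hy => (hreg' x hx y hy).2) hae
  set h : ℝ → ℝ := fun x => f x - c/2 with hh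
  have hmono_h : MonotoneOn h (Icc 0 1) := by
    intro x hx y hy hxy
    simp only [hh]
    have := hmono hx hy hxy
    linarith
  have hreg_h : RegularOnHK m M' h (Icc 0 1) := by
    intro α hα β hβ
    have e : h α - h β = f α - f β := by simp only [hh]; ring
    rw [e]
    exact hreg' α hα β hβ
  have hsym_h : ∀ α ∈ Icc (0:ℝ) 1, h α + h (1 - α) = 0 := by
    intro α hα
    simp only [hh]
    have := hsymf α hα
    linarith
  set g : ℕ → ℝ → ℝ := fun t => updateHK^[t] h with hgdef
  have hgsucc : ∀ t, g (t+1) = updateHK (g t) := by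
    intro t
    simp only [hgdef]
    exact Function.iterate_succ_apply' updateHK t h
  have hseqeq : ∀ n, μs (n+1) = (μs n)^2/(2*Λs n) ∧ Λs (n+1) = (Λs n)^2/μs n := by
    intro n
    constructor <;> simp [hμs, hΛs, muSeq]
  -- Phase-1 invariant: regularity propagates while the diameter exceeds 2
  have P : ∀ t, (∀ j, j < t → 2 < g j 1 - g j 0) →
      MonotoneOn (g t) (Icc 0 1) ∧ RegularOnHK (μs t) (Λs t) (g t) (Icc 0 1) ∧
      (∀ α ∈ Icc (0:ℝ) 1, g t α + g t (1 - α) = 0) := by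
    intro t
    induction t with
    | zero => exact fun _ => ⟨hmono_h, hreg_h, hsym_h⟩
    | succ n ih =>
      intro hj
      obtain ⟨ihm, ihr, ihs⟩ := ih (fun j hjn => hj j (Nat.lt_succ_of_lt hjn))
      obtain ⟨hp, hl⟩ := hseq n
      obtain ⟨hm1, hr1'⟩ := update_regular ihm ihr hp hl (hj n (Nat.lt_succ_self n))
      obtain ⟨e1, e2⟩ := hseqeq n
      refine ⟨?_, ?_, ?_⟩
      · rw [hgsucc]; exact hm1
      · rw [hgsucc, e1, e2]; exact hr1'
      · intro α hα
        rw [hgsucc, update_symm ihm ihs hα]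
        ring
  -- there is a time `≤ t₁` at which the diameter is at most 2
  have hex : ∃ t, t ≤ t₁ ∧ g t 1 - g t 0 ≤ 2 := by
    by_contra hcon
    push_neg at hcon
    have hshift : ∀ j, j ≤ t₁ → ∀ α ∈ Icc (0:ℝ) 1, updateHK^[j] f α = g j α + c/2 := by
      intro j
      induction j with
      | zero =>
        intro _ α hα
        simp only [Function.iterate_zero, id_eq, hgdef, hh]
        ring
      | succ n ihn =>
        intro hn1 α hα
        have hn : n ≤ t₁ := Nat.le_of_succ_le hn1
        have hPn := P n (fun i hi => hcon i (le_trans (Nat.le_of_lt hi) hn))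
        rw [Function.iterate_succ_apply', hgsucc]
        exact update_shift_of_eqOn hPn.1 (ihn hn) hα
    have h1 := hshift t₁ le_rfl 1 (by norm_num)
    have h0 := hshift t₁ le_rfl 0 (by norm_num)
    rw [h1, h0] at hD2
    have := hcon t₁ le_rfl
    linarith
  set s := Nat.find hex with hsdef
  obtain ⟨hst₁, hDs⟩ := Nat.find_spec hex
  have hbefore : ∀ j, j < s → 2 < g j 1 - g j 0 := by
    intro j hj
    have hnot := Nat.find_min hex hj
    push_neg at hnot
    exact hnot (by omega)
  obtain ⟨mono_s, reg_s, sym_s⟩ := P s hbefore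
  have hWs : g s 1 ≤ 1 := by
    have := g_zero_eq sym_s
    linarith
  obtain ⟨hps, hls⟩ := hseq s
  obtain ⟨hdrop, hpush⟩ := push_drop mono_s sym_s hWs reg_s hps hls
  rw [← hgsucc s] at hdrop hpush
  have hGs1 : GoodHK (g (s+1)) := by
    rw [hgsucc]
    exact good_update ⟨mono_s, sym_s, hWs⟩
  have hδs : δbar ≤ min (1/2 : ℝ) ((μs s/4)/(Λs s^2/μs s)) := by
    obtain ⟨hmono1, hmono2⟩ := muSeq_mono hm hmM' s t₁ hst₁
    exact delta_mono (hseq t₁).1 hmono1 hmono2 (hseq s).2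
  have hb1 : 1/2 + δbar ≤ bHK (g (s+1)) := by linarith [hδs, hpush]
  have hph2 := phase2_iter hGs1 hδpos hδhalf hb1
  have hiter : ∀ k, updateHK^[k] (g (s+1)) = g (s+1+k) := by
    intro k
    simp only [hgdef]
    rw [← Function.iterate_add_apply]
    congr 1
    omega
  have hWfinal : g (s+1+K) 1 ≤ 1/2 := by
    obtain ⟨hGk, _, hWk⟩ := hph2 K
    rw [hiter K] at hWk
    have hW1 : g (s+1) 1 ≤ 1 := hGs1.2.2
    have hW0 : 0 ≤ g (s+1) 1 := g_one_nonneg hGs1.1 hGs1.2.1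
    have hp1 : (0:ℝ) ≤ rbar^K := pow_nonneg hr0 K
    calc g (s+1+K) 1 ≤ rbar^K * g (s+1) 1 := hWk
    _ ≤ rbar^K * 1 := by nlinarith
    _ ≤ 1/2 := by nlinarith [hK]
  have hGfinal : GoodHK (g (s+1+K)) := by
    have := (hph2 K).1
    rwa [hiter K] at this
  have hcons : ∀ α ∈ Icc (0:ℝ) 1, g (s+2+K) α = 0 := by
    intro α hα
    have e : s+2+K = (s+1+K)+1 := by omega
    rw [e, hgsucc]
    exact consensus_step hGfinal.1 hGfinal.2.1 hWfinal α hα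
  have hconstall : ∀ j, ∀ α ∈ Icc (0:ℝ) 1, g (s+2+K+j) α = 0 := by
    intro j
    induction j with
    | zero => simpa using hcons
    | succ n ihn =>
      intro α hα
      have e : s+2+K+(n+1) = (s+2+K+n)+1 := by omega
      rw [e, hgsucc]
      exact const_zero_step ihn α hα
  have mono_all : ∀ j, MonotoneOn (g j) (Icc 0 1) := by
    intro j
    rcases Nat.lt_or_ge j (s+1) with hj | hj
    · exact (P j (fun i hi => hbefore i (lt_of_lt_of_le hi (Nat.lt_succ_iff.mp hj)))).1
    · have e : j = s+1+(j-(s+1)) := by omega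
      rw [e]
      have := (hph2 (j-(s+1))).1
      rw [hiter] at this
      exact this.1
  have hshift_all : ∀ j, ∀ α ∈ Icc (0:ℝ) 1, updateHK^[j] f α = g j α + c/2 := by
    intro j
    induction j with
    | zero =>
      intro α hα
      simp only [Function.iterate_zero, id_eq, hgdef, hh]
      ring
    | succ n ihn =>
      intro α hα
      rw [Function.iterate_succ_apply', hgsucc]
      exact update_shift_of_eqOn (mono_all n) ihn hα
  intro α hα β hβ
  have e : t₁+2+K = s+2+K+((t₁+2+K)-(s+2+K)) := by omega
  have hα0 := hconstall ((t₁+2+K)-(s+2+K)) α hα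
  have hβ0 := hconstall ((t₁+2+K)-(s+2+K)) β hβ
  rw [← e] at hα0 hβ0
  rw [hshift_all _ α hα, hshift_all _ β hβ, hα0, hβ0]
end

section
/- For every L > 0, the following two statements are equivalent: (1) there exist T ∈ ℕ and N ∈ ℕ such that U^T f^{n,L} is a consensus for every n ≥ N; (2) there exists T' ∈ ℕ such that U^{T'} f^L is a consensus. -/
open MeasureTheory Set

/-- The canonical equally spaced profile on `n` agents with diameter `L`:
it takes the value `(i-1)·L/(n-1)` on `((i-1)/n, i/n]` for `i = 2, …, n`,
and the value `0` on `[0, 1/n]`. -/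
noncomputable def eqSpacedHK (n : ℕ) (L : ℝ) : ℝ → ℝ :=
  fun α => if α ≤ 1 / n then 0 else ((⌈α * n⌉ : ℝ) - 1) * L / ((n : ℝ) - 1)

/-- A consensus: a profile that is constant on `[0,1]`. -/
def IsConsensusHK (g : ℝ → ℝ) : Prop :=
  ∀ α ∈ Icc (0:ℝ) 1, ∀ β ∈ Icc (0:ℝ) 1, g α = g β

namespace HK

open Filter Topology

/-! ### Basic facts about neighbourhoods and averages -/

lemma nbhd_subset (f : ℝ → ℝ) (α : ℝ) : nbhdHK f α ⊆ Icc 0 1 := fun _ hβ => hβ.1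

lemma self_mem_nbhd {f : ℝ → ℝ} {α : ℝ} (hα : α ∈ Icc (0:ℝ) 1) : α ∈ nbhdHK f α :=
  ⟨hα, by simp⟩

lemma mem_nbhd_iff {f : ℝ → ℝ} {α β : ℝ} :
    β ∈ nbhdHK f α ↔ β ∈ Icc (0:ℝ) 1 ∧ |f β - f α| ≤ 1 := Iff.rfl

lemma nbhd_ordConnected {f : ℝ → ℝ} (hf : MonotoneOn f (Icc 0 1)) (α : ℝ) :
    (nbhdHK f α).OrdConnected := by
  constructor
  intro x hx y hy z hz
  have hxI := hx.1; have hyI := hy.1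
  have hzI : z ∈ Icc (0:ℝ) 1 := ⟨le_trans hxI.1 hz.1, le_trans hz.2 hyI.2⟩
  refine ⟨hzI, ?_⟩
  have h1 : f x ≤ f z := hf hxI hzI hz.1
  have h2 : f z ≤ f y := hf hzI hyI hz.2
  have hx2 := abs_le.1 hx.2
  have hy2 := abs_le.1 hy.2
  rw [abs_le]
  constructor
  · linarith [hx2.1]
  · linarith [hy2.2]

lemma nbhd_measurableSet {f : ℝ → ℝ} (hf : MonotoneOn f (Icc 0 1)) (α : ℝ) :
    MeasurableSet (nbhdHK f α) := (nbhd_ordConnected hf α).measurableSet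

lemma vol_le_one {s : Set ℝ} (hs : s ⊆ Icc 0 1) : volume s ≤ 1 := by
  calc volume s ≤ volume (Icc (0:ℝ) 1) := measure_mono hs
  _ = 1 := by simp

lemma vol_ne_top {s : Set ℝ} (hs : s ⊆ Icc 0 1) : volume s ≠ ⊤ :=
  ne_top_of_le_ne_top (by simp) (vol_le_one hs)

lemma toReal_le_one {s : Set ℝ} (hs : s ⊆ Icc 0 1) : (volume s).toReal ≤ 1 := by
  have := vol_le_one hs
  rw [← ENNReal.toReal_one]
  exact ENNReal.toReal_mono (by simp) this

lemma integrableOn_Icc {f : ℝ → ℝ} (hf : MonotoneOn f (Icc 0 1)) :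
    IntegrableOn f (Icc 0 1) := hf.integrableOn_isCompact isCompact_Icc

lemma integrableOn_sub {f : ℝ → ℝ} (hf : MonotoneOn f (Icc 0 1)) {s : Set ℝ}
    (hs : s ⊆ Icc 0 1) : IntegrableOn f s := (integrableOn_Icc hf).mono_set hs

/-- average of `f` over `s` -/
noncomputable def avg (f : ℝ → ℝ) (s : Set ℝ) : ℝ := (∫ x in s, f x) / (volume s).toReal

lemma updateHK_eq_avg {f : ℝ → ℝ} {α : ℝ} (h : 0 < (volume (nbhdHK f α)).toReal) :
    updateHK f α = avg f (nbhdHK f α) := if_pos h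

lemma avg_le {f : ℝ → ℝ} {s : Set ℝ} {v : ℝ} (hs : MeasurableSet s) (hsub : s ⊆ Icc 0 1)
    (hint : IntegrableOn f s) (hv : ∀ x ∈ s, f x ≤ v) (hpos : 0 < (volume s).toReal) :
    avg f s ≤ v := by
  have h1 : ∫ x in s, f x ≤ ∫ _x in s, v :=
    setIntegral_mono_on hint (integrableOn_const (lt_of_le_of_lt (vol_le_one hsub) (by simp)).ne) hs hv
  rw [setIntegral_const, measureReal_def] at h1
  rw [avg, div_le_iff₀ hpos]
  simpa [smul_eq_mul, mul_comm] using h1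

lemma le_avg {f : ℝ → ℝ} {s : Set ℝ} {v : ℝ} (hs : MeasurableSet s) (hsub : s ⊆ Icc 0 1)
    (hint : IntegrableOn f s) (hv : ∀ x ∈ s, v ≤ f x) (hpos : 0 < (volume s).toReal) :
    v ≤ avg f s := by
  have h1 : ∫ _x in s, v ≤ ∫ x in s, f x :=
    setIntegral_mono_on (integrableOn_const (lt_of_le_of_lt (vol_le_one hsub) (by simp)).ne) hint hs hv
  rw [setIntegral_const, measureReal_def] at h1
  rw [avg, le_div_iff₀ hpos]
  simpa [smul_eq_mul, mul_comm] using h1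


/-! ### Strict average bounds -/

lemma toReal_pos' {s : Set ℝ} (hs : s ⊆ Icc 0 1) (h : volume s ≠ 0) :
    0 < (volume s).toReal := ENNReal.toReal_pos h (vol_ne_top hs)

lemma sublevel_ordConnected {f : ℝ → ℝ} (hf : MonotoneOn f (Icc 0 1)) (w : ℝ) :
    {x ∈ Icc (0:ℝ) 1 | f x ≤ w}.OrdConnected := by
  constructor
  intro x hx y hy z hz
  have hzI : z ∈ Icc (0:ℝ) 1 := ⟨le_trans hx.1.1 hz.1, le_trans hz.2 hy.1.2⟩
  exact ⟨hzI, le_trans (hf hzI hy.1 hz.2) hy.2⟩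

lemma superlevel_ordConnected {f : ℝ → ℝ} (hf : MonotoneOn f (Icc 0 1)) (w : ℝ) :
    {x ∈ Icc (0:ℝ) 1 | w ≤ f x}.OrdConnected := by
  constructor
  intro x hx y hy z hz
  have hzI : z ∈ Icc (0:ℝ) 1 := ⟨le_trans hx.1.1 hz.1, le_trans hz.2 hy.1.2⟩
  exact ⟨hzI, le_trans hx.2 (hf hx.1 hzI hz.1)⟩

lemma setIntegral_pos_of_pos_meas {f : ℝ → ℝ} {s : Set ℝ} (hf : MonotoneOn f (Icc 0 1))
    (hs : MeasurableSet s) (hsub : s ⊆ Icc 0 1) {v : ℝ}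
    (hv : ∀ x ∈ s, f x ≤ v) (hns : volume s ≠ 0)
    (hnull : volume {x ∈ s | f x = v} = 0) :
    0 < ∫ x in s, (v - f x) := by
  set P : ℕ → Set ℝ := fun k => s ∩ {x ∈ Icc (0:ℝ) 1 | f x ≤ v - 1/(k+1)} with hP
  have hPmeas : ∀ k, MeasurableSet (P k) := fun k =>
    hs.inter (sublevel_ordConnected hf _).measurableSet
  have hunion : s \ {x ∈ s | f x = v} = ⋃ k, P k := by
    ext x
    simp only [mem_diff, mem_setOf_eq, mem_iUnion, hP, mem_inter_iff, not_and]
    constructor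
    · rintro ⟨hxs, hne⟩
      have hlt : f x < v := lt_of_le_of_ne (hv x hxs) (fun h => (hne hxs) h)
      obtain ⟨n, hn⟩ := exists_nat_one_div_lt (sub_pos.2 hlt)
      exact ⟨n, hxs, hsub hxs, by linarith [hn]⟩
    · rintro ⟨k, hxs, _, hle⟩
      have : (0:ℝ) < 1/(k+1) := by positivity
      exact ⟨hxs, fun _ => by linarith⟩
  have hnz : volume (⋃ k, P k) ≠ 0 := by
    rw [← hunion, measure_diff_null hnull]; exact hns
  have : ∃ k, volume (P k) ≠ 0 := by
    by_contra h
    push_neg at h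
    exact hnz (by simpa using measure_iUnion_null h)
  obtain ⟨k, hk⟩ := this
  have hPsub : P k ⊆ s := inter_subset_left
  have hPIcc : P k ⊆ Icc 0 1 := hPsub.trans hsub
  have hPpos : 0 < (volume (P k)).toReal := toReal_pos' hPIcc hk
  have hint : IntegrableOn (fun x => v - f x) s :=
    (integrableOn_const (lt_of_le_of_lt (vol_le_one hsub) (by simp)).ne).sub
      (integrableOn_sub hf hsub)
  have h1 : ∫ x in P k, (1/((k:ℝ)+1)) ≤ ∫ x in P k, (v - f x) := by
    refine setIntegral_mono_on (integrableOn_const (lt_of_le_of_lt (vol_le_one hPIcc) (by simp)).ne)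
      (hint.mono_set hPsub) (hPmeas k) ?_
    rintro x ⟨_, _, hx2⟩
    linarith
  rw [setIntegral_const, measureReal_def] at h1
  have h2 : ∫ x in P k, (v - f x) ≤ ∫ x in s, (v - f x) := by
    refine setIntegral_mono_set hint ?_ (HasSubset.Subset.eventuallyLE hPsub)
    filter_upwards [ae_restrict_mem hs] with x hx
    simp only [Pi.zero_apply]
    linarith [hv x hx]
  have : (0:ℝ) < (volume (P k)).toReal • (1/((k:ℝ)+1)) := by
    rw [smul_eq_mul]; positivity
  linarith

lemma avg_lt {f : ℝ → ℝ} {s : Set ℝ} {v : ℝ} (hf : MonotoneOn f (Icc 0 1))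
    (hs : MeasurableSet s) (hsub : s ⊆ Icc 0 1)
    (hv : ∀ x ∈ s, f x ≤ v) (hns : volume s ≠ 0)
    (hnull : volume {x ∈ s | f x = v} = 0) : avg f s < v := by
  have hpos := toReal_pos' hsub hns
  have h := setIntegral_pos_of_pos_meas hf hs hsub hv hns hnull
  have hint : IntegrableOn f s := integrableOn_sub hf hsub
  have hconst : IntegrableOn (fun _ => v) s :=
    integrableOn_const (lt_of_le_of_lt (vol_le_one hsub) (by simp)).ne
  rw [integral_sub hconst hint, setIntegral_const, measureReal_def, smul_eq_mul] at h
  rw [avg, div_lt_iff₀ hpos]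
  linarith

lemma lt_avg {f : ℝ → ℝ} {s : Set ℝ} {v : ℝ} (hf : MonotoneOn f (Icc 0 1))
    (hs : MeasurableSet s) (hsub : s ⊆ Icc 0 1)
    (hv : ∀ x ∈ s, v ≤ f x) (hns : volume s ≠ 0)
    (hnull : volume {x ∈ s | f x = v} = 0) : v < avg f s := by
  have hpos := toReal_pos' hsub hns
  set P : ℕ → Set ℝ := fun k => s ∩ {x ∈ Icc (0:ℝ) 1 | v + 1/(k+1) ≤ f x} with hP
  have hPmeas : ∀ k, MeasurableSet (P k) := fun k =>
    hs.inter (superlevel_ordConnected hf _).measurableSet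
  have hunion : s \ {x ∈ s | f x = v} = ⋃ k, P k := by
    ext x
    simp only [mem_diff, mem_setOf_eq, mem_iUnion, hP, mem_inter_iff, not_and]
    constructor
    · rintro ⟨hxs, hne⟩
      have hlt : v < f x := lt_of_le_of_ne (hv x hxs) (fun h => (hne hxs) h.symm)
      obtain ⟨n, hn⟩ := exists_nat_one_div_lt (sub_pos.2 hlt)
      exact ⟨n, hxs, hsub hxs, by linarith [hn]⟩
    · rintro ⟨k, hxs, _, hle⟩
      have : (0:ℝ) < 1/(k+1) := by positivity
      exact ⟨hxs, fun _ h => by linarith⟩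
  have hnz : volume (⋃ k, P k) ≠ 0 := by
    rw [← hunion, measure_diff_null hnull]; exact hns
  have : ∃ k, volume (P k) ≠ 0 := by
    by_contra h
    push_neg at h
    exact hnz (by simpa using measure_iUnion_null h)
  obtain ⟨k, hk⟩ := this
  have hPsub : P k ⊆ s := inter_subset_left
  have hPIcc : P k ⊆ Icc 0 1 := hPsub.trans hsub
  have hPpos : 0 < (volume (P k)).toReal := toReal_pos' hPIcc hk
  have hint : IntegrableOn (fun x => f x - v) s :=
    (integrableOn_sub hf hsub).sub
      (integrableOn_const (lt_of_le_of_lt (vol_le_one hsub) (by simp)).ne)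
  have h1 : ∫ x in P k, (1/((k:ℝ)+1)) ≤ ∫ x in P k, (f x - v) := by
    refine setIntegral_mono_on (integrableOn_const (lt_of_le_of_lt (vol_le_one hPIcc) (by simp)).ne)
      (hint.mono_set hPsub) (hPmeas k) ?_
    rintro x ⟨_, _, hx2⟩
    linarith
  rw [setIntegral_const, measureReal_def] at h1
  have h2 : ∫ x in P k, (f x - v) ≤ ∫ x in s, (f x - v) := by
    refine setIntegral_mono_set hint ?_ (HasSubset.Subset.eventuallyLE hPsub)
    filter_upwards [ae_restrict_mem hs] with x hx
    simp only [Pi.zero_apply]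
    linarith [hv x hx]
  have h3 : (0:ℝ) < (volume (P k)).toReal • (1/((k:ℝ)+1)) := by
    rw [smul_eq_mul]; positivity
  have h4 : 0 < ∫ x in s, (f x - v) := by linarith
  have hintf : IntegrableOn f s := integrableOn_sub hf hsub
  have hconst : IntegrableOn (fun _ => v) s :=
    integrableOn_const (lt_of_le_of_lt (vol_le_one hsub) (by simp)).ne
  rw [integral_sub hintf hconst, setIntegral_const, measureReal_def, smul_eq_mul] at h4
  rw [avg, lt_div_iff₀ hpos]
  linarith


/-! ### Sandwich estimate for averages over nested sets -/

lemma vol_split {A C : Set ℝ} (hA : MeasurableSet A) (hC : MeasurableSet C)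
    (hdisj : Disjoint A C) (hsub : A ∪ C ⊆ Icc 0 1) :
    (volume (A ∪ C)).toReal = (volume A).toReal + (volume C).toReal := by
  rw [measure_union hdisj hC]
  exact ENNReal.toReal_add (vol_ne_top ((subset_union_left).trans hsub))
    (vol_ne_top ((subset_union_right).trans hsub))

lemma integral_split {f : ℝ → ℝ} {A C : Set ℝ} (hf : MonotoneOn f (Icc 0 1))
    (hC : MeasurableSet C) (hdisj : Disjoint A C) (hsub : A ∪ C ⊆ Icc 0 1) :
    ∫ x in A ∪ C, f x = (∫ x in A, f x) + ∫ x in C, f x :=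
  setIntegral_union hdisj hC (integrableOn_sub hf ((subset_union_left).trans hsub))
    (integrableOn_sub hf ((subset_union_right).trans hsub))

lemma norm_setIntegral_le' {f : ℝ → ℝ} {s : Set ℝ} {M : ℝ}
    (hsub : s ⊆ Icc 0 1) (hM : ∀ x ∈ s, |f x| ≤ M)
    (hmeas : AEStronglyMeasurable f (volume.restrict s)) :
    |∫ x in s, f x| ≤ M * (volume s).toReal := by
  have h := norm_setIntegral_le_of_norm_le_const (μ := volume) (s := s) (f := f) (C := M)
    (lt_of_le_of_lt (vol_le_one hsub) (by simp))
    (fun x hx => by simpa [Real.norm_eq_abs] using hM x hx)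
  simpa [Real.norm_eq_abs, measureReal_def] using h

lemma norm_setIntegral_le {f : ℝ → ℝ} {s : Set ℝ} {M : ℝ} (hf : MonotoneOn f (Icc 0 1))
    (hsub : s ⊆ Icc 0 1) (hM : ∀ x ∈ Icc (0:ℝ) 1, |f x| ≤ M) :
    |∫ x in s, f x| ≤ M * (volume s).toReal := by
  exact norm_setIntegral_le' hsub (fun x hx => hM x (hsub hx))
    (integrableOn_sub hf hsub).aestronglyMeasurable

lemma abs_avg_alg {u r m d M : ℝ} (hm : 0 < m) (hd : 0 ≤ d) (hM : 0 ≤ M)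
    (hub : |u| ≤ M * m) (hrb : |r| ≤ M * d) :
    |(u + r)/(m + d) - u/m| ≤ 2*M*d/m := by
  have hmd : 0 < m + d := by linarith
  have key : (u+r)/(m+d) - u/m = (m*r - d*u)/(m*(m+d)) := by
    field_simp
    ring
  rw [key, abs_div, abs_of_pos (by positivity : (0:ℝ) < m*(m+d))]
  have h1 : |m*r - d*u| ≤ 2*M*d*m := by
    calc |m*r - d*u| ≤ |m*r| + |d*u| := abs_sub _ _
    _ = m*|r| + d*|u| := by rw [abs_mul, abs_mul, abs_of_pos hm, abs_of_nonneg hd]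
    _ ≤ m*(M*d) + d*(M*m) := by gcongr
    _ = 2*M*d*m := by ring
  rw [div_le_div_iff₀ (by positivity) hm]
  calc |m*r - d*u| * m ≤ (2*M*d*m)*m := mul_le_mul_of_nonneg_right h1 hm.le
  _ ≤ 2*M*d*(m*(m+d)) := by nlinarith [mul_nonneg (mul_nonneg (mul_nonneg hM hd) hd) hm.le]

/-- If `Sm ⊆ T` with both inside `[0,1]`, the averages of `f` over `T` and `Sm`
differ by at most `2 M d / m` where `d = |T| - |Sm|` and `m = |Sm|`. -/
lemma avg_sandwich {f : ℝ → ℝ} {Sm T : Set ℝ} {M : ℝ} (hf : MonotoneOn f (Icc 0 1))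
    (hSm : MeasurableSet Sm) (hT : MeasurableSet T) (hsub : T ⊆ Icc 0 1)
    (hSmT : Sm ⊆ T) (hM : ∀ x ∈ Icc (0:ℝ) 1, |f x| ≤ M)
    (hpos : 0 < (volume Sm).toReal) :
    |avg f T - avg f Sm| ≤
      2 * M * ((volume T).toReal - (volume Sm).toReal) / (volume Sm).toReal := by
  have hSmIcc : Sm ⊆ Icc 0 1 := hSmT.trans hsub
  set m := (volume Sm).toReal with hm
  set d := (volume (T \ Sm)).toReal with hd
  have hd0 : 0 ≤ d := ENNReal.toReal_nonneg
  have hcup : Sm ∪ (T \ Sm) = T := union_diff_cancel hSmT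
  have hTsplit : (volume T).toReal = m + d := by
    have h := vol_split hSm (hT.diff hSm) disjoint_sdiff_right (by rw [hcup]; exact hsub)
    rw [hcup] at h
    exact h
  have hIsplit : ∫ x in T, f x = (∫ x in Sm, f x) + ∫ x in T \ Sm, f x := by
    have h := integral_split hf (hT.diff hSm) disjoint_sdiff_right (by rw [hcup]; exact hsub)
    rw [hcup] at h
    exact h
  have hM0 : 0 ≤ M := le_trans (abs_nonneg _) (hM 0 (by simp))
  have hub : |∫ x in Sm, f x| ≤ M * m := norm_setIntegral_le hf hSmIcc hM
  have hrb : |∫ x in T \ Sm, f x| ≤ M * d :=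
    norm_setIntegral_le hf ((diff_subset).trans hsub) hM
  have heq : avg f T - avg f Sm = ((∫ x in Sm, f x) + ∫ x in T \ Sm, f x)/(m+d)
      - (∫ x in Sm, f x)/m := by
    rw [avg, avg, hIsplit, hTsplit]
  have hgoal : 2 * M * ((volume T).toReal - (volume Sm).toReal) / (volume Sm).toReal
      = 2*M*d/m := by rw [hTsplit, ← hm]; ring_nf
  rw [heq, hgoal]
  exact abs_avg_alg hpos hd0 hM0 hub hrb

/-- THE CORE ESTIMATE.  If `Sm ⊆ N_h(α), N_g(α₀) ⊆ Sp` then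
`|Uh(α) - Ug(α₀)| ≤ ε + 4 M D / m`. -/
lemma core_est {g h : ℝ → ℝ} {α α₀ ε M : ℝ}
    (hg : MonotoneOn g (Icc 0 1)) (hh : MonotoneOn h (Icc 0 1))
    (hM : ∀ x ∈ Icc (0:ℝ) 1, |g x| ≤ M)
    (happ : ∀ x ∈ Icc (0:ℝ) 1, |h x - g x| ≤ ε)
    {Sm Sp : Set ℝ} (hSm : MeasurableSet Sm) (hSp : Sp ⊆ Icc 0 1)
    (hSmN : Sm ⊆ nbhdHK h α) (hSmN' : Sm ⊆ nbhdHK g α₀)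
    (hNSp : nbhdHK h α ⊆ Sp) (hN'Sp : nbhdHK g α₀ ⊆ Sp)
    (hpos : 0 < (volume Sm).toReal) :
    |updateHK h α - updateHK g α₀| ≤
      ε + 4 * M * ((volume Sp).toReal - (volume Sm).toReal) / (volume Sm).toReal := by
  have hM0 : 0 ≤ M := le_trans (abs_nonneg _) (hM 0 (by simp))
  set Nh := nbhdHK h α with hNh
  set Ng := nbhdHK g α₀ with hNg
  have hNhm : MeasurableSet Nh := nbhd_measurableSet hh α
  have hNgm : MeasurableSet Ng := nbhd_measurableSet hg α₀
  have hNhIcc : Nh ⊆ Icc 0 1 := nbhd_subset h α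
  have hNgIcc : Ng ⊆ Icc 0 1 := nbhd_subset g α₀
  have hNhpos : 0 < (volume Nh).toReal :=
    lt_of_lt_of_le hpos (ENNReal.toReal_mono (vol_ne_top hNhIcc) (measure_mono hSmN))
  have hNgpos : 0 < (volume Ng).toReal :=
    lt_of_lt_of_le hpos (ENNReal.toReal_mono (vol_ne_top hNgIcc) (measure_mono hSmN'))
  have hD0 : (volume Sm).toReal ≤ (volume Sp).toReal :=
    ENNReal.toReal_mono (vol_ne_top hSp) (measure_mono (hSmN.trans hNSp))
  -- |Uh α - avg g Nh| ≤ ε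
  have step1 : |updateHK h α - avg g Nh| ≤ ε := by
    rw [updateHK_eq_avg hNhpos, avg, avg, div_sub_div_same]
    rw [← integral_sub (integrableOn_sub hh hNhIcc) (integrableOn_sub hg hNhIcc)]
    rw [abs_div, abs_of_pos hNhpos, div_le_iff₀ hNhpos]
    exact norm_setIntegral_le' hNhIcc (fun x hx => happ x (hNhIcc hx))
      ((integrableOn_sub hh hNhIcc).sub (integrableOn_sub hg hNhIcc)).aestronglyMeasurable
  have hvolT : ∀ {T : Set ℝ}, T ⊆ Sp →
      (volume T).toReal - (volume Sm).toReal ≤ (volume Sp).toReal - (volume Sm).toReal := by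
    intro T h2
    have := ENNReal.toReal_mono (vol_ne_top hSp) (measure_mono h2)
    linarith
  have step2 : |avg g Nh - avg g Sm| ≤
      2*M*((volume Sp).toReal - (volume Sm).toReal)/(volume Sm).toReal := by
    refine le_trans (avg_sandwich hg hSm hNhm hNhIcc hSmN hM hpos) ?_
    have h2 : 2*M*((volume Nh).toReal - (volume Sm).toReal)
        ≤ 2*M*((volume Sp).toReal - (volume Sm).toReal) := by
      nlinarith [hvolT hNSp]
    exact (div_le_div_iff_of_pos_right hpos).2 h2
  have step3 : |avg g Sm - avg g Ng| ≤
      2*M*((volume Sp).toReal - (volume Sm).toReal)/(volume Sm).toReal := by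
    rw [abs_sub_comm]
    refine le_trans (avg_sandwich hg hSm hNgm hNgIcc hSmN' hM hpos) ?_
    have h2 : 2*M*((volume Ng).toReal - (volume Sm).toReal)
        ≤ 2*M*((volume Sp).toReal - (volume Sm).toReal) := by
      nlinarith [hvolT hN'Sp]
    exact (div_le_div_iff_of_pos_right hpos).2 h2
  rw [updateHK_eq_avg hNgpos]
  have tri1 : |updateHK h α - avg g Ng| ≤
      |updateHK h α - avg g Nh| + |avg g Nh - avg g Sm| + |avg g Sm - avg g Ng| := by
    have a1 := abs_sub_le (updateHK h α) (avg g Nh) (avg g Sm)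
    have a2 := abs_sub_le (updateHK h α) (avg g Sm) (avg g Ng)
    linarith
  have harith : 2*M*((volume Sp).toReal - (volume Sm).toReal)/(volume Sm).toReal
      + 2*M*((volume Sp).toReal - (volume Sm).toReal)/(volume Sm).toReal
      = 4*M*((volume Sp).toReal - (volume Sm).toReal)/(volume Sm).toReal := by ring
  linarith


/-! ### U preserves monotonicity -/

lemma setIntegral_le_const {f : ℝ → ℝ} {s : Set ℝ} {v : ℝ} (hf : MonotoneOn f (Icc 0 1))
    (hs : MeasurableSet s) (hsub : s ⊆ Icc 0 1) (hv : ∀ x ∈ s, f x ≤ v) :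
    ∫ x in s, f x ≤ v * (volume s).toReal := by
  have h1 : ∫ x in s, f x ≤ ∫ _x in s, v :=
    setIntegral_mono_on (integrableOn_sub hf hsub)
      (integrableOn_const (lt_of_le_of_lt (vol_le_one hsub) (by simp)).ne) hs hv
  rw [setIntegral_const, measureReal_def, smul_eq_mul] at h1
  linarith

lemma const_le_setIntegral {f : ℝ → ℝ} {s : Set ℝ} {v : ℝ} (hf : MonotoneOn f (Icc 0 1))
    (hs : MeasurableSet s) (hsub : s ⊆ Icc 0 1) (hv : ∀ x ∈ s, v ≤ f x) :
    v * (volume s).toReal ≤ ∫ x in s, f x := by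
  have h1 : ∫ _x in s, v ≤ ∫ x in s, f x :=
    setIntegral_mono_on (integrableOn_const (lt_of_le_of_lt (vol_le_one hsub) (by simp)).ne)
      (integrableOn_sub hf hsub) hs hv
  rw [setIntegral_const, measureReal_def, smul_eq_mul] at h1
  linarith

lemma nbhd_congr_of_eq {h : ℝ → ℝ} {α α' : ℝ} (hval : h α = h α') :
    nbhdHK h α = nbhdHK h α' := by
  unfold nbhdHK
  rw [hval]

lemma update_mono {h : ℝ → ℝ} (hh : MonotoneOn h (Icc 0 1)) {α α' : ℝ}
    (hα : α ∈ Icc (0:ℝ) 1) (hα' : α' ∈ Icc (0:ℝ) 1) (hle : α ≤ α')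
    (hp : 0 < (volume (nbhdHK h α)).toReal) (hp' : 0 < (volume (nbhdHK h α')).toReal) :
    updateHK h α ≤ updateHK h α' := by
  rcases eq_or_lt_of_le (hh hα hα' hle) with hval | hval
  · apply le_of_eq
    unfold updateHK
    rw [nbhd_congr_of_eq hval, hval]
  set N := nbhdHK h α with hN
  set N' := nbhdHK h α' with hN'
  have hNm : MeasurableSet N := nbhd_measurableSet hh α
  have hN'm : MeasurableSet N' := nbhd_measurableSet hh α'
  have hNIcc : N ⊆ Icc 0 1 := nbhd_subset h α
  have hN'Icc : N' ⊆ Icc 0 1 := nbhd_subset h α'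
  rw [updateHK_eq_avg hp, updateHK_eq_avg hp']
  have hAval : ∀ β ∈ N \ N', h β ≤ h α' - 1 := by
    rintro β ⟨⟨hβI, habs⟩, hnot⟩
    have h2 : ¬ |h β - h α'| ≤ 1 := fun hcon => hnot ⟨hβI, hcon⟩
    rcases lt_abs.1 (not_le.1 h2) with hgt | hlt
    · exfalso
      have := abs_le.1 habs
      linarith
    · linarith
  have hBval : ∀ β ∈ N' \ N, h α + 1 ≤ h β := by
    rintro β ⟨⟨hβI, habs⟩, hnot⟩
    have h2 : ¬ |h β - h α| ≤ 1 := fun hcon => hnot ⟨hβI, hcon⟩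
    rcases lt_abs.1 (not_le.1 h2) with hgt | hlt
    · linarith
    · exfalso
      have := abs_le.1 habs
      linarith
  have hNval : ∀ β ∈ N, h β ≤ h α + 1 := by
    rintro β ⟨hβI, habs⟩
    linarith [(abs_le.1 habs).2]
  have hN'val : ∀ β ∈ N', h α' - 1 ≤ h β := by
    rintro β ⟨hβI, habs⟩
    linarith [(abs_le.1 habs).1]
  by_cases hbig : h α + 2 < h α'
  · have h1 : avg h N ≤ h α + 1 := avg_le hNm hNIcc (integrableOn_sub hh hNIcc) hNval hp
    have h2 : h α' - 1 ≤ avg h N' := le_avg hN'm hN'Icc (integrableOn_sub hh hN'Icc) hN'val hp'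
    linarith
  push_neg at hbig
  have hsplitN : (volume N).toReal = (volume (N \ N')).toReal + (volume (N ∩ N')).toReal := by
    have hcup : (N \ N') ∪ (N ∩ N') = N := diff_union_inter N N'
    have h := vol_split (hNm.diff hN'm) (hNm.inter hN'm)
      (disjoint_sdiff_left.mono_right inter_subset_right)
      (by rw [hcup]; exact hNIcc)
    rw [hcup] at h
    exact h
  have hsplitN' : (volume N').toReal = (volume (N' \ N)).toReal + (volume (N' ∩ N)).toReal := by
    have hcup : (N' \ N) ∪ (N' ∩ N) = N' := diff_union_inter N' N
    have h := vol_split (hN'm.diff hNm) (hN'm.inter hNm)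
      (disjoint_sdiff_left.mono_right inter_subset_right)
      (by rw [hcup]; exact hN'Icc)
    rw [hcup] at h
    exact h
  have hIsplitN : ∫ x in N, h x = (∫ x in N \ N', h x) + ∫ x in N ∩ N', h x := by
    have hcup : (N \ N') ∪ (N ∩ N') = N := diff_union_inter N N'
    have h := integral_split hh (hNm.inter hN'm)
      (disjoint_sdiff_left.mono_right inter_subset_right)
      (by rw [hcup]; exact hNIcc)
    rw [hcup] at h
    exact h
  have hIsplitN' : ∫ x in N', h x = (∫ x in N' \ N, h x) + ∫ x in N' ∩ N, h x := by
    have hcup : (N' \ N) ∪ (N' ∩ N) = N' := diff_union_inter N' N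
    have h := integral_split hh (hN'm.inter hNm)
      (disjoint_sdiff_left.mono_right inter_subset_right)
      (by rw [hcup]; exact hN'Icc)
    rw [hcup] at h
    exact h
  by_cases hC : volume (N ∩ N') = 0
  · -- essentially disjoint case
    have hCInt : ∫ x in N ∩ N', h x = 0 := by
      rw [Measure.restrict_eq_zero.2 hC]
      simp
    have hCr : (volume (N ∩ N')).toReal = 0 := by rw [hC]; simp
    have hA : avg h N ≤ h α' - 1 := by
      rw [avg, hIsplitN, hCInt, add_zero]
      have hub : ∫ x in N \ N', h x ≤ (h α' - 1) * (volume (N \ N')).toReal :=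
        setIntegral_le_const hh (hNm.diff hN'm) ((diff_subset).trans hNIcc) hAval
      rw [div_le_iff₀ hp, hsplitN, hCr, add_zero]
      linarith
    have hB : h α' - 1 ≤ avg h N' :=
      le_avg hN'm hN'Icc (integrableOn_sub hh hN'Icc) hN'val hp'
    linarith
  · have hCpos : 0 < (volume (N ∩ N')).toReal := toReal_pos' ((inter_subset_left).trans hNIcc) hC
    set c := avg h (N ∩ N') with hc
    have hc1 : h α' - 1 ≤ c :=
      le_avg (hNm.inter hN'm) ((inter_subset_left).trans hNIcc)
        (integrableOn_sub hh ((inter_subset_left).trans hNIcc))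
        (fun x hx => hN'val x hx.2) hCpos
    have hc2 : c ≤ h α + 1 :=
      avg_le (hNm.inter hN'm) ((inter_subset_left).trans hNIcc)
        (integrableOn_sub hh ((inter_subset_left).trans hNIcc))
        (fun x hx => hNval x hx.1) hCpos
    have hCInt : ∫ x in N ∩ N', h x = c * (volume (N ∩ N')).toReal := by
      rw [hc, avg]
      field_simp
    have h1 : avg h N ≤ c := by
      rw [avg, div_le_iff₀ hp, hIsplitN, hCInt, hsplitN]
      have hub : ∫ x in N \ N', h x ≤ (h α' - 1) * (volume (N \ N')).toReal :=
        setIntegral_le_const hh (hNm.diff hN'm) ((diff_subset).trans hNIcc) hAval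
      have : (h α' - 1) * (volume (N \ N')).toReal ≤ c * (volume (N \ N')).toReal :=
        mul_le_mul_of_nonneg_right hc1 ENNReal.toReal_nonneg
      nlinarith
    have h2 : c ≤ avg h N' := by
      rw [avg, le_div_iff₀ hp', hIsplitN', hsplitN']
      have hCInt' : ∫ x in N' ∩ N, h x = c * (volume (N' ∩ N)).toReal := by
        rw [inter_comm]
        exact hCInt
      rw [hCInt', inter_comm N' N]
      have hlb : (h α + 1) * (volume (N' \ N)).toReal ≤ ∫ x in N' \ N, h x :=
        const_le_setIntegral hh (hN'm.diff hNm) ((diff_subset).trans hN'Icc) hBval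
      have : c * (volume (N' \ N)).toReal ≤ (h α + 1) * (volume (N' \ N)).toReal :=
        mul_le_mul_of_nonneg_right hc2 ENNReal.toReal_nonneg
      nlinarith
    linarith


/-! ### Continuity-based facts -/

lemma interval_lb {r α : ℝ} (hr : 0 < r) (hα : α ∈ Icc (0:ℝ) 1) :
    min r 1 ≤ (volume (Icc (max 0 (α - r)) (min 1 (α + r)))).toReal := by
  obtain ⟨h0, h1⟩ := hα
  have key : min r 1 ≤ min 1 (α + r) - max 0 (α - r) := by
    rcases le_total (α + r) 1 with h | h <;> rcases le_total (α - r) 0 with h' | h' <;>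
      rcases le_total r 1 with h'' | h'' <;>
      simp only [min_def, max_def] <;> split_ifs <;> linarith
  rw [Real.volume_Icc, ENNReal.toReal_ofReal (by linarith [lt_min hr one_pos])]
  exact key

lemma halfwidth_lb {g : ℝ → ℝ} (hgc : ContinuousOn g (Icc 0 1)) :
    ∃ m₀ : ℝ, 0 < m₀ ∧ ∀ α ∈ Icc (0:ℝ) 1,
      m₀ ≤ (volume {β ∈ Icc (0:ℝ) 1 | |g β - g α| ≤ 1/2}).toReal := by
  have huc := isCompact_Icc.uniformContinuousOn_of_continuous hgc
  rw [Metric.uniformContinuousOn_iff] at huc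
  obtain ⟨δ, hδ, hδ'⟩ := huc (1/2) (by norm_num)
  refine ⟨min (δ/2) 1, lt_min (by positivity) one_pos, ?_⟩
  intro α hα
  have hJ : Icc (max 0 (α - δ/2)) (min 1 (α + δ/2)) ⊆
      {β ∈ Icc (0:ℝ) 1 | |g β - g α| ≤ 1/2} := by
    intro β hβ
    have hβI : β ∈ Icc (0:ℝ) 1 :=
      ⟨le_trans (le_max_left _ _) hβ.1, le_trans hβ.2 (min_le_left _ _)⟩
    have hd1 := le_trans (le_max_right 0 (α - δ/2)) hβ.1
    have hd2 := le_trans hβ.2 (min_le_right 1 (α + δ/2))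
    refine ⟨hβI, ?_⟩
    have := hδ' β hβI α hα (by rw [Real.dist_eq, abs_lt]; constructor <;> linarith)
    rw [Real.dist_eq] at this
    linarith [le_of_lt this]
  calc min (δ/2) 1 ≤ (volume (Icc (max 0 (α - δ/2)) (min 1 (α + δ/2)))).toReal :=
        interval_lb (by positivity) hα
  _ ≤ _ := ENNReal.toReal_mono (vol_ne_top (sep_subset _ _)) (measure_mono hJ)

lemma halfset_subset_nbhd (g : ℝ → ℝ) (α : ℝ) :
    {β ∈ Icc (0:ℝ) 1 | |g β - g α| ≤ 1/2} ⊆ nbhdHK g α := by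
  rintro β ⟨hβI, hβ⟩
  exact ⟨hβI, by linarith⟩

lemma nbhd_pos_of_cont {g : ℝ → ℝ} (hgc : ContinuousOn g (Icc 0 1))
    {α : ℝ} (hα : α ∈ Icc (0:ℝ) 1) : 0 < (volume (nbhdHK g α)).toReal := by
  obtain ⟨m₀, hm₀, hb⟩ := halfwidth_lb hgc
  calc (0:ℝ) < m₀ := hm₀
  _ ≤ (volume {β ∈ Icc (0:ℝ) 1 | |g β - g α| ≤ 1/2}).toReal := hb α hα
  _ ≤ _ := ENNReal.toReal_mono (vol_ne_top (nbhd_subset g α))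
      (measure_mono (halfset_subset_nbhd g α))

lemma window_meas {g : ℝ → ℝ} (hg : MonotoneOn g (Icc 0 1)) (x c : ℝ) :
    MeasurableSet {β ∈ Icc (0:ℝ) 1 | |g β - x| ≤ c} := by
  have heq : {β ∈ Icc (0:ℝ) 1 | |g β - x| ≤ c}
      = {β ∈ Icc (0:ℝ) 1 | g β ≤ x + c} ∩ {β ∈ Icc (0:ℝ) 1 | x - c ≤ g β} := by
    ext β
    simp only [mem_setOf_eq, mem_inter_iff, abs_le]
    constructor
    · rintro ⟨h1, h2, h3⟩
      exact ⟨⟨h1, by linarith⟩, h1, by linarith⟩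
    · rintro ⟨⟨h1, h2⟩, _, h3⟩
      exact ⟨h1, by linarith, by linarith⟩
  rw [heq]
  exact (sublevel_ordConnected hg _).measurableSet.inter
    (superlevel_ordConnected hg _).measurableSet

lemma window_small {g : ℝ → ℝ} (hg : MonotoneOn g (Icc 0 1)) {x : ℝ}
    (hnull : volume {β ∈ Icc (0:ℝ) 1 | g β = x} = 0) {θ : ℝ} (hθ : 0 < θ) :
    ∃ ζ : ℝ, 0 < ζ ∧ (volume {β ∈ Icc (0:ℝ) 1 | |g β - x| ≤ ζ}).toReal < θ := by
  set A : ℕ → Set ℝ := fun k => {β ∈ Icc (0:ℝ) 1 | |g β - x| ≤ 1/(k+1)} with hA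
  have hmeas : ∀ k, MeasurableSet (A k) := fun k => window_meas hg x _
  have hanti : Antitone A := by
    intro j k hjk β hβ
    refine ⟨hβ.1, le_trans hβ.2 ?_⟩
    have : (j:ℝ) + 1 ≤ (k:ℝ) + 1 := by exact_mod_cast Nat.succ_le_succ hjk
    exact one_div_le_one_div_of_le (by positivity) this
  have hiInter : ⋂ k, A k = {β ∈ Icc (0:ℝ) 1 | g β = x} := by
    ext β
    simp only [mem_iInter, mem_setOf_eq, hA]
    constructor
    · intro h
      refine ⟨(h 0).1, ?_⟩
      by_contra hne
      obtain ⟨n, hn⟩ := exists_nat_one_div_lt (abs_pos.2 (sub_ne_zero.2 hne))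
      exact absurd (h n).2 (not_le.2 hn)
    · rintro ⟨hβI, hEq⟩ k
      refine ⟨hβI, by rw [hEq]; simp; positivity⟩
  have htend := tendsto_measure_iInter_atTop (fun k => (hmeas k).nullMeasurableSet) hanti
    ⟨0, vol_ne_top (sep_subset _ _)⟩
  rw [hiInter, hnull] at htend
  have hev := htend.eventually (gt_mem_nhds (ENNReal.ofReal_pos.2 hθ))
  obtain ⟨k, hk⟩ := hev.exists
  exact ⟨1/(k+1), by positivity, ENNReal.toReal_lt_of_lt_ofReal hk⟩

lemma nbhd_isClosed {g : ℝ → ℝ} (hgc : ContinuousOn g (Icc 0 1)) (α : ℝ) :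
    IsClosed (nbhdHK g α) := by
  have heq : nbhdHK g α = Icc 0 1 ∩ (fun β => |g β - g α|) ⁻¹' (Iic 1) := rfl
  rw [heq]
  exact ContinuousOn.preimage_isClosed_of_isClosed
    ((hgc.sub continuousOn_const).abs) isClosed_Icc isClosed_Iic


/-! ### Interval structure of neighbourhoods for continuous monotone profiles -/

lemma nbhd_nonempty {g : ℝ → ℝ} {α : ℝ} (hα : α ∈ Icc (0:ℝ) 1) :
    (nbhdHK g α).Nonempty := ⟨α, self_mem_nbhd hα⟩

lemma nbhd_bddBelow (g : ℝ → ℝ) (α : ℝ) : BddBelow (nbhdHK g α) :=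
  ⟨0, fun _ hx => hx.1.1⟩

lemma nbhd_bddAbove (g : ℝ → ℝ) (α : ℝ) : BddAbove (nbhdHK g α) :=
  ⟨1, fun _ hx => hx.1.2⟩

lemma nbhd_inf_mem {g : ℝ → ℝ} (hgc : ContinuousOn g (Icc 0 1)) {α : ℝ}
    (hα : α ∈ Icc (0:ℝ) 1) : sInf (nbhdHK g α) ∈ nbhdHK g α :=
  (nbhd_isClosed hgc α).csInf_mem (nbhd_nonempty hα) (nbhd_bddBelow g α)

lemma nbhd_sup_mem {g : ℝ → ℝ} (hgc : ContinuousOn g (Icc 0 1)) {α : ℝ}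
    (hα : α ∈ Icc (0:ℝ) 1) : sSup (nbhdHK g α) ∈ nbhdHK g α :=
  (nbhd_isClosed hgc α).csSup_mem (nbhd_nonempty hα) (nbhd_bddAbove g α)

lemma nbhd_eq_Icc {g : ℝ → ℝ} (hg : MonotoneOn g (Icc 0 1))
    (hgc : ContinuousOn g (Icc 0 1)) {α : ℝ} (hα : α ∈ Icc (0:ℝ) 1) :
    nbhdHK g α = Icc (sInf (nbhdHK g α)) (sSup (nbhdHK g α)) := by
  apply subset_antisymm
  · exact fun x hx => ⟨csInf_le (nbhd_bddBelow g α) hx, le_csSup (nbhd_bddAbove g α) hx⟩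
  · exact (nbhd_ordConnected hg α).out (nbhd_inf_mem hgc hα) (nbhd_sup_mem hgc hα)

/-- If the left endpoint of the neighbourhood is interior, the profile value
there is exactly `g α - 1`. -/
lemma clamp_left {g : ℝ → ℝ} (hg : MonotoneOn g (Icc 0 1))
    (hgc : ContinuousOn g (Icc 0 1)) {α : ℝ} (hα : α ∈ Icc (0:ℝ) 1)
    (ha : 0 < sInf (nbhdHK g α)) : g (sInf (nbhdHK g α)) = g α - 1 := by
  set a := sInf (nbhdHK g α) with hadef
  have haN : a ∈ nbhdHK g α := nbhd_inf_mem hgc hα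
  have haI : a ∈ Icc (0:ℝ) 1 := haN.1
  have hge : g α - 1 ≤ g a := by linarith [(abs_le.1 haN.2).1]
  rcases eq_or_lt_of_le hge with h | h
  · exact h.symm
  exfalso
  set θ := g a - (g α - 1) with hθdef
  have hθ : 0 < θ := by simp only [hθdef]; linarith
  have hcw := (hgc a haI)
  rw [Metric.continuousWithinAt_iff] at hcw
  obtain ⟨δ, hδ, hδ'⟩ := hcw θ hθ
  set β := a - min (δ/2) (a/2) with hβdef
  have hmin : 0 < min (δ/2) (a/2) := lt_min (by positivity) (by positivity)
  have hβa : β < a := by simp only [hβdef]; linarith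
  have hβ0 : 0 ≤ β := by
    have : min (δ/2) (a/2) ≤ a/2 := min_le_right _ _
    simp only [hβdef]; linarith
  have hβI : β ∈ Icc (0:ℝ) 1 := ⟨hβ0, le_trans (le_of_lt hβa) haI.2⟩
  have hdist : dist β a < δ := by
    rw [Real.dist_eq, abs_lt]
    have h1 : min (δ/2) (a/2) ≤ δ/2 := min_le_left _ _
    constructor <;> simp only [hβdef] <;> linarith
  have hval := hδ' hβI hdist
  rw [Real.dist_eq] at hval
  have h1 : g α - 1 < g β := by
    have := (abs_lt.1 hval).1
    simp only [hθdef] at this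
    linarith
  have h2 : g β ≤ g α + 1 := by
    have := hg hβI haI (le_of_lt hβa)
    linarith [(abs_le.1 haN.2).2]
  have hβN : β ∈ nbhdHK g α := ⟨hβI, abs_le.2 ⟨by linarith, by linarith⟩⟩
  exact absurd (csInf_le (nbhd_bddBelow g α) hβN) (not_le.2 hβa)

lemma clamp_right {g : ℝ → ℝ} (hg : MonotoneOn g (Icc 0 1))
    (hgc : ContinuousOn g (Icc 0 1)) {α : ℝ} (hα : α ∈ Icc (0:ℝ) 1)
    (hb : sSup (nbhdHK g α) < 1) : g (sSup (nbhdHK g α)) = g α + 1 := by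
  set b := sSup (nbhdHK g α) with hbdef
  have hbN : b ∈ nbhdHK g α := nbhd_sup_mem hgc hα
  have hbI : b ∈ Icc (0:ℝ) 1 := hbN.1
  have hle : g b ≤ g α + 1 := by linarith [(abs_le.1 hbN.2).2]
  rcases eq_or_lt_of_le hle with h | h
  · exact h
  exfalso
  set θ := (g α + 1) - g b with hθdef
  have hθ : 0 < θ := by simp only [hθdef]; linarith
  have hcw := (hgc b hbI)
  rw [Metric.continuousWithinAt_iff] at hcw
  obtain ⟨δ, hδ, hδ'⟩ := hcw θ hθ
  set β := b + min (δ/2) ((1-b)/2) with hβdef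
  have h1b : 0 < 1 - b := by linarith
  have hmin : 0 < min (δ/2) ((1-b)/2) := lt_min (by positivity) (by positivity)
  have hβb : b < β := by simp only [hβdef]; linarith
  have hβ1 : β ≤ 1 := by
    have : min (δ/2) ((1-b)/2) ≤ (1-b)/2 := min_le_right _ _
    simp only [hβdef]; linarith
  have hβI : β ∈ Icc (0:ℝ) 1 := ⟨le_trans hbI.1 (le_of_lt hβb), hβ1⟩
  have hdist : dist β b < δ := by
    rw [Real.dist_eq, abs_lt]
    have h1 : min (δ/2) ((1-b)/2) ≤ δ/2 := min_le_left _ _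
    constructor <;> simp only [hβdef] <;> linarith
  have hval := hδ' hβI hdist
  rw [Real.dist_eq] at hval
  have h1 : g β < g α + 1 := by
    have := (abs_lt.1 hval).2
    simp only [hθdef] at this
    linarith
  have h2 : g α - 1 ≤ g β := by
    have := hg hbI hβI (le_of_lt hβb)
    linarith [(abs_le.1 hbN.2).1]
  have hβN : β ∈ nbhdHK g α := ⟨hβI, abs_le.2 ⟨by linarith, by linarith⟩⟩
  exact absurd (le_csSup (nbhd_bddAbove g α) hβN) (not_le.2 hβb)


/-! ### The structure lemma: equal update values force full neighbourhoods -/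

lemma update_strict_or_full {g : ℝ → ℝ} (hg : MonotoneOn g (Icc 0 1))
    (hgc : ContinuousOn g (Icc 0 1)) {α α' : ℝ}
    (hα : α ∈ Icc (0:ℝ) 1) (hα' : α' ∈ Icc (0:ℝ) 1) (hlt : α < α') (hval : g α < g α')
    (hnull₁ : volume {β ∈ Icc (0:ℝ) 1 | g β = g α' - 1} = 0)
    (hnull₂ : volume {β ∈ Icc (0:ℝ) 1 | g β = g α + 1} = 0) :
    updateHK g α < updateHK g α' ∨
      (nbhdHK g α = Icc 0 1 ∧ nbhdHK g α' = Icc 0 1) := by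
  set N := nbhdHK g α with hN
  set N' := nbhdHK g α' with hN'
  have hNm : MeasurableSet N := nbhd_measurableSet hg α
  have hN'm : MeasurableSet N' := nbhd_measurableSet hg α'
  have hNIcc : N ⊆ Icc 0 1 := nbhd_subset g α
  have hN'Icc : N' ⊆ Icc 0 1 := nbhd_subset g α'
  have hp : 0 < (volume N).toReal := nbhd_pos_of_cont hgc hα
  have hp' : 0 < (volume N').toReal := nbhd_pos_of_cont hgc hα'
  have hNne : volume N ≠ 0 := fun h => by rw [hN] at h; rw [h] at hp; simp at hp
  have hN'ne : volume N' ≠ 0 := fun h => by rw [hN'] at h; rw [h] at hp'; simp at hp'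
  have hNval : ∀ β ∈ N, g β ≤ g α + 1 := by
    rintro β ⟨hβI, habs⟩
    linarith [(abs_le.1 habs).2]
  have hN'val : ∀ β ∈ N', g α' - 1 ≤ g β := by
    rintro β ⟨hβI, habs⟩
    linarith [(abs_le.1 habs).1]
  have hAval : ∀ β ∈ N \ N', g β ≤ g α' - 1 := by
    rintro β ⟨⟨hβI, habs⟩, hnot⟩
    have h2 : ¬ |g β - g α'| ≤ 1 := fun hcon => hnot ⟨hβI, hcon⟩
    rcases lt_abs.1 (not_le.1 h2) with hgt | hlt2
    · exfalso
      have := abs_le.1 habs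
      linarith
    · linarith
  have hBval : ∀ β ∈ N' \ N, g α + 1 ≤ g β := by
    rintro β ⟨⟨hβI, habs⟩, hnot⟩
    have h2 : ¬ |g β - g α| ≤ 1 := fun hcon => hnot ⟨hβI, hcon⟩
    rcases lt_abs.1 (not_le.1 h2) with hgt | hlt2
    · linarith
    · exfalso
      have := abs_le.1 habs
      linarith
  have hnullN₂ : volume {x ∈ N | g x = g α + 1} = 0 := by
    apply measure_mono_null _ hnull₂
    rintro x ⟨hx1, hx2⟩
    exact ⟨hNIcc hx1, hx2⟩
  have hnullN'₁ : volume {x ∈ N' | g x = g α' - 1} = 0 := by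
    apply measure_mono_null _ hnull₁
    rintro x ⟨hx1, hx2⟩
    exact ⟨hN'Icc hx1, hx2⟩
  by_cases hd2 : 2 ≤ g α' - g α
  · -- far apart: strict increase for free
    left
    have h1 : updateHK g α < g α + 1 := by
      rw [updateHK_eq_avg hp]
      exact avg_lt hg hNm hNIcc hNval hNne hnullN₂
    have h2 : g α' - 1 < updateHK g α' := by
      rw [updateHK_eq_avg hp']
      exact lt_avg hg hN'm hN'Icc hN'val hN'ne hnullN'₁
    linarith
  push_neg at hd2
  -- the middle set C has positive measure
  set C := N ∩ N' with hC
  have hCm : MeasurableSet C := hNm.inter hN'm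
  have hCIcc : C ⊆ Icc 0 1 := (inter_subset_left).trans hNIcc
  have hCmem : ∀ β ∈ Icc (0:ℝ) 1, g α' - 1 ≤ g β → g β ≤ g α + 1 → β ∈ C := by
    intro β hβI hh1 hh2
    constructor
    · rw [hN]
      exact ⟨hβI, abs_le.2 ⟨by linarith, by linarith⟩⟩
    · rw [hN']
      exact ⟨hβI, abs_le.2 ⟨by linarith, by linarith⟩⟩
  have hCne : volume C ≠ 0 := by
    by_cases hd1 : g α' - g α ≤ 1
    · -- a right-neighbourhood of α is inside C
      have hcw := hgc α hα
      rw [Metric.continuousWithinAt_iff] at hcw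
      obtain ⟨δ, hδ, hδ'⟩ := hcw 1 one_pos
      have hα1 : α < 1 := lt_of_lt_of_le hlt hα'.2
      set e := min 1 (α + δ/2) with he
      have hαe : α < e := lt_min hα1 (by linarith)
      have hJ : Icc α e ⊆ C := by
        intro β hβ
        have hβI : β ∈ Icc (0:ℝ) 1 :=
          ⟨le_trans hα.1 hβ.1, le_trans hβ.2 (min_le_left _ _)⟩
        have hdist : dist β α < δ := by
          rw [Real.dist_eq, abs_lt]
          have := le_trans hβ.2 (min_le_right 1 (α + δ/2))
          constructor <;> linarith [hβ.1]
        have hv := hδ' hβI hdist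
        rw [Real.dist_eq] at hv
        have hub : g β ≤ g α + 1 := by linarith [(abs_lt.1 hv).2]
        have hlb : g α' - 1 ≤ g β := by
          have := hg hα hβI hβ.1
          linarith
        exact hCmem β hβI hlb hub
      intro hvol
      have h0 : volume (Icc α e) = 0 := measure_mono_null hJ hvol
      rw [Real.volume_Icc] at h0
      rw [ENNReal.ofReal_eq_zero] at h0
      linarith
    · -- intermediate value: a point with value in the middle
      push_neg at hd1
      set v := (g α + g α')/2 with hv
      have hIvt := intermediate_value_Icc (le_of_lt hlt)
        (hgc.mono (Icc_subset_Icc hα.1 hα'.2))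
      have hvmem : v ∈ Icc (g α) (g α') := ⟨by simp only [hv]; linarith, by simp only [hv]; linarith⟩
      obtain ⟨γ, hγ, hgγ⟩ := hIvt hvmem
      have hγI : γ ∈ Icc (0:ℝ) 1 := ⟨le_trans hα.1 hγ.1, le_trans hγ.2 hα'.2⟩
      set θ := (2 - (g α' - g α))/2 with hθ
      have hθpos : 0 < θ := by simp only [hθ]; linarith
      have hcw := hgc γ hγI
      rw [Metric.continuousWithinAt_iff] at hcw
      obtain ⟨δ, hδ, hδ'⟩ := hcw θ hθpos
      set lo := max 0 (γ - δ/2) with hlo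
      set hi := min 1 (γ + δ/2) with hhi
      have hlohi : lo < hi := by
        apply max_lt <;> apply lt_min
        · exact one_pos
        · linarith [hγI.1]
        · linarith [hγI.2]
        · linarith
      have hJ : Icc lo hi ⊆ C := by
        intro β hβ
        have hβI : β ∈ Icc (0:ℝ) 1 :=
          ⟨le_trans (le_max_left _ _) hβ.1, le_trans hβ.2 (min_le_left _ _)⟩
        have hdist : dist β γ < δ := by
          rw [Real.dist_eq, abs_lt]
          have h1 := le_trans (le_max_right 0 (γ - δ/2)) hβ.1
          have h2 := le_trans hβ.2 (min_le_right 1 (γ + δ/2))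
          constructor <;> linarith
        have hvv := hδ' hβI hdist
        rw [Real.dist_eq, hgγ] at hvv
        have habs := abs_lt.1 hvv
        have hub : g β ≤ g α + 1 := by
          simp only [hv] at habs
          simp only [hθ] at habs
          linarith [habs.2]
        have hlb : g α' - 1 ≤ g β := by
          simp only [hv] at habs
          simp only [hθ] at habs
          linarith [habs.1]
        exact hCmem β hβI hlb hub
      intro hvol
      have h0 : volume (Icc lo hi) = 0 := measure_mono_null hJ hvol
      rw [Real.volume_Icc, ENNReal.ofReal_eq_zero] at h0
      linarith
  -- C has positive measure.
  have hCpos : 0 < (volume C).toReal := toReal_pos' hCIcc hCne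
  set c := avg g C with hcdef
  have hCvalU : ∀ x ∈ C, g x ≤ g α + 1 := fun x hx => hNval x hx.1
  have hCvalL : ∀ x ∈ C, g α' - 1 ≤ g x := fun x hx => hN'val x hx.2
  have hc1 : g α' - 1 < c := by
    rw [hcdef]
    refine lt_avg hg hCm hCIcc hCvalL hCne ?_
    apply measure_mono_null _ hnull₁
    rintro x ⟨hx1, hx2⟩
    exact ⟨hCIcc hx1, hx2⟩
  have hc2 : c < g α + 1 := by
    rw [hcdef]
    refine avg_lt hg hCm hCIcc hCvalU hCne ?_
    apply measure_mono_null _ hnull₂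
    rintro x ⟨hx1, hx2⟩
    exact ⟨hCIcc hx1, hx2⟩
  have hCint : ∫ x in C, g x = c * (volume C).toReal := by
    rw [hcdef, avg]
    field_simp
  have hsplitN : (volume N).toReal = (volume (N \ N')).toReal + (volume C).toReal := by
    have hcup : (N \ N') ∪ C = N := diff_union_inter N N'
    have h := vol_split (hNm.diff hN'm) hCm
      (disjoint_sdiff_left.mono_right inter_subset_right)
      (by rw [hcup]; exact hNIcc)
    rw [hcup] at h
    exact h
  have hIsplitN : ∫ x in N, g x = (∫ x in N \ N', g x) + ∫ x in C, g x := by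
    have hcup : (N \ N') ∪ C = N := diff_union_inter N N'
    have h := integral_split hg hCm
      (disjoint_sdiff_left.mono_right inter_subset_right)
      (by rw [hcup]; exact hNIcc)
    rw [hcup] at h
    exact h
  have hsplitN' : (volume N').toReal = (volume (N' \ N)).toReal + (volume C).toReal := by
    have hcup : (N' \ N) ∪ (N' ∩ N) = N' := diff_union_inter N' N
    have h := vol_split (hN'm.diff hNm) (hN'm.inter hNm)
      (disjoint_sdiff_left.mono_right inter_subset_right)
      (by rw [hcup]; exact hN'Icc)
    rw [hcup, inter_comm N' N] at h
    exact h
  have hIsplitN' : ∫ x in N', g x = (∫ x in N' \ N, g x) + ∫ x in C, g x := by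
    have hcup : (N' \ N) ∪ (N' ∩ N) = N' := diff_union_inter N' N
    have h := integral_split hg (hN'm.inter hNm)
      (disjoint_sdiff_left.mono_right inter_subset_right)
      (by rw [hcup]; exact hN'Icc)
    rw [hcup, inter_comm N' N] at h
    exact h
  have hupper : updateHK g α ≤ c := by
    rw [updateHK_eq_avg hp, avg, div_le_iff₀ hp, hIsplitN, hCint, hsplitN]
    have hub : ∫ x in N \ N', g x ≤ (g α' - 1) * (volume (N \ N')).toReal :=
      setIntegral_le_const hg (hNm.diff hN'm) ((diff_subset).trans hNIcc) hAval
    nlinarith [ENNReal.toReal_nonneg (a := volume (N \ N'))]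
  have hlower : c ≤ updateHK g α' := by
    rw [updateHK_eq_avg hp', avg, le_div_iff₀ hp', hIsplitN', hCint, hsplitN']
    have hlb : (g α + 1) * (volume (N' \ N)).toReal ≤ ∫ x in N' \ N, g x :=
      const_le_setIntegral hg (hN'm.diff hNm) ((diff_subset).trans hN'Icc) hBval
    nlinarith [ENNReal.toReal_nonneg (a := volume (N' \ N))]
  by_cases hA : volume (N \ N') = 0
  · by_cases hB : volume (N' \ N) = 0
    · -- both differences null: full neighbourhoods
      right
      set a := sInf N with hadef
      set b := sSup N with hbdef
      set a' := sInf N' with ha'def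
      set b' := sSup N' with hb'def
      have hNeq : N = Icc a b := nbhd_eq_Icc hg hgc hα
      have hN'eq : N' = Icc a' b' := nbhd_eq_Icc hg hgc hα'
      have haN : a ∈ N := nbhd_inf_mem hgc hα
      have hbN : b ∈ N := nbhd_sup_mem hgc hα
      have ha'N : a' ∈ N' := nbhd_inf_mem hgc hα'
      have hb'N : b' ∈ N' := nbhd_sup_mem hgc hα'
      have haa' : a ≤ a' := by
        apply le_csInf (nbhd_nonempty hα')
        intro β hβ
        by_contra hba
        push_neg at hba
        have hβI : β ∈ Icc (0:ℝ) 1 := hβ.1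
        have h1 : g α' - 1 ≤ g β := hN'val β hβ
        have h2 : g β ≤ g (sInf N) := hg hβI (hNIcc haN) (le_of_lt hba)
        have h3 : g (sInf N) ≤ g α + 1 := hNval _ haN
        have hβN : β ∈ N := by
          rw [hN]
          exact ⟨hβI, abs_le.2 ⟨by linarith, by linarith⟩⟩
        exact absurd (csInf_le (nbhd_bddBelow g α) hβN) (not_le.2 hba)
      have hbb' : b ≤ b' := by
        apply csSup_le (nbhd_nonempty hα)
        intro β hβ
        by_contra hba
        push_neg at hba
        have hβI : β ∈ Icc (0:ℝ) 1 := hβ.1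
        have h1 : g β ≤ g α + 1 := hNval β hβ
        have h2 : g (sSup N') ≤ g β := hg (hN'Icc hb'N) hβI (le_of_lt hba)
        have h3 : g α' - 1 ≤ g (sSup N') := hN'val _ hb'N
        have hβN' : β ∈ N' := by
          rw [hN']
          exact ⟨hβI, abs_le.2 ⟨by linarith, by linarith⟩⟩
        exact absurd (le_csSup (nbhd_bddAbove g α') hβN') (not_le.2 hba)
      obtain ⟨γC, hγC⟩ := nonempty_of_measure_ne_zero hCne
      have ha'b : a' ≤ b := le_trans (csInf_le (nbhd_bddBelow g α') hγC.2)
        (le_csSup (nbhd_bddAbove g α) hγC.1)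
      have haa'eq : a = a' := by
        refine le_antisymm haa' ?_
        by_contra hcon
        push_neg at hcon
        have hsub : Ico a a' ⊆ N \ N' := by
          intro x hx
          constructor
          · rw [hNeq]
            exact ⟨hx.1, le_trans (le_of_lt hx.2) ha'b⟩
          · intro hxN'
            exact absurd (csInf_le (nbhd_bddBelow g α') hxN') (not_le.2 hx.2)
        have h0 : volume (Ico a a') = 0 := measure_mono_null hsub hA
        rw [Real.volume_Ico, ENNReal.ofReal_eq_zero] at h0
        linarith
      have hbb'eq : b = b' := by
        refine le_antisymm hbb' ?_
        by_contra hcon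
        push_neg at hcon
        have hsub : Ioc b b' ⊆ N' \ N := by
          intro x hx
          constructor
          · rw [hN'eq]
            exact ⟨le_trans ha'b (le_of_lt hx.1), hx.2⟩
          · intro hxN
            exact absurd (le_csSup (nbhd_bddAbove g α) hxN) (not_le.2 hx.1)
        have h0 : volume (Ioc b b') = 0 := measure_mono_null hsub hB
        rw [Real.volume_Ioc, ENNReal.ofReal_eq_zero] at h0
        linarith
      have ha0 : a = 0 := by
        by_contra hcon
        have hapos : 0 < a := lt_of_le_of_ne (hNIcc haN).1 (Ne.symm hcon)
        have h1 : g a = g α - 1 := clamp_left hg hgc hα hapos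
        have hapos' : 0 < a' := by rw [← haa'eq]; exact hapos
        have h2 : g a' = g α' - 1 := clamp_left hg hgc hα' hapos'
        rw [← haa'eq] at h2
        rw [h1] at h2
        linarith
      have hb1 : b = 1 := by
        by_contra hcon
        have hblt : b < 1 := lt_of_le_of_ne (hNIcc hbN).2 hcon
        have h1 : g b = g α + 1 := clamp_right hg hgc hα hblt
        have hblt' : b' < 1 := by rw [← hbb'eq]; exact hblt
        have h2 : g b' = g α' + 1 := clamp_right hg hgc hα' hblt'
        rw [← hbb'eq] at h2
        rw [h1] at h2
        linarith
      constructor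
      · rw [hNeq, ha0, hb1]
      · rw [hN'eq, ← haa'eq, ← hbb'eq, ha0, hb1]
    · -- B has positive measure: strict
      left
      have hBpos : 0 < (volume (N' \ N)).toReal :=
        toReal_pos' ((diff_subset).trans hN'Icc) hB
      have hstrict : c < updateHK g α' := by
        rw [updateHK_eq_avg hp', avg, lt_div_iff₀ hp', hIsplitN', hCint, hsplitN']
        have hlb : (g α + 1) * (volume (N' \ N)).toReal ≤ ∫ x in N' \ N, g x :=
          const_le_setIntegral hg (hN'm.diff hNm) ((diff_subset).trans hN'Icc) hBval
        nlinarith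
      linarith
  · -- A has positive measure: strict
    left
    have hApos : 0 < (volume (N \ N')).toReal :=
      toReal_pos' ((diff_subset).trans hNIcc) hA
    have hstrict : updateHK g α < c := by
      rw [updateHK_eq_avg hp, avg, div_lt_iff₀ hp, hIsplitN, hCint, hsplitN]
      have hub : ∫ x in N \ N', g x ≤ (g α' - 1) * (volume (N \ N')).toReal :=
        setIntegral_le_const hg (hNm.diff hN'm) ((diff_subset).trans hNIcc) hAval
      nlinarith
    linarith


/-! ### Symmetry machinery -/

lemma measurePreserving_onesub : MeasurePreserving (fun x : ℝ => 1 - x) volume volume := by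
  have h1 : MeasurePreserving (fun x : ℝ => -x) volume volume :=
    Measure.measurePreserving_neg volume
  have h2 : MeasurePreserving (fun x : ℝ => 1 + x) volume volume :=
    measurePreserving_add_left volume 1
  have := h2.comp h1
  simpa [Function.comp_def, sub_eq_add_neg, add_comm] using this

lemma measurableEmbedding_onesub : MeasurableEmbedding (fun x : ℝ => 1 - x) :=
  (Homeomorph.subLeft (1:ℝ)).measurableEmbedding

lemma reflect_Icc_mem {β : ℝ} : (1 - β) ∈ Icc (0:ℝ) 1 ↔ β ∈ Icc (0:ℝ) 1 := by
  constructor <;> rintro ⟨h1, h2⟩ <;> constructor <;> linarith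

/-- Reflection integral identity: for measurable `S ⊆ [0,1]`,
`∫_{1-S} g = 2c|S| - ∫_S g` when `g` is symmetric about `c`. -/
lemma reflect_integral {g : ℝ → ℝ} {c : ℝ} (hg : MonotoneOn g (Icc 0 1))
    (hsym : ∀ x ∈ Icc (0:ℝ) 1, g x + g (1 - x) = 2*c)
    {S : Set ℝ} (hS : MeasurableSet S) (hSIcc : S ⊆ Icc 0 1) :
    ∫ x in (fun x => 1 - x) ⁻¹' S, g x
      = 2*c*(volume S).toReal - ∫ x in S, g x := by
  have hpre_meas : MeasurableSet ((fun x : ℝ => 1 - x) ⁻¹' S) :=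
    measurableEmbedding_onesub.measurable hS
  have hpreIcc : (fun x : ℝ => 1 - x) ⁻¹' S ⊆ Icc 0 1 := by
    intro x hx
    exact reflect_Icc_mem.1 (hSIcc hx)
  have hEq : EqOn g (fun x => 2*c - g (1 - x)) ((fun x : ℝ => 1 - x) ⁻¹' S) := by
    intro x hx
    have := hsym x (hpreIcc hx)
    simp only
    linarith
  rw [setIntegral_congr_fun hpre_meas hEq]
  have hintS : IntegrableOn g S := integrableOn_sub hg hSIcc
  have hint2 : IntegrableOn (fun x => g (1 - x)) ((fun x : ℝ => 1 - x) ⁻¹' S) := by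
    have hrp := measurePreserving_onesub.restrict_preimage (s := S) hS
    exact (hrp.integrable_comp_emb measurableEmbedding_onesub).2 hintS
  have hconst : IntegrableOn (fun _ => 2*c) ((fun x : ℝ => 1 - x) ⁻¹' S) :=
    integrableOn_const (lt_of_le_of_lt (vol_le_one hpreIcc) (by simp)).ne
  rw [integral_sub hconst hint2, setIntegral_const, measureReal_def, smul_eq_mul]
  have hvol : volume ((fun x : ℝ => 1 - x) ⁻¹' S) = volume S :=
    measurePreserving_onesub.measure_preimage hS.nullMeasurableSet
  have hpre : ∫ x in (fun x : ℝ => 1 - x) ⁻¹' S, g (1 - x) = ∫ y in S, g y :=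
    measurePreserving_onesub.setIntegral_preimage_emb measurableEmbedding_onesub g S
  rw [hvol, hpre]
  ring



lemma reflect_preimage_Icc : (fun x : ℝ => 1 - x) ⁻¹' (Icc (0:ℝ) 1) = Icc (0:ℝ) 1 := by
  ext x
  simp only [mem_preimage, mem_Icc]
  constructor <;> rintro ⟨h1, h2⟩ <;> constructor <;> linarith

lemma total_integral_eq {g : ℝ → ℝ} {c : ℝ} (hg : MonotoneOn g (Icc 0 1))
    (hsym : ∀ x ∈ Icc (0:ℝ) 1, g x + g (1 - x) = 2*c) :
    ∫ x in Icc (0:ℝ) 1, g x = c := by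
  have h := reflect_integral hg hsym measurableSet_Icc (subset_refl _)
  rw [reflect_preimage_Icc] at h
  have hv : (volume (Icc (0:ℝ) 1)).toReal = 1 := by
    rw [Real.volume_Icc]
    norm_num
  rw [hv] at h
  linarith

lemma nbhd_reflect {g : ℝ → ℝ} {c : ℝ}
    (hsym : ∀ x ∈ Icc (0:ℝ) 1, g x + g (1 - x) = 2*c)
    {α : ℝ} (hα : α ∈ Icc (0:ℝ) 1) :
    nbhdHK g (1 - α) = (fun x : ℝ => 1 - x) ⁻¹' nbhdHK g α := by
  have h2 := hsym α hα
  ext β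
  simp only [mem_preimage]
  constructor
  · rintro ⟨hβI, habs⟩
    have h1 := hsym β hβI
    refine ⟨reflect_Icc_mem.2 hβI, ?_⟩
    rw [abs_le] at habs ⊢
    constructor <;> linarith [habs.1, habs.2]
  · rintro ⟨hβI', habs⟩
    have hβI : β ∈ Icc (0:ℝ) 1 := reflect_Icc_mem.1 hβI'
    have h1 := hsym β hβI
    refine ⟨hβI, ?_⟩
    rw [abs_le] at habs ⊢
    constructor <;> linarith [habs.1, habs.2]

lemma vol_nbhd_reflect {g : ℝ → ℝ} {c : ℝ} (hg : MonotoneOn g (Icc 0 1))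
    (hsym : ∀ x ∈ Icc (0:ℝ) 1, g x + g (1 - x) = 2*c)
    {α : ℝ} (hα : α ∈ Icc (0:ℝ) 1) :
    volume (nbhdHK g (1 - α)) = volume (nbhdHK g α) := by
  rw [nbhd_reflect hsym hα]
  exact measurePreserving_onesub.measure_preimage (nbhd_measurableSet hg α).nullMeasurableSet

lemma update_symm {g : ℝ → ℝ} {c : ℝ} (hg : MonotoneOn g (Icc 0 1))
    (hsym : ∀ x ∈ Icc (0:ℝ) 1, g x + g (1 - x) = 2*c)
    {α : ℝ} (hα : α ∈ Icc (0:ℝ) 1) :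
    updateHK g (1 - α) = 2*c - updateHK g α := by
  by_cases hp : 0 < (volume (nbhdHK g α)).toReal
  · have hp' : 0 < (volume (nbhdHK g (1-α))).toReal := by
      rw [vol_nbhd_reflect hg hsym hα]
      exact hp
    rw [updateHK_eq_avg hp, updateHK_eq_avg hp', avg, avg, nbhd_reflect hsym hα,
      reflect_integral hg hsym (nbhd_measurableSet hg α) (nbhd_subset g α),
      measurePreserving_onesub.measure_preimage (nbhd_measurableSet hg α).nullMeasurableSet]
    field_simp
  · have hp' : ¬ 0 < (volume (nbhdHK g (1-α))).toReal := by
      rw [vol_nbhd_reflect hg hsym hα]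
      exact hp
    unfold updateHK
    rw [if_neg hp', if_neg hp]
    have := hsym α hα
    linarith

lemma update_congr {g : ℝ → ℝ} {α α' : ℝ} (h : g α = g α') :
    updateHK g α = updateHK g α' := by
  unfold updateHK
  rw [nbhd_congr_of_eq h, h]

lemma update_of_full {g : ℝ → ℝ} {α : ℝ} (h : nbhdHK g α = Icc 0 1) :
    updateHK g α = avg g (Icc 0 1) := by
  unfold updateHK
  rw [h]
  have hv : (0:ℝ) < (volume (Icc (0:ℝ) 1)).toReal := by
    rw [Real.volume_Icc]
    norm_num
  rw [if_pos hv]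
  rfl

lemma abs_bound_of_mono {g : ℝ → ℝ} (hg : MonotoneOn g (Icc 0 1)) :
    ∀ x ∈ Icc (0:ℝ) 1, |g x| ≤ max |g 0| |g 1| := by
  intro x hx
  have h1 : g 0 ≤ g x := hg ⟨le_refl 0, zero_le_one⟩ hx hx.1
  have h2 : g x ≤ g 1 := hg hx ⟨zero_le_one, le_refl 1⟩ hx.2
  rw [abs_le]
  constructor
  · calc -(max |g 0| |g 1|) ≤ -|g 0| := by simp [le_max_left]
    _ ≤ g 0 := neg_abs_le _
    _ ≤ g x := h1
  · calc g x ≤ g 1 := h2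
    _ ≤ |g 1| := le_abs_self _
    _ ≤ max |g 0| |g 1| := le_max_right _ _


/-- Master quantitative bound: core estimate with explicit window sets. -/
lemma core_bound {g h : ℝ → ℝ} {α α₀ ε ζ M m₀ : ℝ}
    (hg : MonotoneOn g (Icc 0 1)) (hh : MonotoneOn h (Icc 0 1))
    (hM : ∀ x ∈ Icc (0:ℝ) 1, |g x| ≤ M)
    (hα : α ∈ Icc (0:ℝ) 1) (hα₀ : α₀ ∈ Icc (0:ℝ) 1)
    (hε : 0 ≤ ε) (happ : ∀ x ∈ Icc (0:ℝ) 1, |h x - g x| ≤ ε)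
    (hζ4 : ζ ≤ 1/4) (hclose : 2*ε + |g α - g α₀| < ζ)
    (hm₀pos : 0 < m₀)
    (hm₀ : m₀ ≤ (volume {β ∈ Icc (0:ℝ) 1 | |g β - g α₀| ≤ 1/2}).toReal) :
    |updateHK h α - updateHK g α₀| ≤ ε + 4*M*
      ((volume {β ∈ Icc (0:ℝ) 1 | |g β - (g α₀ + 1)| ≤ ζ}).toReal
       + (volume {β ∈ Icc (0:ℝ) 1 | |g β - (g α₀ - 1)| ≤ ζ}).toReal) / m₀ := by
  have hM0 : 0 ≤ M := le_trans (abs_nonneg _) (hM 0 ⟨le_refl 0, zero_le_one⟩)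
  have hζpos : 0 < ζ :=
    lt_of_le_of_lt (add_nonneg (by linarith) (abs_nonneg _)) hclose
  have hq := abs_lt.1 (lt_of_le_of_lt (le_add_of_nonneg_left (by linarith)) hclose)
  have hqq : |g α - g α₀| < ζ - 2*ε := by
    rw [abs_lt]
    have := abs_lt.1 (show |g α - g α₀| < ζ - 2*ε by
      have h := hclose
      rw [abs_lt] at *
      constructor <;> linarith [abs_nonneg (g α - g α₀), le_abs_self (g α - g α₀),
        neg_abs_le (g α - g α₀)])
    exact this
  have hq1 : g α - g α₀ < ζ - 2*ε := lt_of_le_of_lt (le_abs_self _) hqq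
  have hq2 : -(ζ - 2*ε) < g α - g α₀ := lt_of_lt_of_le (neg_lt_neg hqq) (neg_abs_le _)
  set Sm := {β ∈ Icc (0:ℝ) 1 | |g β - g α₀| ≤ 1 - ζ} with hSmdef
  set Sp := {β ∈ Icc (0:ℝ) 1 | |g β - g α₀| ≤ 1 + ζ} with hSpdef
  set Wp := {β ∈ Icc (0:ℝ) 1 | |g β - (g α₀ + 1)| ≤ ζ} with hWpdef
  set Wm := {β ∈ Icc (0:ℝ) 1 | |g β - (g α₀ - 1)| ≤ ζ} with hWmdef
  have hSmm : MeasurableSet Sm := window_meas hg (g α₀) (1-ζ)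
  have hSpm : MeasurableSet Sp := window_meas hg (g α₀) (1+ζ)
  have hSmIcc : Sm ⊆ Icc 0 1 := sep_subset _ _
  have hSpIcc : Sp ⊆ Icc 0 1 := sep_subset _ _
  have hSmNh : Sm ⊆ nbhdHK h α := by
    rintro β ⟨hβI, hβ⟩
    have e1 := abs_le.1 (happ β hβI)
    have e2 := abs_le.1 (happ α hα)
    have w := abs_le.1 hβ
    exact ⟨hβI, abs_le.2 ⟨by linarith, by linarith⟩⟩
  have hSmNg : Sm ⊆ nbhdHK g α₀ := by
    rintro β ⟨hβI, hβ⟩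
    have w := abs_le.1 hβ
    exact ⟨hβI, abs_le.2 ⟨by linarith, by linarith⟩⟩
  have hNhSp : nbhdHK h α ⊆ Sp := by
    rintro β ⟨hβI, hβ⟩
    have e1 := abs_le.1 (happ β hβI)
    have e2 := abs_le.1 (happ α hα)
    have w := abs_le.1 hβ
    refine ⟨hβI, abs_le.2 ⟨by linarith, by linarith⟩⟩
  have hNgSp : nbhdHK g α₀ ⊆ Sp := by
    rintro β ⟨hβI, hβ⟩
    have w := abs_le.1 hβ
    refine ⟨hβI, abs_le.2 ⟨by linarith, by linarith⟩⟩
  have hhalf : {β ∈ Icc (0:ℝ) 1 | |g β - g α₀| ≤ 1/2} ⊆ Sm := by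
    rintro β ⟨hβI, hβ⟩
    exact ⟨hβI, by linarith⟩
  have hSmlb : m₀ ≤ (volume Sm).toReal :=
    le_trans hm₀ (ENNReal.toReal_mono (vol_ne_top hSmIcc) (measure_mono hhalf))
  have hpos : 0 < (volume Sm).toReal := lt_of_lt_of_le hm₀pos hSmlb
  have hcore := core_est hg hh hM happ hSmm hSpIcc hSmNh hSmNg hNhSp hNgSp hpos
  -- bound D by the windows
  have hSmSp : Sm ⊆ Sp := by
    rintro β ⟨hβI, hβ⟩
    exact ⟨hβI, by linarith⟩
  have hcup : Sm ∪ (Sp \ Sm) = Sp := union_diff_cancel hSmSp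
  have hVsplit : (volume Sp).toReal = (volume Sm).toReal + (volume (Sp \ Sm)).toReal := by
    have h := vol_split hSmm (hSpm.diff hSmm) disjoint_sdiff_right (by rw [hcup]; exact hSpIcc)
    rw [hcup] at h
    exact h
  have hdiffsub : Sp \ Sm ⊆ Wp ∪ Wm := by
    rintro β ⟨⟨hβI, hβp⟩, hβnot⟩
    have hβm : ¬ |g β - g α₀| ≤ 1 - ζ := fun hcon => hβnot ⟨hβI, hcon⟩
    push_neg at hβm
    have hp' := abs_le.1 hβp
    rcases le_total 0 (g β - g α₀) with hsgn | hsgn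
    · left
      refine ⟨hβI, abs_le.2 ⟨?_, ?_⟩⟩
      · have : 1 - ζ < g β - g α₀ := by
          rwa [abs_of_nonneg hsgn] at hβm
        linarith
      · linarith [hp'.2]
    · right
      refine ⟨hβI, abs_le.2 ⟨?_, ?_⟩⟩
      · linarith [hp'.1]
      · have : 1 - ζ < -(g β - g α₀) := by
          rwa [abs_of_nonpos hsgn] at hβm
        linarith
  have hWlb : (volume (Sp \ Sm)).toReal ≤ (volume Wp).toReal + (volume Wm).toReal := by
    have h1 : volume (Sp \ Sm) ≤ volume Wp + volume Wm :=
      le_trans (measure_mono hdiffsub) (measure_union_le _ _)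
    calc (volume (Sp \ Sm)).toReal
        ≤ (volume Wp + volume Wm).toReal := ENNReal.toReal_mono
          (ENNReal.add_ne_top.2 ⟨vol_ne_top (sep_subset _ _), vol_ne_top (sep_subset _ _)⟩) h1
    _ = (volume Wp).toReal + (volume Wm).toReal :=
        ENNReal.toReal_add (vol_ne_top (sep_subset _ _)) (vol_ne_top (sep_subset _ _))
  have hWnonneg : 0 ≤ (volume Wp).toReal + (volume Wm).toReal := by positivity
  have hfrac : 4*M*((volume Sp).toReal - (volume Sm).toReal)/(volume Sm).toReal
      ≤ 4*M*((volume Wp).toReal + (volume Wm).toReal)/m₀ := by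
    have hD : (volume Sp).toReal - (volume Sm).toReal
        ≤ (volume Wp).toReal + (volume Wm).toReal := by
      rw [hVsplit]
      linarith
    apply div_le_div₀ (by positivity) _ hm₀pos hSmlb
    nlinarith
  linarith


/-! ### The invariant for iterates of the linear profile -/

def INV (g : ℝ → ℝ) (c : ℝ) : Prop :=
  MonotoneOn g (Icc 0 1) ∧ ContinuousOn g (Icc 0 1) ∧
  (∀ x ∈ Icc (0:ℝ) 1, g x + g (1 - x) = 2*c) ∧
  (∀ x : ℝ, x ≠ c → volume {β ∈ Icc (0:ℝ) 1 | g β = x} = 0) ∧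
  (volume {β ∈ Icc (0:ℝ) 1 | g β = c} ≠ 0 → g 1 - g 0 < 2)

lemma zero_mem_Icc01 : (0:ℝ) ∈ Icc (0:ℝ) 1 := ⟨le_refl 0, zero_le_one⟩
lemma one_mem_Icc01 : (1:ℝ) ∈ Icc (0:ℝ) 1 := ⟨zero_le_one, le_refl 1⟩

lemma sum_ends {g : ℝ → ℝ} {c : ℝ}
    (hsym : ∀ x ∈ Icc (0:ℝ) 1, g x + g (1 - x) = 2*c) : g 0 + g 1 = 2*c := by
  have h := hsym 0 zero_mem_Icc01
  norm_num at h
  linarith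

lemma bad_null_plus {g : ℝ → ℝ} {c : ℝ} (hg : MonotoneOn g (Icc 0 1))
    (hsym : ∀ x ∈ Icc (0:ℝ) 1, g x + g (1 - x) = 2*c)
    (hnull : ∀ x : ℝ, x ≠ c → volume {β ∈ Icc (0:ℝ) 1 | g β = x} = 0)
    (hdiam : volume {β ∈ Icc (0:ℝ) 1 | g β = c} ≠ 0 → g 1 - g 0 < 2)
    {α : ℝ} (hα : α ∈ Icc (0:ℝ) 1) :
    volume {β ∈ Icc (0:ℝ) 1 | g β = g α + 1} = 0 := by
  by_cases hxc : g α + 1 = c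
  · by_contra hne
    have hc : volume {β ∈ Icc (0:ℝ) 1 | g β = c} ≠ 0 := by rwa [hxc] at hne
    have hd := hdiam hc
    have hsum := sum_ends hsym
    have h1 : g 0 ≤ g α := hg zero_mem_Icc01 hα hα.1
    linarith
  · exact hnull _ hxc

lemma bad_null_minus {g : ℝ → ℝ} {c : ℝ} (hg : MonotoneOn g (Icc 0 1))
    (hsym : ∀ x ∈ Icc (0:ℝ) 1, g x + g (1 - x) = 2*c)
    (hnull : ∀ x : ℝ, x ≠ c → volume {β ∈ Icc (0:ℝ) 1 | g β = x} = 0)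
    (hdiam : volume {β ∈ Icc (0:ℝ) 1 | g β = c} ≠ 0 → g 1 - g 0 < 2)
    {α : ℝ} (hα : α ∈ Icc (0:ℝ) 1) :
    volume {β ∈ Icc (0:ℝ) 1 | g β = g α - 1} = 0 := by
  by_cases hxc : g α - 1 = c
  · by_contra hne
    have hc : volume {β ∈ Icc (0:ℝ) 1 | g β = c} ≠ 0 := by rwa [hxc] at hne
    have hd := hdiam hc
    have hsum := sum_ends hsym
    have h1 : g α ≤ g 1 := hg hα one_mem_Icc01 hα.2
    linarith
  · exact hnull _ hxc

lemma avg_total {g : ℝ → ℝ} {c : ℝ} (hg : MonotoneOn g (Icc 0 1))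
    (hsym : ∀ x ∈ Icc (0:ℝ) 1, g x + g (1 - x) = 2*c) :
    avg g (Icc 0 1) = c := by
  rw [avg, total_integral_eq hg hsym]
  rw [Real.volume_Icc]
  norm_num

/-- If the profile is within distance 1 of `g α` everywhere, the
neighbourhood is everything. -/
lemma nbhd_full {g : ℝ → ℝ} {α : ℝ}
    (h : ∀ β ∈ Icc (0:ℝ) 1, |g β - g α| ≤ 1) : nbhdHK g α = Icc 0 1 :=
  subset_antisymm (nbhd_subset g α) (fun β hβ => ⟨hβ, h β hβ⟩)

lemma update_end_upper {g : ℝ → ℝ} (hg : MonotoneOn g (Icc 0 1))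
    (hp : 0 < (volume (nbhdHK g 1)).toReal) : updateHK g 1 ≤ g 1 := by
  rw [updateHK_eq_avg hp]
  exact avg_le (nbhd_measurableSet hg 1) (nbhd_subset g 1)
    (integrableOn_sub hg (nbhd_subset g 1))
    (fun x hx => hg hx.1 one_mem_Icc01 hx.1.2) hp

lemma update_end_lower {g : ℝ → ℝ} (hg : MonotoneOn g (Icc 0 1))
    (hp : 0 < (volume (nbhdHK g 0)).toReal) : g 0 ≤ updateHK g 0 := by
  rw [updateHK_eq_avg hp]
  exact le_avg (nbhd_measurableSet hg 0) (nbhd_subset g 0)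
    (integrableOn_sub hg (nbhd_subset g 0))
    (fun x hx => hg zero_mem_Icc01 hx.1 hx.1.1) hp

/-- INV is preserved by the update operator. -/
lemma INV.update {g : ℝ → ℝ} {c : ℝ} (hI : INV g c) : INV (updateHK g) c := by
  obtain ⟨hg, hgc, hsym, hnull, hdiam⟩ := hI
  have hpos : ∀ α ∈ Icc (0:ℝ) 1, 0 < (volume (nbhdHK g α)).toReal :=
    fun α hα => nbhd_pos_of_cont hgc hα
  have hUmono : MonotoneOn (updateHK g) (Icc 0 1) :=
    fun α hα α' hα' hle => update_mono hg hα hα' hle (hpos α hα) (hpos α' hα')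
  -- common structure argument
  have hflat : ∀ x : ℝ, volume {β ∈ Icc (0:ℝ) 1 | updateHK g β = x} ≠ 0 →
      (x = c ∧ g 1 - g 0 < 2) := by
    intro x hne
    set S := {β ∈ Icc (0:ℝ) 1 | updateHK g β = x} with hSdef
    by_cases hgap : ∃ p ∈ S, ∃ q ∈ S, g p < g q
    · obtain ⟨p, hpS, q, hqS, hpq⟩ := hgap
      have hpI : p ∈ Icc (0:ℝ) 1 := hpS.1
      have hqI : q ∈ Icc (0:ℝ) 1 := hqS.1
      have hplt : p < q := by
        by_contra hcon
        push_neg at hcon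
        exact absurd (hg hqI hpI hcon) (not_le.2 hpq)
      have hstr := update_strict_or_full hg hgc hpI hqI hplt hpq
        (bad_null_minus hg hsym hnull hdiam hqI)
        (bad_null_plus hg hsym hnull hdiam hpI)
      rcases hstr with hstrict | ⟨hfull, hfull'⟩
      · exfalso
        rw [hpS.2, hqS.2] at hstrict
        exact lt_irrefl x hstrict
      · have hxc : x = c := by
          rw [← hpS.2, update_of_full hfull, avg_total hg hsym]
        have h1p : (1:ℝ) ∈ nbhdHK g p := by rw [hfull]; exact one_mem_Icc01
        have h0p : (0:ℝ) ∈ nbhdHK g p := by rw [hfull]; exact zero_mem_Icc01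
        have h1q : (1:ℝ) ∈ nbhdHK g q := by rw [hfull']; exact one_mem_Icc01
        have h0q : (0:ℝ) ∈ nbhdHK g q := by rw [hfull']; exact zero_mem_Icc01
        have e1p := abs_le.1 h1p.2
        have e0p := abs_le.1 h0p.2
        have e1q := abs_le.1 h1q.2
        have e0q := abs_le.1 h0q.2
        refine ⟨hxc, ?_⟩
        rcases lt_or_ge (g 1 - g 0) 2 with h | h
        · exact h
        · exfalso
          -- forces g p = g 0 + 1 = g q
          have : g p = g 0 + 1 := by linarith [e1p.1, e0p.2]
          have : g q = g 0 + 1 := by linarith [e1q.1, e0q.2]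
          linarith
    · push_neg at hgap
      obtain ⟨α, hαS⟩ := nonempty_of_measure_ne_zero hne
      have hαI : α ∈ Icc (0:ℝ) 1 := hαS.1
      have hconst : ∀ β ∈ S, g β = g α := by
        intro β hβ
        exact le_antisymm (hgap α hαS β hβ) (hgap β hβ α hαS)
      by_cases huc : g α = c
      · have hcne : volume {β ∈ Icc (0:ℝ) 1 | g β = c} ≠ 0 := by
          intro hz
          apply hne
          apply measure_mono_null _ hz
          intro β hβ
          exact ⟨hβ.1, by rw [hconst β hβ, huc]⟩
        have hd := hdiam hcne
        have hsum := sum_ends hsym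
        have hfull : nbhdHK g α = Icc 0 1 := by
          apply nbhd_full
          intro β hβ
          have h1 : g 0 ≤ g β := hg zero_mem_Icc01 hβ hβ.1
          have h2 : g β ≤ g 1 := hg hβ one_mem_Icc01 hβ.2
          rw [huc, abs_le]
          constructor <;> linarith
        have hxc : x = c := by
          rw [← hαS.2, update_of_full hfull, avg_total hg hsym]
        exact ⟨hxc, hd⟩
      · exfalso
        apply hne
        apply measure_mono_null _ (hnull (g α) huc)
        intro β hβ
        exact ⟨hβ.1, hconst β hβ⟩
  refine ⟨hUmono, ?_, ?_, ?_, ?_⟩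
  · -- continuity
    intro α₀ hα₀
    rw [Metric.continuousWithinAt_iff]
    intro ε' hε'
    set M := max |g 0| |g 1| with hMdef
    have hM := abs_bound_of_mono hg
    have hM0 : 0 ≤ M := le_trans (abs_nonneg _) (le_max_left _ _)
    obtain ⟨m₀, hm₀pos, hm₀⟩ := halfwidth_lb hgc
    set θ := ε' * m₀ / (16*(M+1)) with hθdef
    have hθpos : 0 < θ := by
      rw [hθdef]
      positivity
    obtain ⟨ζ₁, hζ₁pos, hζ₁⟩ := window_small hg
      (bad_null_plus hg hsym hnull hdiam hα₀) hθpos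
    obtain ⟨ζ₂, hζ₂pos, hζ₂⟩ := window_small hg
      (bad_null_minus hg hsym hnull hdiam hα₀) hθpos
    set ζ := min (min ζ₁ ζ₂) (1/4) with hζdef
    have hζpos : 0 < ζ := lt_min (lt_min hζ₁pos hζ₂pos) (by norm_num)
    have hζ4 : ζ ≤ 1/4 := min_le_right _ _
    have hcw := hgc α₀ hα₀
    rw [Metric.continuousWithinAt_iff] at hcw
    obtain ⟨δ, hδpos, hδ'⟩ := hcw ζ hζpos
    refine ⟨δ, hδpos, ?_⟩
    intro α hαI hdist
    have hgd := hδ' hαI hdist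
    rw [Real.dist_eq] at hgd
    have happ : ∀ x ∈ Icc (0:ℝ) 1, |g x - g x| ≤ 0 := by
      intro x _
      simp
    have hclose : 2*0 + |g α - g α₀| < ζ := by linarith
    have hcb := core_bound hg hg hM hαI hα₀ (le_refl 0) happ hζ4 hclose hm₀pos (hm₀ α₀ hα₀)
    have hWp : (volume {β ∈ Icc (0:ℝ) 1 | |g β - (g α₀ + 1)| ≤ ζ}).toReal < θ := by
      refine lt_of_le_of_lt ?_ hζ₁
      apply ENNReal.toReal_mono (vol_ne_top (sep_subset _ _))
      apply measure_mono
      intro β hβ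
      exact ⟨hβ.1, le_trans hβ.2 (le_trans (min_le_left _ _) (min_le_left _ _))⟩
    have hWm : (volume {β ∈ Icc (0:ℝ) 1 | |g β - (g α₀ - 1)| ≤ ζ}).toReal < θ := by
      refine lt_of_le_of_lt ?_ hζ₂
      apply ENNReal.toReal_mono (vol_ne_top (sep_subset _ _))
      apply measure_mono
      intro β hβ
      exact ⟨hβ.1, le_trans hβ.2 (le_trans (min_le_left _ _) (min_le_right _ _))⟩
    rw [Real.dist_eq]
    have hnn1 : 0 ≤ (volume {β ∈ Icc (0:ℝ) 1 | |g β - (g α₀ + 1)| ≤ ζ}).toReal :=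
      ENNReal.toReal_nonneg
    have hnn2 : 0 ≤ (volume {β ∈ Icc (0:ℝ) 1 | |g β - (g α₀ - 1)| ≤ ζ}).toReal :=
      ENNReal.toReal_nonneg
    have hstep : 4*M*((volume {β ∈ Icc (0:ℝ) 1 | |g β - (g α₀ + 1)| ≤ ζ}).toReal
        + (volume {β ∈ Icc (0:ℝ) 1 | |g β - (g α₀ - 1)| ≤ ζ}).toReal)/m₀
        ≤ 8*M*θ/m₀ := by
      apply (div_le_div_iff_of_pos_right hm₀pos).2
      nlinarith
    have hid : θ*(16*(M+1)) = ε'*m₀ := by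
      rw [hθdef]
      field_simp
    have hfin : 8*M*θ/m₀ ≤ ε'/2 := by
      rw [div_le_iff₀ hm₀pos]
      nlinarith [hθpos.le]
    calc |updateHK g α - updateHK g α₀| ≤ 0 + 4*M*
        ((volume {β ∈ Icc (0:ℝ) 1 | |g β - (g α₀ + 1)| ≤ ζ}).toReal
         + (volume {β ∈ Icc (0:ℝ) 1 | |g β - (g α₀ - 1)| ≤ ζ}).toReal) / m₀ := hcb
    _ ≤ 0 + 8*M*θ/m₀ := by linarith
    _ ≤ ε'/2 := by linarith
    _ < ε' := by linarith
  · -- symmetry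
    intro x hx
    have := update_symm hg hsym hx
    linarith
  · -- null levels
    intro x hxc
    by_contra hne
    exact hxc (hflat x hne).1
  · -- flat diameter
    intro hne
    have hd := (hflat c hne).2
    have h1 : updateHK g 1 ≤ g 1 := update_end_upper hg (hpos 1 one_mem_Icc01)
    have h2 : g 0 ≤ updateHK g 0 := update_end_lower hg (hpos 0 zero_mem_Icc01)
    linarith


/-! ### Uniform window bound and the approximation lemma -/

lemma uniform_window {g : ℝ → ℝ} {c : ℝ} (hI : INV g c) {θ : ℝ} (hθ : 0 < θ) :
    ∃ ζ : ℝ, 0 < ζ ∧ ζ ≤ 1/4 ∧ ∀ α ∈ Icc (0:ℝ) 1,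
      (volume {β ∈ Icc (0:ℝ) 1 | |g β - (g α + 1)| ≤ ζ}).toReal < θ ∧
      (volume {β ∈ Icc (0:ℝ) 1 | |g β - (g α - 1)| ≤ ζ}).toReal < θ := by
  obtain ⟨hg, hgc, hsym, hnull, hdiam⟩ := hI
  have hpt : ∀ α₀ ∈ Icc (0:ℝ) 1, ∃ p : ℝ × ℝ, 0 < p.1 ∧ 0 < p.2 ∧
      (volume {β ∈ Icc (0:ℝ) 1 | |g β - (g α₀ + 1)| ≤ p.1}).toReal < θ ∧
      (volume {β ∈ Icc (0:ℝ) 1 | |g β - (g α₀ - 1)| ≤ p.1}).toReal < θ ∧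
      (∀ α ∈ Icc (0:ℝ) 1, |α - α₀| < p.2 → |g α - g α₀| < p.1/2) := by
    intro α₀ hα₀
    obtain ⟨ζ₁, hζ₁pos, hζ₁⟩ := window_small hg
      (bad_null_plus hg hsym hnull hdiam hα₀) hθ
    obtain ⟨ζ₂, hζ₂pos, hζ₂⟩ := window_small hg
      (bad_null_minus hg hsym hnull hdiam hα₀) hθ
    set ζ₀ := min ζ₁ ζ₂ with hζ₀def
    have hζ₀pos : 0 < ζ₀ := lt_min hζ₁pos hζ₂pos
    have hcw := hgc α₀ hα₀
    rw [Metric.continuousWithinAt_iff] at hcw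
    obtain ⟨δ, hδpos, hδ'⟩ := hcw (ζ₀/2) (by positivity)
    refine ⟨(ζ₀, δ), hζ₀pos, hδpos, ?_, ?_, ?_⟩
    · refine lt_of_le_of_lt ?_ hζ₁
      apply ENNReal.toReal_mono (vol_ne_top (sep_subset _ _))
      apply measure_mono
      rintro β ⟨hβI, hβ⟩
      exact ⟨hβI, le_trans hβ (min_le_left _ _)⟩
    · refine lt_of_le_of_lt ?_ hζ₂
      apply ENNReal.toReal_mono (vol_ne_top (sep_subset _ _))
      apply measure_mono
      rintro β ⟨hβI, hβ⟩
      exact ⟨hβI, le_trans hβ (min_le_right _ _)⟩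
    · intro α hαI hdist
      have := hδ' hαI (by rwa [Real.dist_eq])
      rwa [Real.dist_eq] at this
  classical
  set P : ℝ → ℝ × ℝ := fun α₀ =>
    if h : α₀ ∈ Icc (0:ℝ) 1 then Classical.choose (hpt α₀ h) else (1, 1) with hPdef
  have hU : ∀ x ∈ Icc (0:ℝ) 1, Metric.ball x (P x).2 ∈ nhds x := by
    intro x hx
    apply Metric.ball_mem_nhds
    rw [hPdef]
    simp only [dif_pos hx]
    exact (Classical.choose_spec (hpt x hx)).2.1
  obtain ⟨t, htIcc, hcover⟩ := isCompact_Icc.elim_nhds_subcover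
    (fun x => Metric.ball x (P x).2) hU
  have htne : t.Nonempty := by
    by_contra hcon
    rw [Finset.not_nonempty_iff_eq_empty] at hcon
    have := hcover zero_mem_Icc01
    rw [hcon] at this
    simpa using this
  set ζ := min ((t.inf' htne (fun i => (P i).1))/2) (1/4) with hζdef
  have hinfpos : 0 < t.inf' htne (fun i => (P i).1) := by
    rw [Finset.lt_inf'_iff]
    intro i hi
    have hiI := htIcc i hi
    rw [hPdef]
    simp only [dif_pos hiI]
    exact (Classical.choose_spec (hpt i hiI)).1
  have hζpos : 0 < ζ := lt_min (by positivity) (by norm_num)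
  refine ⟨ζ, hζpos, min_le_right _ _, ?_⟩
  intro α hα
  obtain ⟨i, hit, hiball⟩ := by
    have := hcover hα
    rwa [mem_iUnion₂] at this
  have hiI := htIcc i hit
  have hspec := Classical.choose_spec (hpt i hiI)
  have hPi : P i = Classical.choose (hpt i hiI) := by
    rw [hPdef]
    simp only [dif_pos hiI]
  rw [← hPi] at hspec
  obtain ⟨hp1, hp2, hwp, hwm, hcont⟩ := hspec
  have hζle : ζ ≤ (P i).1/2 := by
    calc ζ ≤ (t.inf' htne (fun j => (P j).1))/2 := min_le_left _ _
    _ ≤ (P i).1/2 := by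
        have := Finset.inf'_le (fun j => (P j).1) hit
        linarith
  have hdist : |α - i| < (P i).2 := by
    rw [Metric.mem_ball, Real.dist_eq] at hiball
    exact hiball
  have hgg := hcont α hα hdist
  constructor
  · refine lt_of_le_of_lt ?_ hwp
    apply ENNReal.toReal_mono (vol_ne_top (sep_subset _ _))
    apply measure_mono
    rintro β ⟨hβI, hβ⟩
    refine ⟨hβI, ?_⟩
    have h1 := abs_le.1 hβ
    have h2 := abs_lt.1 hgg
    rw [abs_le]
    constructor <;> linarith
  · refine lt_of_le_of_lt ?_ hwm
    apply ENNReal.toReal_mono (vol_ne_top (sep_subset _ _))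
    apply measure_mono
    rintro β ⟨hβI, hβ⟩
    refine ⟨hβI, ?_⟩
    have h1 := abs_le.1 hβ
    have h2 := abs_lt.1 hgg
    rw [abs_le]
    constructor <;> linarith

/-- Uniform sup-norm continuity of `U` at an INV profile. -/
lemma update_approx {g : ℝ → ℝ} {c : ℝ} (hI : INV g c) {δ : ℝ} (hδ : 0 < δ) :
    ∃ ε : ℝ, 0 < ε ∧ ∀ h : ℝ → ℝ, MonotoneOn h (Icc 0 1) →
      (∀ x ∈ Icc (0:ℝ) 1, |h x - g x| ≤ ε) →
      ∀ α ∈ Icc (0:ℝ) 1, |updateHK h α - updateHK g α| ≤ δ := by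
  obtain ⟨hg, hgc, hsym, hnull, hdiam⟩ := hI
  set M := max |g 0| |g 1| with hMdef
  have hM := abs_bound_of_mono hg
  have hM0 : 0 ≤ M := le_trans (abs_nonneg _) (le_max_left _ _)
  obtain ⟨m₀, hm₀pos, hm₀⟩ := halfwidth_lb hgc
  set θ := δ * m₀ / (32*(M+1)) with hθdef
  have hθpos : 0 < θ := by
    rw [hθdef]
    positivity
  obtain ⟨ζ, hζpos, hζ4, hwin⟩ := uniform_window ⟨hg, hgc, hsym, hnull, hdiam⟩ hθpos
  refine ⟨min (ζ/4) (δ/2), lt_min (by positivity) (by positivity), ?_⟩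
  intro h hh happ α hα
  set ε := min (ζ/4) (δ/2) with hεdef
  have hεpos : 0 < ε := lt_min (by positivity) (by positivity)
  have hclose : 2*ε + |g α - g α| < ζ := by
    have h1 : ε ≤ ζ/4 := min_le_left _ _
    simp only [sub_self, abs_zero, add_zero]
    linarith
  have hcb := core_bound hg hh hM hα hα hεpos.le happ hζ4 hclose hm₀pos (hm₀ α hα)
  obtain ⟨hwp, hwm⟩ := hwin α hα
  have hid : θ*(32*(M+1)) = δ*m₀ := by
    rw [hθdef]
    field_simp
  have hfrac : 4*M*((volume {β ∈ Icc (0:ℝ) 1 | |g β - (g α + 1)| ≤ ζ}).toReal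
      + (volume {β ∈ Icc (0:ℝ) 1 | |g β - (g α - 1)| ≤ ζ}).toReal)/m₀ ≤ δ/2 := by
    have hb : 4*M*((volume {β ∈ Icc (0:ℝ) 1 | |g β - (g α + 1)| ≤ ζ}).toReal
        + (volume {β ∈ Icc (0:ℝ) 1 | |g β - (g α - 1)| ≤ ζ}).toReal) ≤ 8*M*θ := by
      nlinarith [ENNReal.toReal_nonneg
          (a := volume {β ∈ Icc (0:ℝ) 1 | |g β - (g α + 1)| ≤ ζ}),
        ENNReal.toReal_nonneg
          (a := volume {β ∈ Icc (0:ℝ) 1 | |g β - (g α - 1)| ≤ ζ})]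
    rw [div_le_iff₀ hm₀pos]
    have h8 : 8*M*θ ≤ δ/2*m₀ := by nlinarith [hθpos.le]
    linarith
  have hεδ : ε ≤ δ/2 := min_le_right _ _
  linarith


/-! ### The linear profile and the equally spaced profiles -/

lemma INV_linear {L : ℝ} (hL : 0 < L) : INV (fun α => L*α) (L/2) := by
  refine ⟨?_, ?_, ?_, ?_, ?_⟩
  · intro a _ b _ hab
    exact mul_le_mul_of_nonneg_left hab hL.le
  · exact (continuous_const.mul continuous_id).continuousOn
  · intro x _
    ring
  · intro x _
    apply Subsingleton.measure_zero
    rintro a ⟨_, ha⟩ b ⟨_, hb⟩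
    simp only at ha hb
    have : L*a = L*b := by rw [ha, hb]
    exact mul_left_cancel₀ (ne_of_gt hL) this
  · intro hne
    exfalso
    apply hne
    apply Subsingleton.measure_zero
    rintro a ⟨_, ha⟩ b ⟨_, hb⟩
    simp only at ha hb
    have : L*a = L*b := by rw [ha, hb]
    exact mul_left_cancel₀ (ne_of_gt hL) this

lemma INV_iter {L : ℝ} (hL : 0 < L) (t : ℕ) :
    INV (updateHK^[t] (fun α => L*α)) (L/2) := by
  induction t with
  | zero => simpa using INV_linear hL
  | succ t ih =>
      rw [Function.iterate_succ_apply']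
      exact ih.update

lemma eqSpaced_mono {n : ℕ} {L : ℝ} (hn : 2 ≤ n) (hL : 0 ≤ L) :
    MonotoneOn (eqSpacedHK n L) (Icc 0 1) := by
  have hn2 : (2:ℝ) ≤ (n:ℝ) := by exact_mod_cast hn
  have hnpos : (0:ℝ) < n := by linarith
  intro a _ b _ hab
  unfold eqSpacedHK
  by_cases h1 : a ≤ 1/(n:ℝ)
  · rw [if_pos h1]
    by_cases h2 : b ≤ 1/(n:ℝ)
    · rw [if_pos h2]
    · rw [if_neg h2]
      push_neg at h2
      have hb1 : (1:ℝ) < b * n := by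
        rw [div_lt_iff₀ hnpos] at h2
        linarith
      have hceil : (1:ℤ) < ⌈b * (n:ℝ)⌉ := by
        rw [Int.lt_ceil]
        exact_mod_cast hb1
      have hc : (2:ℝ) ≤ (⌈b * (n:ℝ)⌉ : ℝ) := by exact_mod_cast hceil
      apply div_nonneg (mul_nonneg (by linarith) hL) (by linarith)
  · rw [if_neg h1]
    have h2 : ¬ b ≤ 1/(n:ℝ) := fun hcon => h1 (le_trans hab hcon)
    rw [if_neg h2]
    have hceil : (⌈a * (n:ℝ)⌉ : ℝ) ≤ (⌈b * (n:ℝ)⌉ : ℝ) := by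
      have h := Int.ceil_le_ceil (R := ℝ)
        (mul_le_mul_of_nonneg_right hab (by linarith : (0:ℝ) ≤ (n:ℝ)))
      exact_mod_cast h
    have hnum : ((⌈a * (n:ℝ)⌉:ℝ) - 1)*L ≤ ((⌈b * (n:ℝ)⌉:ℝ) - 1)*L :=
      mul_le_mul_of_nonneg_right (by linarith) hL
    exact (div_le_div_iff_of_pos_right (by linarith : (0:ℝ) < (n:ℝ)-1)).2 hnum


lemma eqSpaced_close {n : ℕ} {L : ℝ} (hn : 2 ≤ n) (hL : 0 < L) :
    ∀ α ∈ Icc (0:ℝ) 1, |eqSpacedHK n L α - L*α| ≤ L/n := by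
  have hn2 : (2:ℝ) ≤ (n:ℝ) := by exact_mod_cast hn
  have hnpos : (0:ℝ) < n := by linarith
  intro α hα
  unfold eqSpacedHK
  by_cases h1 : α ≤ 1/(n:ℝ)
  · rw [if_pos h1, zero_sub, abs_neg, abs_of_nonneg (mul_nonneg hL.le hα.1)]
    calc L * α ≤ L * (1/(n:ℝ)) := mul_le_mul_of_nonneg_left h1 hL.le
    _ = L/n := by ring
  · rw [if_neg h1]
    push_neg at h1
    set i := ⌈α * (n:ℝ)⌉ with hidef
    have hle : α*(n:ℝ) ≤ (i:ℝ) := Int.le_ceil _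
    have hgt : (i:ℝ) - 1 < α*n := by
      have := Int.ceil_lt_add_one (α*(n:ℝ))
      rw [← hidef] at this
      linarith
    have hi2 : (2:ℤ) ≤ i := by
      have h1' : (1:ℝ) < α * n := by
        rw [div_lt_iff₀ hnpos] at h1
        linarith
      have : (1:ℤ) < i := by
        rw [hidef, Int.lt_ceil]
        exact_mod_cast h1'
      omega
    have hi2' : (2:ℝ) ≤ (i:ℝ) := by exact_mod_cast hi2
    have hin : (i:ℝ) ≤ (n:ℝ) := by
      have h : i ≤ (n:ℤ) := by
        rw [hidef, Int.ceil_le]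
        push_cast
        nlinarith [hα.2]
      exact_mod_cast h
    have hv1 : L*((i:ℝ)-1)/n ≤ ((i:ℝ)-1)*L/((n:ℝ)-1) := by
      rw [div_le_div_iff₀ hnpos (by linarith)]
      nlinarith
    have hv2 : ((i:ℝ)-1)*L/((n:ℝ)-1) ≤ L*(i:ℝ)/n := by
      rw [div_le_div_iff₀ (by linarith) hnpos]
      nlinarith
    have hLα1 : L*((i:ℝ)-1)/n ≤ L*α := by
      rw [div_le_iff₀ hnpos]
      nlinarith
    have hLα2 : L*α ≤ L*(i:ℝ)/n := by
      rw [le_div_iff₀ hnpos]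
      nlinarith
    have hdiff : L*(i:ℝ)/n - L*((i:ℝ)-1)/n = L/n := by
      field_simp
      ring
    rw [abs_le]
    constructor <;> linarith

lemma nbhd_pos_of_close {g h : ℝ → ℝ} (hgc : ContinuousOn g (Icc 0 1))
    (happ : ∀ x ∈ Icc (0:ℝ) 1, |h x - g x| ≤ 1/8) {α : ℝ} (hα : α ∈ Icc (0:ℝ) 1) :
    0 < (volume (nbhdHK h α)).toReal := by
  obtain ⟨m₀, hm₀pos, hm₀⟩ := halfwidth_lb hgc
  have hsub : {β ∈ Icc (0:ℝ) 1 | |g β - g α| ≤ 1/2} ⊆ nbhdHK h α := by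
    rintro β ⟨hβI, hβ⟩
    have e1 := abs_le.1 (happ β hβI)
    have e2 := abs_le.1 (happ α hα)
    have w := abs_le.1 hβ
    exact ⟨hβI, abs_le.2 ⟨by linarith, by linarith⟩⟩
  calc (0:ℝ) < m₀ := hm₀pos
  _ ≤ (volume {β ∈ Icc (0:ℝ) 1 | |g β - g α| ≤ 1/2}).toReal := hm₀ α hα
  _ ≤ _ := ENNReal.toReal_mono (vol_ne_top (nbhd_subset h α)) (measure_mono hsub)

/-- The key induction: the discrete iterates uniformly approximate the
continuum iterates. -/
lemma approx_iter {L : ℝ} (hL : 0 < L) (t : ℕ) :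
    ∀ δ : ℝ, 0 < δ → ∃ N : ℕ, ∀ n : ℕ, 2 ≤ n → N ≤ n →
      (∀ α ∈ Icc (0:ℝ) 1,
        |updateHK^[t] (eqSpacedHK n L) α - updateHK^[t] (fun β => L*β) α| ≤ δ) ∧
      MonotoneOn (updateHK^[t] (eqSpacedHK n L)) (Icc 0 1) := by
  induction t with
  | zero =>
    intro δ hδ
    refine ⟨⌈L/δ⌉₊, ?_⟩
    intro n h2n hNn
    have hn2 : (2:ℝ) ≤ (n:ℝ) := by exact_mod_cast h2n
    have hn0 : (0:ℝ) < n := by linarith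
    constructor
    · intro α hα
      simp only [Function.iterate_zero_apply]
      have hclose := eqSpaced_close h2n hL α hα
      have hLn : L/n ≤ δ := by
        rw [div_le_iff₀ hn0]
        have hcl : L/δ ≤ (⌈L/δ⌉₊ : ℝ) := Nat.le_ceil _
        have hNle : ((⌈L/δ⌉₊:ℕ):ℝ) ≤ (n:ℝ) := by exact_mod_cast hNn
        have hLδ : L/δ ≤ (n:ℝ) := le_trans hcl hNle
        rw [div_le_iff₀ hδ] at hLδ
        linarith
      linarith
    · simp only [Function.iterate_zero_apply]
      exact eqSpaced_mono h2n hL.le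
  | succ t ih =>
    intro δ hδ
    obtain ⟨ε, hεpos, hε⟩ := update_approx (INV_iter hL t) hδ
    have hε'pos : 0 < min ε (1/8) := lt_min hεpos (by norm_num)
    obtain ⟨N₁, hN₁⟩ := ih (min ε (1/8)) hε'pos
    refine ⟨N₁, ?_⟩
    intro n h2n hNn
    obtain ⟨happ, hmono⟩ := hN₁ n h2n hNn
    obtain ⟨hg, hgc, _, _, _⟩ := INV_iter hL t
    have happε : ∀ x ∈ Icc (0:ℝ) 1,
        |updateHK^[t] (eqSpacedHK n L) x - updateHK^[t] (fun β => L*β) x| ≤ ε :=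
      fun x hx => le_trans (happ x hx) (min_le_left _ _)
    have happ8 : ∀ x ∈ Icc (0:ℝ) 1,
        |updateHK^[t] (eqSpacedHK n L) x - updateHK^[t] (fun β => L*β) x| ≤ 1/8 :=
      fun x hx => le_trans (happ x hx) (min_le_right _ _)
    constructor
    · intro α hα
      rw [Function.iterate_succ_apply', Function.iterate_succ_apply']
      exact hε _ hmono happε α hα
    · rw [Function.iterate_succ_apply']
      intro a ha b hb hab
      exact update_mono hmono ha hb hab
        (nbhd_pos_of_close hgc happ8 ha) (nbhd_pos_of_close hgc happ8 hb)

end HK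

open HK

/-- for every `L > 0`, all sufficiently large equally spaced
profiles of diameter `L` reach consensus at a common time iff the canonical
linear profile `f^L(α) = Lα` reaches consensus at some time. -/
theorem stmt12 (L : ℝ) (hL : 0 < L) :
    (∃ T N : ℕ, ∀ n : ℕ, 2 ≤ n → N ≤ n →
        IsConsensusHK (updateHK^[T] (eqSpacedHK n L))) ↔
      (∃ T' : ℕ, IsConsensusHK (updateHK^[T'] (fun α => L * α))) := by
  constructor
  · rintro ⟨T, N, hcons⟩
    refine ⟨T, ?_⟩
    intro a ha b hb
    have key : ∀ δ : ℝ, 0 < δ →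
        |updateHK^[T] (fun α => L * α) a - updateHK^[T] (fun α => L * α) b| ≤ 2*δ := by
      intro δ hδ
      obtain ⟨N₁, hN₁⟩ := approx_iter hL T δ hδ
      set n := max (max N N₁) 2 with hn
      have h2n : 2 ≤ n := le_max_right _ _
      have hNn : N ≤ n := le_trans (le_max_left _ _) (le_max_left _ _)
      have hN₁n : N₁ ≤ n := le_trans (le_max_right _ _) (le_max_left _ _)
      obtain ⟨happ, _⟩ := hN₁ n h2n hN₁n
      have hab := hcons n h2n hNn a ha b hb
      have h1 := abs_le.1 (happ a ha)
      have h2 := abs_le.1 (happ b hb)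
      rw [abs_le]
      constructor <;> linarith
    by_contra hne
    have habs : 0 < |updateHK^[T] (fun α => L * α) a - updateHK^[T] (fun α => L * α) b| :=
      abs_pos.2 (sub_ne_zero.2 hne)
    have := key (|updateHK^[T] (fun α => L * α) a - updateHK^[T] (fun α => L * α) b|/4)
      (by positivity)
    linarith
  · rintro ⟨T', hcons⟩
    obtain ⟨N₁, hN₁⟩ := approx_iter hL T' (1/4) (by norm_num)
    refine ⟨T'+1, max N₁ 2, ?_⟩
    intro n h2n hNn
    have hN₁n : N₁ ≤ n := le_trans (le_max_left _ _) hNn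
    obtain ⟨happ, hmono⟩ := hN₁ n h2n hN₁n
    intro a ha b hb
    rw [show T' + 1 = T'.succ from rfl, Function.iterate_succ_apply' updateHK T' (eqSpacedHK n L)]
    have hdiam : ∀ x ∈ Icc (0:ℝ) 1, ∀ y ∈ Icc (0:ℝ) 1,
        |updateHK^[T'] (eqSpacedHK n L) x - updateHK^[T'] (eqSpacedHK n L) y| ≤ 1 := by
      intro x hx y hy
      have h1 := abs_le.1 (happ x hx)
      have h2 := abs_le.1 (happ y hy)
      have heq := hcons x hx y hy
      rw [abs_le]
      constructor <;> linarith
    have hfa : nbhdHK (updateHK^[T'] (eqSpacedHK n L)) a = Icc 0 1 :=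
      nbhd_full (fun β hβ => hdiam β hβ a ha)
    have hfb : nbhdHK (updateHK^[T'] (eqSpacedHK n L)) b = Icc 0 1 :=
      nbhd_full (fun β hβ => hdiam β hβ b hb)
    rw [update_of_full hfa, update_of_full hfb]
end
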